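/- arXiv:0802.0883 — 10 statements merged into one kernel-verified Lean document; each statement's English description precedes it below -/
import Mathlib

section
/- Every residually free group generated by two elements is isomorphic to one of: the trivial group, the infinite cyclic group Z, the free abelian group Z^2, or the free group F2 of rank 2. -/
open Matrix
open scoped commutatorElement

private abbrev SL2Z := Matrix.SpecialLinearGroup (Fin 2) ℤ

private abbrev V2 := {v : Fin 2 → ℤ // v ≠ 0}

private def Amat : SL2Z := ⟨!![1, 3; 0, 1], by simp [Matrix.det_fin_two_of]⟩
private def Bmat : SL2Z := ⟨!![1, 0; 3, 1], by simp [Matrix.det_fin_two_of]⟩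

private lemma smul_ne_zero' (M : SL2Z) (v : Fin 2 → ℤ) (hv : v ≠ 0) :
    (M : Matrix (Fin 2) (Fin 2) ℤ).mulVec v ≠ 0 := by
  intro h
  apply hv
  have : ((M⁻¹ : SL2Z) : Matrix (Fin 2) (Fin 2) ℤ).mulVec ((M : Matrix (Fin 2) (Fin 2) ℤ).mulVec v) = 0 := by
    rw [h, Matrix.mulVec_zero]
  rwa [Matrix.mulVec_mulVec, ← Matrix.SpecialLinearGroup.coe_mul, inv_mul_cancel,
    Matrix.SpecialLinearGroup.coe_one, Matrix.one_mulVec] at this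

private instance : MulAction SL2Z V2 where
  smul M v := ⟨(M : Matrix (Fin 2) (Fin 2) ℤ).mulVec v.1, smul_ne_zero' M v.1 v.2⟩
  one_smul v := Subtype.ext (by simp [HSMul.hSMul, SMul.smul, Matrix.SpecialLinearGroup.coe_one,
    Matrix.one_mulVec])
  mul_smul M N v := Subtype.ext (by
    simp [HSMul.hSMul, SMul.smul, Matrix.mulVec_mulVec, Matrix.SpecialLinearGroup.coe_mul]
    refine ⟨?_, ?_⟩ <;> simp only [Matrix.mul_apply, Fin.sum_univ_two] <;> ring)

private lemma smul_coe (M : SL2Z) (v : V2) :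
    (M • v).1 = (M : Matrix (Fin 2) (Fin 2) ℤ).mulVec v.1 := rfl

example : True := trivial

private lemma mulVecA (v : Fin 2 → ℤ) :
    (Amat : Matrix (Fin 2) (Fin 2) ℤ).mulVec v = ![v 0 + 3 * v 1, v 1] := by
  funext i
  fin_cases i <;>
    simp [Amat, Matrix.mulVec, dotProduct, Fin.sum_univ_two] <;> ring

private lemma mulVecB (v : Fin 2 → ℤ) :
    (Bmat : Matrix (Fin 2) (Fin 2) ℤ).mulVec v = ![v 0, 3 * v 0 + v 1] := by
  funext i
  fin_cases i <;>
    simp [Bmat, Matrix.mulVec, dotProduct, Fin.sum_univ_two] <;> ring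

private lemma Amat_inv : Amat⁻¹ = (⟨!![1, -3; 0, 1], by simp [Matrix.det_fin_two_of]⟩ : SL2Z) := by
  refine inv_eq_of_mul_eq_one_right ?_
  apply Subtype.ext
  change (Amat : Matrix (Fin 2) (Fin 2) ℤ) * !![1, -3; 0, 1] = (1 : Matrix (Fin 2) (Fin 2) ℤ)
  ext i j
  fin_cases i <;> fin_cases j <;>
    simp [Amat, Matrix.SpecialLinearGroup.coe_mul, Matrix.mul_apply, Fin.sum_univ_two]

private lemma Bmat_inv : Bmat⁻¹ = (⟨!![1, 0; -3, 1], by simp [Matrix.det_fin_two_of]⟩ : SL2Z) := by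
  refine inv_eq_of_mul_eq_one_right ?_
  apply Subtype.ext
  change (Bmat : Matrix (Fin 2) (Fin 2) ℤ) * !![1, 0; -3, 1] = (1 : Matrix (Fin 2) (Fin 2) ℤ)
  ext i j
  fin_cases i <;> fin_cases j <;>
    simp [Bmat, Matrix.SpecialLinearGroup.coe_mul, Matrix.mul_apply, Fin.sum_univ_two]

example : True := trivial

/- the four ping-pong sets -/
private def X0 : Set V2 := {v | v.1 0 * v.1 1 > v.1 1 * v.1 1 ∨ v.1 1 = 0}
private def X1 : Set V2 := {v | v.1 0 * v.1 1 > v.1 0 * v.1 0 ∨ v.1 0 = 0}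
private def Y0 : Set V2 := {v | v.1 0 * v.1 1 < -(v.1 1 * v.1 1)}
private def Y1 : Set V2 := {v | v.1 0 * v.1 1 < -(v.1 0 * v.1 0)}

private lemma v2_cases (v : V2) : v.1 0 ≠ 0 ∨ v.1 1 ≠ 0 := by
  by_contra h
  push_neg at h
  refine v.2 (funext fun i => ?_)
  fin_cases i
  · exact h.1
  · exact h.2

private lemma disj_X0_X1 : Disjoint X0 X1 := by
  rw [Set.disjoint_left]
  intro v hv hv'
  simp only [X0, X1, Set.mem_setOf_eq] at hv hv'
  rcases v2_cases v with h | h <;> rcases hv with hv | hv <;> rcases hv' with hv' | hv' <;>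
    first
      | exact h hv
      | exact h hv'
      | nlinarith [mul_self_nonneg (v.1 0), mul_self_nonneg (v.1 1), mul_self_nonneg (v.1 0 - v.1 1), mul_self_nonneg (v.1 0 + v.1 1)]

private lemma disj_Y0_Y1 : Disjoint Y0 Y1 := by
  rw [Set.disjoint_left]
  intro v hv hv'
  simp only [Y0, Y1, Set.mem_setOf_eq] at hv hv'
  nlinarith [mul_self_nonneg (v.1 0), mul_self_nonneg (v.1 1), mul_self_nonneg (v.1 0 - v.1 1), mul_self_nonneg (v.1 0 + v.1 1)]

private lemma disj_X0_Y0 : Disjoint X0 Y0 := by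
  rw [Set.disjoint_left]
  intro v hv hv'
  simp only [X0, Y0, Set.mem_setOf_eq] at hv hv'
  rcases hv with hv | hv
  · nlinarith [mul_self_nonneg (v.1 0), mul_self_nonneg (v.1 1), mul_self_nonneg (v.1 0 - v.1 1), mul_self_nonneg (v.1 0 + v.1 1)]
  · rw [hv] at hv'; nlinarith [mul_self_nonneg (v.1 0), mul_self_nonneg (v.1 1), mul_self_nonneg (v.1 0 - v.1 1), mul_self_nonneg (v.1 0 + v.1 1)]

private lemma disj_X0_Y1 : Disjoint X0 Y1 := by
  rw [Set.disjoint_left]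
  intro v hv hv'
  simp only [X0, Y1, Set.mem_setOf_eq] at hv hv'
  rcases hv with hv | hv
  · nlinarith [mul_self_nonneg (v.1 0), mul_self_nonneg (v.1 1), mul_self_nonneg (v.1 0 - v.1 1), mul_self_nonneg (v.1 0 + v.1 1)]
  · rw [hv] at hv'; nlinarith [mul_self_nonneg (v.1 0), mul_self_nonneg (v.1 1), mul_self_nonneg (v.1 0 - v.1 1), mul_self_nonneg (v.1 0 + v.1 1)]

private lemma disj_X1_Y0 : Disjoint X1 Y0 := by
  rw [Set.disjoint_left]
  intro v hv hv'
  simp only [X1, Y0, Set.mem_setOf_eq] at hv hv'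
  rcases hv with hv | hv
  · nlinarith [mul_self_nonneg (v.1 0), mul_self_nonneg (v.1 1), mul_self_nonneg (v.1 0 - v.1 1), mul_self_nonneg (v.1 0 + v.1 1)]
  · rw [hv] at hv'; nlinarith [mul_self_nonneg (v.1 0), mul_self_nonneg (v.1 1), mul_self_nonneg (v.1 0 - v.1 1), mul_self_nonneg (v.1 0 + v.1 1)]

private lemma disj_X1_Y1 : Disjoint X1 Y1 := by
  rw [Set.disjoint_left]
  intro v hv hv'
  simp only [X1, Y1, Set.mem_setOf_eq] at hv hv'
  rcases hv with hv | hv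
  · nlinarith [mul_self_nonneg (v.1 0), mul_self_nonneg (v.1 1)]
  · rw [hv] at hv'; nlinarith [mul_self_nonneg (v.1 0), mul_self_nonneg (v.1 1), mul_self_nonneg (v.1 0 - v.1 1), mul_self_nonneg (v.1 0 + v.1 1)]

private lemma stepA (w : V2) (hw : w ∉ Y0) : Amat • w ∈ X0 := by
  have hc : (Amat • w).1 = ![w.1 0 + 3 * w.1 1, w.1 1] := by rw [smul_coe, mulVecA]
  have hw' : ¬ (w.1 0 * w.1 1 < -(w.1 1 * w.1 1)) := hw
  push_neg at hw'
  show (Amat • w).1 0 * (Amat • w).1 1 > (Amat • w).1 1 * (Amat • w).1 1 ∨ (Amat • w).1 1 = 0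
  rw [hc]; simp only [Matrix.cons_val_zero, Matrix.cons_val_one, Matrix.head_cons]
  rcases eq_or_ne (w.1 1) 0 with h | h
  · exact Or.inr h
  · left; nlinarith [mul_self_pos.mpr h]

private lemma stepB (w : V2) (hw : w ∉ Y1) : Bmat • w ∈ X1 := by
  have hc : (Bmat • w).1 = ![w.1 0, 3 * w.1 0 + w.1 1] := by rw [smul_coe, mulVecB]
  have hw' : ¬ (w.1 0 * w.1 1 < -(w.1 0 * w.1 0)) := hw
  push_neg at hw'
  show (Bmat • w).1 0 * (Bmat • w).1 1 > (Bmat • w).1 0 * (Bmat • w).1 0 ∨ (Bmat • w).1 0 = 0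
  rw [hc]; simp only [Matrix.cons_val_zero, Matrix.cons_val_one, Matrix.head_cons]
  rcases eq_or_ne (w.1 0) 0 with h | h
  · exact Or.inr h
  · left; nlinarith [mul_self_pos.mpr h]

private lemma mulVecAinv (v : Fin 2 → ℤ) :
    ((Amat⁻¹ : SL2Z) : Matrix (Fin 2) (Fin 2) ℤ).mulVec v = ![v 0 - 3 * v 1, v 1] := by
  rw [Amat_inv]
  funext i
  fin_cases i <;>
    simp [Matrix.mulVec, dotProduct, Fin.sum_univ_two] <;> ring

private lemma mulVecBinv (v : Fin 2 → ℤ) :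
    ((Bmat⁻¹ : SL2Z) : Matrix (Fin 2) (Fin 2) ℤ).mulVec v = ![v 0, v 1 - 3 * v 0] := by
  rw [Bmat_inv]
  funext i
  fin_cases i <;>
    simp [Matrix.mulVec, dotProduct, Fin.sum_univ_two] <;> ring

private lemma stepAinv (w : V2) (hw : w ∉ X0) : Amat⁻¹ • w ∈ Y0 := by
  have hc : (Amat⁻¹ • w).1 = ![w.1 0 - 3 * w.1 1, w.1 1] := by rw [smul_coe, mulVecAinv]
  have hw' : ¬ (w.1 0 * w.1 1 > w.1 1 * w.1 1 ∨ w.1 1 = 0) := hw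
  push_neg at hw'
  show (Amat⁻¹ • w).1 0 * (Amat⁻¹ • w).1 1 < -((Amat⁻¹ • w).1 1 * (Amat⁻¹ • w).1 1)
  rw [hc]; simp only [Matrix.cons_val_zero, Matrix.cons_val_one, Matrix.head_cons]
  rcases hw' with ⟨h1, h2⟩
  nlinarith [mul_self_pos.mpr h2]

private lemma stepBinv (w : V2) (hw : w ∉ X1) : Bmat⁻¹ • w ∈ Y1 := by
  have hc : (Bmat⁻¹ • w).1 = ![w.1 0, w.1 1 - 3 * w.1 0] := by rw [smul_coe, mulVecBinv]
  have hw' : ¬ (w.1 0 * w.1 1 > w.1 0 * w.1 0 ∨ w.1 0 = 0) := hw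
  push_neg at hw'
  show (Bmat⁻¹ • w).1 0 * (Bmat⁻¹ • w).1 1 < -((Bmat⁻¹ • w).1 0 * (Bmat⁻¹ • w).1 0)
  rw [hc]; simp only [Matrix.cons_val_zero, Matrix.cons_val_one, Matrix.head_cons]
  rcases hw' with ⟨h1, h2⟩
  nlinarith [mul_self_pos.mpr h2]

private lemma lift_AB_injective :
    Function.Injective (FreeGroup.lift ![Amat, Bmat] : FreeGroup (Fin 2) →* SL2Z) := by
  apply FreeGroup.injective_lift_of_ping_pong ![Amat, Bmat] ![X0, X1] ![Y0, Y1]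
  · intro i
    fin_cases i
    · exact ⟨⟨![1, 0], by intro h; simpa using congrFun h 0⟩, Or.inr rfl⟩
    · exact ⟨⟨![0, 1], by intro h; simpa using congrFun h 1⟩, Or.inr rfl⟩
  · intro i j hij
    fin_cases i <;> fin_cases j <;> simp only [Function.onFun, Fin.zero_eta, Fin.mk_one,
      Matrix.cons_val_zero, Matrix.cons_val_one, Matrix.head_cons] <;>
      first
        | exact absurd rfl hij
        | exact disj_X0_X1
        | exact disj_X0_X1.symm
  · intro i j hij
    fin_cases i <;> fin_cases j <;> simp only [Function.onFun, Fin.zero_eta, Fin.mk_one,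
      Matrix.cons_val_zero, Matrix.cons_val_one, Matrix.head_cons] <;>
      first
        | exact absurd rfl hij
        | exact disj_Y0_Y1
        | exact disj_Y0_Y1.symm
  · intro i j
    fin_cases i <;> fin_cases j <;> simp only [Fin.zero_eta, Fin.mk_one,
      Matrix.cons_val_zero, Matrix.cons_val_one, Matrix.head_cons]
    · exact disj_X0_Y0
    · exact disj_X0_Y1
    · exact disj_X1_Y0
    · exact disj_X1_Y1
  · intro i
    fin_cases i <;> simp only [Fin.zero_eta, Fin.mk_one, Matrix.cons_val_zero,
      Matrix.cons_val_one, Matrix.head_cons]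
    · rintro u ⟨w, hw, rfl⟩; exact stepA w hw
    · rintro u ⟨w, hw, rfl⟩; exact stepB w hw
  · intro i
    fin_cases i <;> simp only [Fin.zero_eta, Fin.mk_one, Pi.inv_apply, Matrix.cons_val_zero,
      Matrix.cons_val_one, Matrix.head_cons]
    · rintro u ⟨w, hw, rfl⟩; exact stepAinv w hw
    · rintro u ⟨w, hw, rfl⟩; exact stepBinv w hw

/-- Residual finiteness of the free group of rank 2. -/
private lemma freeGroup_residually_finite (w : FreeGroup (Fin 2)) (hw : w ≠ 1) :
    ∃ (Q : Type) (_ : Group Q) (_ : Finite Q) (ψ : FreeGroup (Fin 2) →* Q), ψ w ≠ 1 := by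
  classical
  set ι : FreeGroup (Fin 2) →* SL2Z := FreeGroup.lift ![Amat, Bmat] with hι
  have hM : ι w ≠ 1 := by
    intro h
    exact hw (lift_AB_injective (by rw [h, _root_.map_one]))
  -- find an entry where ι w differs from 1
  have : ∃ i j : Fin 2, ((ι w : Matrix (Fin 2) (Fin 2) ℤ)) i j ≠ ((1 : SL2Z) : Matrix (Fin 2) (Fin 2) ℤ) i j := by
    by_contra h
    push_neg at h
    exact hM (Subtype.ext (by ext i j; exact h i j))
  obtain ⟨i, j, hij⟩ := this
  set d : ℤ := ((ι w : Matrix (Fin 2) (Fin 2) ℤ)) i j - ((1 : SL2Z) : Matrix (Fin 2) (Fin 2) ℤ) i j with hd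
  have hdne : d ≠ 0 := sub_ne_zero.mpr hij
  refine ⟨Matrix.SpecialLinearGroup (Fin 2) (ZMod (d.natAbs + 1)), inferInstance, inferInstance,
    (Matrix.SpecialLinearGroup.map (Int.castRingHom (ZMod (d.natAbs + 1)))).comp ι, ?_⟩
  intro h
  have hcoe : ∀ (M : SL2Z) (i' j' : Fin 2),
      ((Matrix.SpecialLinearGroup.map (Int.castRingHom (ZMod (d.natAbs + 1))) M :
        Matrix (Fin 2) (Fin 2) (ZMod (d.natAbs + 1)))) i' j'
        = ((M : Matrix (Fin 2) (Fin 2) ℤ) i' j' : ZMod (d.natAbs + 1)) := by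
    intro M i' j'
    rfl
  have h1 : ((d : ℤ) : ZMod (d.natAbs + 1)) = 0 := by
    have := congrArg (fun (N : Matrix.SpecialLinearGroup (Fin 2) (ZMod (d.natAbs + 1))) =>
      (N : Matrix (Fin 2) (Fin 2) (ZMod (d.natAbs + 1))) i j) h
    simp only [MonoidHom.comp_apply] at this
    rw [hcoe] at this
    have h1' : (((1 : SL2Z) : Matrix (Fin 2) (Fin 2) ℤ) i j : ZMod (d.natAbs + 1))
        = ((1 : Matrix.SpecialLinearGroup (Fin 2) (ZMod (d.natAbs + 1))) :
            Matrix (Fin 2) (Fin 2) (ZMod (d.natAbs + 1))) i j := by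
      simp only [Matrix.SpecialLinearGroup.coe_one]
      by_cases hij' : i = j <;> simp [Matrix.one_apply, hij']
    rw [hd]
    push_cast
    rw [this, h1']
    ring
  rw [ZMod.intCast_zmod_eq_zero_iff_dvd] at h1
  have h2 : (d.natAbs + 1 : ℤ) ≤ |d| := Int.le_of_dvd (abs_pos.mpr hdne) ((dvd_abs _ _).mpr h1)
  rw [Int.abs_eq_natAbs] at h2
  omega

/-- The Hopf property for the free group of rank 2. -/
private lemma freeGroup_hopf (φ : Monoid.End (FreeGroup (Fin 2)))
    (hφ : Function.Surjective φ) : Function.Injective φ := by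
  classical
  rw [injective_iff_map_eq_one ((φ : FreeGroup (Fin 2) →* FreeGroup (Fin 2)))]
  intro g hg
  by_contra hgne
  obtain ⟨Q, _, _, ψ, hψ⟩ := freeGroup_residually_finite g hgne
  -- powers of φ are surjective
  have hpow : ∀ k : ℕ, Function.Surjective (φ ^ k) := by
    intro k
    induction k with
    | zero => exact fun x => ⟨x, rfl⟩
    | succ n ih =>
        intro x
        obtain ⟨y, hy⟩ := ih x
        obtain ⟨z, hz⟩ := hφ y
        refine ⟨z, ?_⟩
        rw [pow_succ, Monoid.End.coe_mul, Function.comp_apply, hz, hy]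
  -- pigeonhole on the (finitely many) pairs of values on generators
  have : ∃ k l : ℕ, k ≠ l ∧
      (fun i : Fin 2 => ψ ((φ ^ k : Monoid.End (FreeGroup (Fin 2))) (FreeGroup.of i)))
        = (fun i : Fin 2 => ψ ((φ ^ l : Monoid.End (FreeGroup (Fin 2))) (FreeGroup.of i))) := by
    have := Finite.exists_ne_map_eq_of_infinite
      (fun k : ℕ => fun i : Fin 2 => ψ ((φ ^ k : Monoid.End (FreeGroup (Fin 2))) (FreeGroup.of i)))
    obtain ⟨k, l, hkl, h⟩ := this
    exact ⟨k, l, hkl, h⟩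
  obtain ⟨k, l, hkl, hfun⟩ := this
  wlog hlt : k < l generalizing k l
  · exact this l k hkl.symm hfun.symm (by omega)
  -- deduce ψ ∘ φ^(l-k) = ψ
  have hhom : ψ.comp ((φ ^ k : Monoid.End (FreeGroup (Fin 2))) : FreeGroup (Fin 2) →* FreeGroup (Fin 2))
      = ψ.comp ((φ ^ l : Monoid.End (FreeGroup (Fin 2))) : FreeGroup (Fin 2) →* FreeGroup (Fin 2)) := by
    apply FreeGroup.ext_hom
    intro i
    exact congrFun hfun i
  have hkey : ∀ x, ψ x = ψ ((φ ^ (l - k) : Monoid.End (FreeGroup (Fin 2))) x) := by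
    intro x
    obtain ⟨y, hy⟩ := hpow k x
    subst hy
    have h1 : ψ ((φ ^ k) y) = ψ ((φ ^ l) y) := DFunLike.congr_fun hhom y
    have h3 : φ ^ l = φ ^ (l - k) * φ ^ k := by
      rw [← pow_add]
      congr 1
      omega
    rw [h1, h3, Monoid.End.coe_mul, Function.comp_apply]
  have hd : l - k ≠ 0 := by omega
  obtain ⟨m, hm⟩ := Nat.exists_eq_succ_of_ne_zero hd
  have : ψ g = 1 := by
    rw [hkey g, hm, pow_succ, Monoid.End.coe_mul, Function.comp_apply, hg, _root_.map_one,
      _root_.map_one]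
  exact hψ this

/-- A free group whose basis has `k+1` distinct elements cannot be generated by `k` elements. -/
private lemma freeGroup_rank_le {β : Type*} {k : ℕ} (g : Fin k → FreeGroup β)
    (hg : Subgroup.closure (Set.range g) = ⊤) (b : Fin (k + 1) → β)
    (hb : Function.Injective b) : False := by
  classical
  set Φ : FreeGroup β →* Multiplicative (Fin (k + 1) → ℤ) :=
    FreeGroup.lift (fun c => Multiplicative.ofAdd (fun i => if c = b i then (1 : ℤ) else 0)) with hΦ
  set c : Fin k → (Fin (k + 1) → ℤ) := fun j => Multiplicative.toAdd (Φ (g j)) with hc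
  have hspan : ∀ w : FreeGroup β, Multiplicative.toAdd (Φ w) ∈ Submodule.span ℤ (Set.range c) := by
    intro w
    have hw : w ∈ Subgroup.closure (Set.range g) := hg ▸ Subgroup.mem_top w
    induction hw using Subgroup.closure_induction with
    | mem x hx =>
        obtain ⟨j, rfl⟩ := hx
        exact Submodule.subset_span ⟨j, rfl⟩
    | one => rw [_root_.map_one]; exact Submodule.zero_mem _
    | mul u v hu hv hu' hv' =>
        rw [_root_.map_mul]
        exact Submodule.add_mem _ hu' hv'
    | inv u hu hu' =>
        rw [map_inv]
        exact Submodule.neg_mem _ hu'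
  have hbasis : ∀ i : Fin (k + 1), Pi.single i (1 : ℤ) ∈ Submodule.span ℤ (Set.range c) := by
    intro i
    have h1 : Multiplicative.toAdd (Φ (FreeGroup.of (b i))) = Pi.single i (1 : ℤ) := by
      rw [hΦ, FreeGroup.lift_apply_of]
      funext j
      simp only [toAdd_ofAdd]
      rw [Pi.single_apply]
      by_cases h : j = i
      · simp [h]
      · have hne : b i ≠ b j := fun hc' => h (hb hc'.symm)
        simp [h, hne]
    rw [← h1]
    exact hspan _
  have htop : Submodule.span ℤ (Set.range c) = ⊤ := by
    rw [eq_top_iff, ← (Pi.basisFun ℤ (Fin (k + 1))).span_eq, Submodule.span_le]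
    rintro _ ⟨i, rfl⟩
    simpa [Pi.basisFun_apply] using hbasis i
  have h1 : Module.finrank ℤ (Fin (k + 1) → ℤ) = k + 1 := by
    rw [Module.finrank_pi ℤ, Fintype.card_fin]
  have h2 : Module.finrank ℤ (Fin (k + 1) → ℤ) ≤ k := by
    calc Module.finrank ℤ (Fin (k + 1) → ℤ)
        = Module.finrank ℤ ↥(⊤ : Submodule ℤ (Fin (k + 1) → ℤ)) := (finrank_top ℤ _).symm
      _ = Module.finrank ℤ ↥(Submodule.span ℤ (Set.range c)) := by rw [htop]
      _ ≤ (Set.range c).toFinset.card := finrank_span_le_card _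
      _ ≤ k := by
          rw [Set.toFinset_range]
          exact (Finset.card_image_le).trans (by simp)
  omega

/-- Free groups over a subsingleton type are commutative. -/
private lemma freeGroup_comm_of_subsingleton {β : Type*} [Subsingleton β]
    (u v : FreeGroup β) : Commute u v := by
  induction u using FreeGroup.induction_on with
  | C1 => exact Commute.one_left v
  | of x =>
      induction v using FreeGroup.induction_on with
      | C1 => exact Commute.one_right _
      | of y => rw [Subsingleton.elim x y]
      | inv_of y hy => exact hy.inv_right
      | mul y z hy hz => exact hy.mul_right hz
  | inv_of x hx => exact hx.inv_left
  | mul x y hx hy => exact hx.mul_left hy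

/-- Free groups over an empty type are trivial. -/
private lemma freeGroup_eq_one_of_isEmpty {β : Type*} [IsEmpty β] (u : FreeGroup β) : u = 1 := by
  induction u using FreeGroup.induction_on with
  | C1 => rfl
  | of x => exact isEmptyElim x
  | inv_of x hx => exact isEmptyElim x
  | mul x y hx hy => rw [hx, hy, one_mul]

/-- The free group of rank 2 is torsion-free (via Nielsen–Schreier on cyclic subgroups). -/
private lemma freeGroup_torsionfree (z : FreeGroup (Fin 2)) (hz : z ≠ 1) (n : ℤ)
    (hn : z ^ n = 1) : n = 0 := by
  classical
  set C : Subgroup (FreeGroup (Fin 2)) := Subgroup.zpowers z with hC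
  haveI : IsFreeGroup C := inferInstance
  set γ := IsFreeGroup.Generators C
  set e : C ≃* FreeGroup γ := IsFreeGroup.toFreeGroup C with he
  set zc : C := ⟨z, Subgroup.mem_zpowers z⟩ with hzc
  have hzc1 : zc ≠ 1 := fun h => hz (by simpa [hzc] using congrArg Subtype.val h)
  set w : FreeGroup γ := e zc with hw
  have hw1 : w ≠ 1 := fun h => hzc1 (by rwa [hw, MulEquiv.map_eq_one_iff] at h)
  -- every element of FreeGroup γ is a power of w
  have hpow : ∀ u : FreeGroup γ, ∃ m : ℤ, u = w ^ m := by
    intro u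
    obtain ⟨m, hm⟩ := (e.symm u).2
    refine ⟨m, ?_⟩
    have : e.symm u = zc ^ m := Subtype.ext (by rw [SubgroupClass.coe_zpow]; exact hm.symm)
    calc u = e (e.symm u) := (e.apply_symm_apply u).symm
      _ = e (zc ^ m) := by rw [this]
      _ = w ^ m := by rw [map_zpow, hw]
  -- γ is nonempty
  have hne : Nonempty γ := by
    by_contra h
    rw [not_nonempty_iff] at h
    exact hw1 (freeGroup_eq_one_of_isEmpty w)
  obtain ⟨γ0⟩ := hne
  set χ : FreeGroup γ →* Multiplicative ℤ :=
    FreeGroup.lift (fun _ => Multiplicative.ofAdd (1 : ℤ)) with hχ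
  set m : ℤ := Multiplicative.toAdd (χ w) with hm
  have hm0 : m ≠ 0 := by
    obtain ⟨l, hl⟩ := hpow (FreeGroup.of γ0)
    have h1 : Multiplicative.toAdd (χ (FreeGroup.of γ0)) = (1 : ℤ) := by
      rw [hχ, FreeGroup.lift_apply_of, toAdd_ofAdd]
    rw [hl, map_zpow] at h1
    intro h
    rw [toAdd_zpow, ← hm, h, smul_zero] at h1
    exact one_ne_zero h1.symm
  -- z^n = 1 gives w^n = 1, so n * m = 0
  have hzcn : zc ^ n = 1 := Subtype.ext (by rw [SubgroupClass.coe_zpow]; simpa [hzc] using hn)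
  have hwn : w ^ n = 1 := by rw [hw, ← map_zpow, hzcn, _root_.map_one]
  have : n • m = 0 := by
    have := congrArg (fun u => Multiplicative.toAdd (χ u)) hwn
    simpa [map_zpow, toAdd_zpow, ← hm] using this
  rw [smul_eq_mul] at this
  rcases mul_eq_zero.mp this with h | h
  · exact h
  · exact absurd h hm0

/-- An endomorphism of `F₂` whose generator images do not commute is injective. -/
private lemma endo_injective (x y : FreeGroup (Fin 2)) (hxy : ¬Commute x y) :
    Function.Injective (FreeGroup.lift ![x, y] : FreeGroup (Fin 2) →* FreeGroup (Fin 2)) := by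
  classical
  set q : FreeGroup (Fin 2) →* FreeGroup (Fin 2) := FreeGroup.lift ![x, y] with hqdef
  set H := q.range with hH
  haveI : IsFreeGroup H := inferInstance
  set β := IsFreeGroup.Generators H
  set e : H ≃* FreeGroup β := IsFreeGroup.toFreeGroup H with he
  set s : FreeGroup (Fin 2) →* FreeGroup β := e.toMonoidHom.comp q.rangeRestrict with hs
  have hssurj : Function.Surjective s := fun u => by
    obtain ⟨v, hv⟩ := q.rangeRestrict_surjective (e.symm u)
    exact ⟨v, by rw [hs, MonoidHom.comp_apply, MulEquiv.coe_toMonoidHom, hv, e.apply_symm_apply]⟩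
  have hgen2 : Subgroup.closure (Set.range (fun i : Fin 2 => s (FreeGroup.of i))) = ⊤ := by
    have h1 : (fun i : Fin 2 => s (FreeGroup.of i)) = s ∘ FreeGroup.of := rfl
    rw [h1, Set.range_comp, ← MonoidHom.map_closure, FreeGroup.closure_range_of, ← MonoidHom.range_eq_map,
      MonoidHom.range_eq_top]
    exact hssurj
  have hq0 : q (FreeGroup.of 0) = x := by rw [hqdef, FreeGroup.lift_apply_of]; rfl
  have hq1 : q (FreeGroup.of 1) = y := by rw [hqdef, FreeGroup.lift_apply_of]; rfl
  have hcomm_uv : ¬ Commute (s (FreeGroup.of 0)) (s (FreeGroup.of 1)) := by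
    intro h
    apply hxy
    have h1 : Commute (q.rangeRestrict (FreeGroup.of 0)) (q.rangeRestrict (FreeGroup.of 1)) := by
      have h2 := congrArg e.symm h.eq
      simp only [hs, MonoidHom.comp_apply, MulEquiv.coe_toMonoidHom, _root_.map_mul,
        MulEquiv.symm_apply_apply] at h2
      exact h2
    have h3 := congrArg (Subtype.val) h1.eq
    simp only [Subgroup.coe_mul, MonoidHom.coe_rangeRestrict, hq0, hq1] at h3
    exact h3
  haveI : Nontrivial β := by
    rw [← not_subsingleton_iff_nontrivial]
    intro hsub
    exact hcomm_uv (freeGroup_comm_of_subsingleton _ _)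
  obtain ⟨b1, b2, hb12⟩ := exists_pair_ne β
  have hall : ∀ c : β, c = b1 ∨ c = b2 := by
    intro c
    by_contra hcon
    push_neg at hcon
    refine freeGroup_rank_le (fun i : Fin 2 => s (FreeGroup.of i)) hgen2 ![b1, b2, c] ?_
    intro i j hij
    fin_cases i <;> fin_cases j <;> simp_all <;>
      first
        | rfl
        | exact absurd hij.symm hb12
        | exact absurd hij hb12
        | exact absurd hij.symm hcon.1
        | exact absurd hij hcon.1
        | exact absurd hij.symm hcon.2
        | exact absurd hij hcon.2
  set e2 : β ≃ Fin 2 :=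
    { toFun := fun c => if c = b1 then 0 else 1
      invFun := ![b1, b2]
      left_inv := by
        intro c
        rcases hall c with rfl | rfl
        · show ![c, b2] (if c = c then 0 else 1) = c
          rw [if_pos rfl]
          rfl
        · show ![b1, c] (if c = b1 then 0 else 1) = c
          rw [if_neg (fun h => hb12 h.symm)]
          rfl
      right_inv := by
        intro i
        fin_cases i
        · show (if (![b1, b2] 0 : β) = b1 then (0 : Fin 2) else 1) = 0
          simp
        · show (if (![b1, b2] 1 : β) = b1 then (0 : Fin 2) else 1) = 1
          simp only [Matrix.cons_val_one, Matrix.head_cons]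
          exact if_neg (fun h => hb12 (show b1 = b2 from h.symm)) } with he2
  set t : FreeGroup (Fin 2) →* FreeGroup (Fin 2) :=
    (FreeGroup.freeGroupCongr e2).toMonoidHom.comp s with ht
  have htsurj : Function.Surjective t := fun u => by
    obtain ⟨v, hv⟩ := hssurj ((FreeGroup.freeGroupCongr e2).symm u)
    exact ⟨v, by rw [ht, MonoidHom.comp_apply, MulEquiv.coe_toMonoidHom, hv,
      MulEquiv.apply_symm_apply]⟩
  have htinj : Function.Injective t := freeGroup_hopf t htsurj
  intro u v huv
  have h4 : t u = t v := by
    rw [ht]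
    simp only [MonoidHom.comp_apply, hs, MulEquiv.coe_toMonoidHom]
    congr 2
    exact Subtype.ext huv
  exact htinj h4

/-- If the two generators commute, the whole group is commutative. -/
private lemma comm_of_two_gen {G : Type*} [Group G] {a b : G}
    (hgen : Subgroup.closure {a, b} = ⊤) (hab : Commute a b) (g h : G) : Commute g h := by
  have hmem : ∀ x : G, x ∈ Subgroup.closure ({a, b} : Set G) := fun x => hgen ▸ Subgroup.mem_top x
  have base : ∀ x ∈ ({a, b} : Set G), ∀ y ∈ ({a, b} : Set G), Commute x y := by
    rintro x (rfl | rfl) y (rfl | rfl)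
    · exact Commute.refl _
    · exact hab
    · exact hab.symm
    · exact Commute.refl _
  have step : ∀ x ∈ ({a, b} : Set G), ∀ y : G, Commute x y := by
    intro x hx y
    induction hmem y using Subgroup.closure_induction with
    | mem z hz => exact base x hx z hz
    | one => exact Commute.one_right _
    | mul u v hu hv hu' hv' => exact hu'.mul_right hv'
    | inv u hu hu' => exact hu'.inv_right
  induction hmem g using Subgroup.closure_induction with
  | mem z hz => exact step z hz h
  | one => exact Commute.one_left _
  | mul u v hu hv hu' hv' => exact hu'.mul_left hv'
  | inv u hu hu' => exact hu'.inv_left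

/-- Package an additive equivalence of `Additive G` as a multiplicative one. -/
private def ofAdditiveEquiv {G : Type*} [Group G] {X : Type*} [AddGroup X]
    (e : Additive G ≃+ X) : G ≃* Multiplicative X where
  toFun g := Multiplicative.ofAdd (e (Additive.ofMul g))
  invFun x := Additive.toMul (e.symm (Multiplicative.toAdd x))
  left_inv g := by simp
  right_inv x := by simp
  map_mul' g h := by
    simp only [← ofAdd_add, ← map_add]
    rfl

/-- Every residually free group generated by two elements is isomorphic to one of:
the trivial group, `ℤ`, `ℤ²`, or the free group of rank 2. -/
theorem two_generator_residually_free_classification (G : Type*) [Group G]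
    (hRF : ∀ g : G, g ≠ 1 → ∃ f : G →* FreeGroup (Fin 2), f g ≠ 1)
    (a b : G) (hgen : Subgroup.closure {a, b} = ⊤) :
    Nonempty (G ≃* PUnit) ∨ Nonempty (G ≃* Multiplicative ℤ) ∨
      Nonempty (G ≃* Multiplicative (ℤ × ℤ)) ∨ Nonempty (G ≃* FreeGroup (Fin 2)) := by
  classical
  by_cases hab : Commute a b
  · -- abelian case
    letI : CommGroup G := { (inferInstance : Group G) with
      mul_comm := fun u v => (comm_of_two_gen hgen hab u v) }
    have key : ∀ g : G, g ∈ Subgroup.closure ({a, b} : Set G) →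
        Additive.ofMul g ∈ AddSubgroup.closure
          ({Additive.ofMul a, Additive.ofMul b} : Set (Additive G)) := by
      intro g hg
      induction hg using Subgroup.closure_induction with
      | mem z hz =>
          rcases hz with rfl | rfl
          · exact AddSubgroup.subset_closure (Set.mem_insert _ _)
          · exact AddSubgroup.subset_closure (Set.mem_insert_of_mem _ rfl)
      | one => exact AddSubgroup.zero_mem _
      | mul u v hu hv hu' hv' => exact AddSubgroup.add_mem _ hu' hv'
      | inv u hu hu' => exact AddSubgroup.neg_mem _ hu'
    have hspan : Submodule.span ℤ
        ({Additive.ofMul a, Additive.ofMul b} : Set (Additive G)) = ⊤ := by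
      rw [Submodule.eq_top_iff']
      intro x
      have hx : x ∈ AddSubgroup.closure
          ({Additive.ofMul a, Additive.ofMul b} : Set (Additive G)) :=
        key (Additive.toMul x) (hgen ▸ Subgroup.mem_top _)
      rw [← Submodule.span_int_eq_addSubgroupClosure] at hx
      exact hx
    haveI : Module.Finite ℤ (Additive G) :=
      ⟨⟨{Additive.ofMul a, Additive.ofMul b}, by simpa using hspan⟩⟩
    haveI : NoZeroSMulDivisors ℤ (Additive G) := by
      refine ⟨fun {n x} hnx => ?_⟩
      by_cases hx : x = 0
      · exact Or.inr hx
      · left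
        obtain ⟨f, hf⟩ := hRF (Additive.toMul x) hx
        refine freeGroup_torsionfree (f (Additive.toMul x)) hf n ?_
        rw [← map_zpow]
        have h1 : Additive.toMul (n • x) = Additive.toMul x ^ n := toMul_zsmul n x
        rw [hnx] at h1
        rw [← h1]
        simp
    haveI : Module.Free ℤ (Additive G) := Module.free_of_finite_type_torsion_free'
    have hrank : Module.finrank ℤ (Additive G) ≤ 2 := by
      have h1 : Module.finrank ℤ (Additive G)
          = Module.finrank ℤ ↥(⊤ : Submodule ℤ (Additive G)) := (finrank_top ℤ _).symm
      rw [h1, ← hspan]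
      refine (finrank_span_le_card _).trans ?_
      rw [Set.toFinset_insert, Set.toFinset_singleton]
      exact (Finset.card_insert_le _ _).trans (by simp)
    have hcard : Fintype.card (Module.Free.ChooseBasisIndex ℤ (Additive G)) ≤ 2 := by
      rw [← Module.finrank_eq_card_chooseBasisIndex]
      exact hrank
    have h012 : Fintype.card (Module.Free.ChooseBasisIndex ℤ (Additive G)) = 0 ∨
        Fintype.card (Module.Free.ChooseBasisIndex ℤ (Additive G)) = 1 ∨
        Fintype.card (Module.Free.ChooseBasisIndex ℤ (Additive G)) = 2 := by omega
    rcases h012 with h | h | h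
    · -- trivial group
      haveI : IsEmpty (Module.Free.ChooseBasisIndex ℤ (Additive G)) := Fintype.card_eq_zero_iff.mp h
      haveI : Subsingleton (Module.Free.ChooseBasisIndex ℤ (Additive G) →₀ ℤ) :=
        ⟨fun f g => Finsupp.ext fun i => isEmptyElim i⟩
      have hsub : ∀ u v : Additive G, u = v := fun u v =>
        (Module.Free.chooseBasis ℤ (Additive G)).repr.injective (Subsingleton.elim _ _)
      exact Or.inl ⟨{ toFun := fun _ => PUnit.unit
                      invFun := fun _ => 1
                      left_inv := fun g =>
                        (congrArg Additive.toMul (hsub (Additive.ofMul 1) (Additive.ofMul g)))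
                      right_inv := fun u => Subsingleton.elim _ _
                      map_mul' := fun _ _ => rfl }⟩
    · -- infinite cyclic
      have eι : Module.Free.ChooseBasisIndex ℤ (Additive G) ≃ Fin 1 := Fintype.equivFinOfCardEq h
      exact Or.inr (Or.inl ⟨ofAdditiveEquiv
        (((Module.Free.chooseBasis ℤ (Additive G)).equivFun ≪≫ₗ LinearEquiv.funCongrLeft ℤ ℤ eι.symm
          ≪≫ₗ LinearEquiv.funUnique (Fin 1) ℤ ℤ).toAddEquiv)⟩)
    · -- free abelian of rank 2
      have eι : Module.Free.ChooseBasisIndex ℤ (Additive G) ≃ Fin 2 := Fintype.equivFinOfCardEq h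
      have e3 : (Fin 2 → ℤ) ≃+ ℤ × ℤ :=
        { toFun := fun v => (v 0, v 1)
          invFun := fun p => ![p.1, p.2]
          left_inv := fun v => by
            funext i
            fin_cases i <;> simp
          right_inv := fun p => rfl
          map_add' := fun u v => rfl }
      exact Or.inr (Or.inr (Or.inl ⟨ofAdditiveEquiv
        ((((Module.Free.chooseBasis ℤ (Additive G)).equivFun ≪≫ₗ LinearEquiv.funCongrLeft ℤ ℤ eι.symm).toAddEquiv).trans e3)⟩))
  · -- nonabelian case: G is free of rank 2
    have hcomm1 : ⁅a, b⁆ ≠ 1 := fun h => hab (commutatorElement_eq_one_iff_commute.mp h)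
    obtain ⟨f, hf⟩ := hRF _ hcomm1
    set p : FreeGroup (Fin 2) →* G := FreeGroup.lift ![a, b] with hp
    have hpa : p (FreeGroup.of 0) = a := by rw [hp, FreeGroup.lift_apply_of]; rfl
    have hpb : p (FreeGroup.of 1) = b := by rw [hp, FreeGroup.lift_apply_of]; rfl
    have hpsurj : Function.Surjective p := by
      rw [← MonoidHom.range_eq_top, eq_top_iff, ← hgen, Subgroup.closure_le]
      rintro t (rfl | rfl)
      · exact ⟨FreeGroup.of 0, hpa⟩
      · exact ⟨FreeGroup.of 1, hpb⟩
    set q := f.comp p with hq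
    have hxy : ¬ Commute (f a) (f b) := by
      intro h
      exact hf (by rw [map_commutatorElement]; exact commutatorElement_eq_one_iff_commute.mpr h)
    have hqeq : q = FreeGroup.lift ![f a, f b] := by
      apply FreeGroup.ext_hom
      intro i
      rw [hq, MonoidHom.comp_apply, hp, FreeGroup.lift_apply_of, FreeGroup.lift_apply_of]
      fin_cases i <;> rfl
    have hqinj : Function.Injective q := by
      rw [hqeq]
      exact endo_injective _ _ hxy
    have hpinj : Function.Injective p := fun u v huv => by
      apply hqinj
      rw [hq, MonoidHom.comp_apply, MonoidHom.comp_apply, huv]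
    exact Or.inr (Or.inr (Or.inr ⟨(MulEquiv.ofBijective p ⟨hpinj, hpsurj⟩).symm⟩))
end

section
/- If G is a residually free group and a, b are elements of G such that the subgroup generated by a and b is non-abelian, then a and b generate a free group of rank 2. -/
open FreeGroup

namespace RFProof

variable {α : Type} [DecidableEq α]

@[reducible] def P (R : List (α × Bool)) (i : α) (j : Fin (R.length + 1)) : Prop :=
  R[(j:ℕ)]? = some (i, true) ∨ (0 < (j:ℕ) ∧ R[(j:ℕ)-1]? = some (i, false))

@[reducible] def Q (R : List (α × Bool)) (i : α) (j : Fin (R.length + 1)) : Prop :=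
  R[(j:ℕ)]? = some (i, false) ∨ (0 < (j:ℕ) ∧ R[(j:ℕ)-1]? = some (i, true))

omit [DecidableEq α] in
lemma lt_of_get (R : List (α × Bool)) {k : ℕ} {u : α × Bool} (h : R[k]? = some u) :
    k < R.length := by
  rcases List.getElem?_eq_some_iff.1 h with ⟨h1, -⟩
  exact h1

def fwd (R : List (α × Bool)) (i : α) (j : Fin (R.length + 1)) : Fin (R.length + 1) :=
  if h : R[(j:ℕ)]? = some (i, true) then ⟨(j:ℕ)+1, by simpa using lt_of_get R h⟩
  else ⟨(j:ℕ)-1, lt_of_le_of_lt (Nat.sub_le _ _) j.isLt⟩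

def bwd (R : List (α × Bool)) (i : α) (j : Fin (R.length + 1)) : Fin (R.length + 1) :=
  if h : R[(j:ℕ)]? = some (i, false) then ⟨(j:ℕ)+1, by simpa using lt_of_get R h⟩
  else ⟨(j:ℕ)-1, lt_of_le_of_lt (Nat.sub_le _ _) j.isLt⟩

variable (R : List (α × Bool)) (i : α)

lemma fwd_coe_of_tt {j : Fin (R.length+1)} (h : R[(j:ℕ)]? = some (i, true)) :
    ((fwd R i j : Fin (R.length+1)) : ℕ) = (j:ℕ) + 1 := by rw [fwd, dif_pos h]

lemma fwd_coe_of_ntt {j : Fin (R.length+1)} (h : ¬ R[(j:ℕ)]? = some (i, true)) :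
    ((fwd R i j : Fin (R.length+1)) : ℕ) = (j:ℕ) - 1 := by rw [fwd, dif_neg h]

lemma bwd_coe_of_ff {j : Fin (R.length+1)} (h : R[(j:ℕ)]? = some (i, false)) :
    ((bwd R i j : Fin (R.length+1)) : ℕ) = (j:ℕ) + 1 := by rw [bwd, dif_pos h]

lemma bwd_coe_of_nff {j : Fin (R.length+1)} (h : ¬ R[(j:ℕ)]? = some (i, false)) :
    ((bwd R i j : Fin (R.length+1)) : ℕ) = (j:ℕ) - 1 := by rw [bwd, dif_neg h]

lemma fwd_mem {j : Fin (R.length+1)} (hj : P R i j) : Q R i (fwd R i j) := by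
  by_cases h : R[(j:ℕ)]? = some (i, true)
  · right
    have hc := fwd_coe_of_tt R i h
    exact ⟨by omega, by rw [hc]; simpa using h⟩
  · left
    rcases hj with h' | ⟨h1, h2⟩
    · exact absurd h' h
    · rw [fwd_coe_of_ntt R i h]; exact h2

lemma bwd_mem {j : Fin (R.length+1)} (hj : Q R i j) : P R i (bwd R i j) := by
  by_cases h : R[(j:ℕ)]? = some (i, false)
  · right
    have hc := bwd_coe_of_ff R i h
    exact ⟨by omega, by rw [hc]; simpa using h⟩
  · left
    rcases hj with h' | ⟨h1, h2⟩
    · exact absurd h' h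
    · rw [bwd_coe_of_nff R i h]; exact h2

variable (hred : ∀ (k : ℕ) (i' : α) (c : Bool), R[k]? = some (i', c) → R[k+1]? ≠ some (i', !c))

def sigmaAux : {j : Fin (R.length+1) // P R i j} ≃ {j : Fin (R.length+1) // Q R i j} where
  toFun := fun j => ⟨fwd R i j.1, fwd_mem R i j.2⟩
  invFun := fun j => ⟨bwd R i j.1, bwd_mem R i j.2⟩
  left_inv := by
    rintro ⟨j, hj⟩
    apply Subtype.ext; apply Fin.ext
    show ((bwd R i (fwd R i j) : Fin _) : ℕ) = (j : ℕ)
    rcases hj with h | ⟨h1, h2⟩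
    · have hc := fwd_coe_of_tt R i h
      have hnf : ¬ R[((fwd R i j : Fin _):ℕ)]? = some (i, false) := by
        rw [hc]
        have := hred (j:ℕ) i true h; simpa using this
      rw [bwd_coe_of_nff R i hnf, hc]
      omega
    · have hne : ¬ R[(j:ℕ)]? = some (i, true) := by
        intro h'
        have := hred ((j:ℕ)-1) i false h2
        rw [Nat.sub_add_cancel h1] at this
        simpa using this h'
      have hc := fwd_coe_of_ntt R i hne
      have hf : R[((fwd R i j : Fin _):ℕ)]? = some (i, false) := by rw [hc]; exact h2
      rw [bwd_coe_of_ff R i hf, hc]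
      omega
  right_inv := by
    rintro ⟨j, hj⟩
    apply Subtype.ext; apply Fin.ext
    show ((fwd R i (bwd R i j) : Fin _) : ℕ) = (j : ℕ)
    rcases hj with h | ⟨h1, h2⟩
    · have hc := bwd_coe_of_ff R i h
      have hnf : ¬ R[((bwd R i j : Fin _):ℕ)]? = some (i, true) := by
        rw [hc]
        have := hred (j:ℕ) i false h; simpa using this
      rw [fwd_coe_of_ntt R i hnf, hc]
      omega
    · have hne : ¬ R[(j:ℕ)]? = some (i, false) := by
        intro h'
        have := hred ((j:ℕ)-1) i true h2
        rw [Nat.sub_add_cancel h1] at this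
        simpa using this h'
      have hc := bwd_coe_of_nff R i hne
      have hf : R[((bwd R i j : Fin _):ℕ)]? = some (i, true) := by rw [hc]; exact h2
      rw [fwd_coe_of_tt R i hf, hc]
      omega

noncomputable def sigma : Equiv.Perm (Fin (R.length + 1)) :=
  (sigmaAux R i hred).extendSubtype

lemma sigma_apply_tt {j : ℕ} (h : R[j]? = some (i, true)) (hj : j < R.length + 1) :
    sigma R i hred ⟨j, hj⟩ = ⟨j+1, by simpa using lt_of_get R h⟩ := by
  have hP : P R i ⟨j, hj⟩ := Or.inl h
  rw [sigma, Equiv.extendSubtype_apply_of_mem _ _ hP]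
  apply Fin.ext
  exact fwd_coe_of_tt R i h

lemma sigma_apply_ff {j : ℕ} (h : R[j]? = some (i, false)) (hj : j + 1 < R.length + 1) :
    sigma R i hred ⟨j+1, hj⟩ = ⟨j, Nat.lt_of_succ_lt hj⟩ := by
  have hP : P R i ⟨j+1, hj⟩ := Or.inr ⟨Nat.succ_pos _, by simpa using h⟩
  rw [sigma, Equiv.extendSubtype_apply_of_mem _ _ hP]
  apply Fin.ext
  have hne : ¬ R[j+1]? = some (i, true) := by
    have := hred j i false h; simpa using this
  have := fwd_coe_of_ntt R i (j := ⟨j+1, hj⟩) hne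
  exact (by simpa using this : ((fwd R i ⟨j+1, hj⟩ : Fin _) : ℕ) = j)


lemma eval_prod (L : List (α × Bool))
    (hred : ∀ (k : ℕ) (i' : α) (c : Bool),
      L.reverse[k]? = some (i', c) → L.reverse[k+1]? ≠ some (i', !c)) :
    ∀ (S T : List (α × Bool)), L = T ++ S → ∀ (hS : S.length < L.reverse.length + 1),
    ((S.map fun x => cond x.2 (sigma L.reverse x.1 hred) (sigma L.reverse x.1 hred)⁻¹).prod)
      ⟨0, Nat.succ_pos _⟩ = ⟨S.length, hS⟩ := by
  intro S
  induction S with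
  | nil => intro T h hS; simp
  | cons p S' ih =>
    intro T h hS
    obtain ⟨i, c⟩ := p
    have h' : L = (T ++ [(i,c)]) ++ S' := by simpa using h
    have hkey : L.reverse[S'.length]? = some (i, c) := by
      rw [h']
      rw [List.reverse_append]
      rw [List.getElem?_append_right (by simp)]
      simp
    have hlt : S'.length < L.reverse.length := lt_of_get _ hkey
    have ih' := ih (T ++ [(i,c)]) h' (by omega)
    simp only [List.map_cons, List.prod_cons, Equiv.Perm.mul_apply, ih']
    cases c with
    | true =>
      have := sigma_apply_tt L.reverse i hred hkey (by omega)
      simpa using this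
    | false =>
      show (sigma L.reverse i hred)⁻¹ _ = _
      rw [Equiv.Perm.inv_def, Equiv.symm_apply_eq]
      have := sigma_apply_ff L.reverse i hred hkey (by omega)
      simpa using this.symm

theorem exists_perm_hom (w : FreeGroup α) (hw : w ≠ 1) :
    ∃ (m : ℕ) (ψ : FreeGroup α →* Equiv.Perm (Fin m)), ψ w ≠ 1 := by
  set L := w.toWord with hL
  have hredL : FreeGroup.reduce L = L := w.reduce_toWord
  have hred : ∀ (k : ℕ) (i' : α) (c : Bool),
      L.reverse[k]? = some (i', c) → L.reverse[k+1]? ≠ some (i', !c) := by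
    intro k i c h1 h2
    have hk1 : k + 1 < L.length := by simpa using lt_of_get _ h2
    have hk : k < L.length := by omega
    rw [List.getElem?_reverse hk] at h1
    rw [List.getElem?_reverse hk1] at h2
    set p := L.length - 1 - (k+1) with hp
    have hpk : L.length - 1 - k = p + 1 := by omega
    rw [hpk] at h1
    have hpl : p < L.length := by omega
    have hp1l : p + 1 < L.length := by omega
    have e2 : L[p] = (i, !c) := by
      have := List.getElem?_eq_getElem hpl
      rw [this] at h2; exact Option.some.inj h2
    have e1 : L[p+1] = (i, c) := by
      have := List.getElem?_eq_getElem hp1l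
      rw [this] at h1; exact Option.some.inj h1
    have hdec : L = L.take p ++ (i, !c) :: (i, c) :: L.drop (p+2) := by
      conv_lhs => rw [← List.take_append_drop p L]
      congr 1
      rw [List.drop_eq_getElem_cons hpl, e2]
      congr 1
      rw [List.drop_eq_getElem_cons hp1l, e1]
    have : FreeGroup.reduce L = L.take p ++ (i, !c) :: (i, !(!c)) :: L.drop (p+2) := by
      rw [hredL, Bool.not_not]; exact hdec
    exact FreeGroup.reduce.not this
  refine ⟨L.reverse.length + 1, FreeGroup.lift (fun i => sigma L.reverse i hred), ?_⟩
  intro hcon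
  have h1 : FreeGroup.lift (fun i => sigma L.reverse i hred) w
      = (L.map fun x => cond x.2 (sigma L.reverse x.1 hred) (sigma L.reverse x.1 hred)⁻¹).prod := by
    conv_lhs => rw [← FreeGroup.mk_toWord (x := w)]
    rw [FreeGroup.lift_mk]
  have h2 := eval_prod L hred L [] (by simp) (by simp)
  rw [← h1, hcon] at h2
  have : (0 : ℕ) = L.length := congrArg Fin.val h2
  have : L = [] := List.length_eq_zero_iff.mp this.symm
  exact hw (FreeGroup.toWord_eq_nil_iff.mp this)



/-- iterates of an endomorphism -/
def iter {G : Type*} [Group G] (φ : G →* G) : ℕ → (G →* G)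
  | 0 => MonoidHom.id G
  | n+1 => φ.comp (iter φ n)

lemma iter_add {G : Type*} [Group G] (φ : G →* G) (m n : ℕ) :
    iter φ (m + n) = (iter φ m).comp (iter φ n) := by
  induction m with
  | zero => rw [Nat.zero_add]; exact (MonoidHom.id_comp _).symm
  | succ m ih =>
    have : m + 1 + n = (m + n) + 1 := by omega
    rw [this, iter, ih, iter, MonoidHom.comp_assoc]

lemma iter_surj {G : Type*} [Group G] {φ : G →* G} (h : Function.Surjective φ) (n : ℕ) :
    Function.Surjective (iter φ n) := by
  induction n with
  | zero => exact fun x => ⟨x, rfl⟩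
  | succ n ih => exact h.comp ih

theorem hopfian {α : Type} [DecidableEq α] [Finite α] (φ : FreeGroup α →* FreeGroup α)
    (hs : Function.Surjective φ) : Function.Injective φ := by
  rw [injective_iff_map_eq_one φ]
  by_contra hcon
  push_neg at hcon
  obtain ⟨g, hg1, hg⟩ := hcon
  obtain ⟨m, ψ, hψ⟩ := exists_perm_hom g hg
  have : Finite (FreeGroup α →* Equiv.Perm (Fin m)) :=
    Finite.of_equiv _ (FreeGroup.lift : (α → Equiv.Perm (Fin m)) ≃ _)
  obtain ⟨n, n', hne, heq⟩ := Finite.exists_ne_map_eq_of_infinite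
    (fun n : ℕ => ψ.comp (iter φ n))
  wlog hlt : n < n' generalizing n n'
  · exact this n' n hne.symm heq.symm (by omega)
  set d := n' - n with hd
  have hd1 : 1 ≤ d := by omega
  have hsplit : iter φ n' = (iter φ d).comp (iter φ n) := by
    rw [← iter_add]; congr 1; omega
  have key : ∀ y, ψ y = ψ (iter φ d y) := by
    intro y
    obtain ⟨x, rfl⟩ := iter_surj hs n y
    have := DFunLike.congr_fun heq x
    simp only [MonoidHom.comp_apply] at this ⊢
    rw [this, hsplit]
    rfl
  have hiterg : iter φ d g = 1 := by
    have : d = (d - 1) + 1 := by omega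
    rw [this, iter_add]
    simp only [MonoidHom.comp_apply]
    have : iter φ 1 g = 1 := by simp [iter, hg1]
    rw [this]
    exact _root_.map_one _
  have := key g
  rw [hiterg, _root_.map_one] at this
  exact hψ this

lemma small_comm {S : Type*} [Subsingleton S] (g h : FreeGroup S) : g * h = h * g := by
  rcases isEmpty_or_nonempty S with hS | ⟨⟨s⟩⟩
  · have htriv : ∀ z : FreeGroup S, z = 1 := by
      intro z
      induction z using FreeGroup.induction_on with
      | C1 => rfl
      | of x => exact hS.elim x
      | inv_of x _ => exact hS.elim x
      | mul x y hx hy => rw [hx, hy, one_mul]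
    rw [htriv g, htriv h]
  · have hpow : ∀ z : FreeGroup S, ∃ n : ℤ, z = (FreeGroup.of s) ^ n := by
      intro z
      induction z using FreeGroup.induction_on with
      | C1 => exact ⟨0, by simp⟩
      | of x => exact ⟨1, by rw [Subsingleton.elim x s]; simp⟩
      | inv_of x hx => obtain ⟨n, hn⟩ := hx; exact ⟨-n, by rw [hn, zpow_neg]⟩
      | mul x y hx hy =>
        obtain ⟨n, hn⟩ := hx; obtain ⟨k, hk⟩ := hy
        exact ⟨n + k, by rw [hn, hk, zpow_add]⟩
    obtain ⟨n, hn⟩ := hpow g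
    obtain ⟨k, hk⟩ := hpow h
    rw [hn, hk, ← zpow_add, ← zpow_add, add_comm]



lemma closure_additive {A : Type*} [CommGroup A] {s : Set A}
    (h : Subgroup.closure s = ⊤) :
    AddSubgroup.closure (Additive.ofMul '' s) = ⊤ := by
  have key : ∀ g : A, g ∈ Subgroup.closure s →
      Additive.ofMul g ∈ AddSubgroup.closure (Additive.ofMul '' s) := by
    intro g hg
    induction hg using Subgroup.closure_induction with
    | mem g hg => exact AddSubgroup.subset_closure ⟨g, hg, rfl⟩
    | one => exact AddSubgroup.zero_mem _
    | mul g g' _ _ hg hg' => exact AddSubgroup.add_mem _ hg hg'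
    | inv g _ hg => exact AddSubgroup.neg_mem _ hg
  rw [eq_top_iff]
  rintro z -
  exact key z.toMul (h ▸ Subgroup.mem_top _)

/-- A free group generated by two non-commuting elements is free of rank 2. -/
lemma rank_two {H : Type} [Group H] [IsFreeGroup H] (x y : H)
    (hgen : Subgroup.closure ({x, y} : Set H) = ⊤) (hna : x * y ≠ y * x) :
    Nonempty (H ≃* FreeGroup (Fin 2)) := by
  classical
  set S := IsFreeGroup.Generators H with hS
  let e : H ≃* FreeGroup S := IsFreeGroup.toFreeGroup H
  -- transfer generation along e
  have hgen2 : Subgroup.closure ({e x, e y} : Set (FreeGroup S)) = ⊤ := by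
    have h1 : Subgroup.map e.toMonoidHom (Subgroup.closure {x, y}) = ⊤ := by
      rw [hgen, Subgroup.map_top_of_surjective _ e.surjective]
    rw [MonoidHom.map_closure] at h1
    rw [← h1]
    congr 1
    rw [Set.image_insert_eq, Set.image_singleton]
    rfl
  have hna2 : e x * e y ≠ e y * e x := by
    intro hc
    exact hna (e.injective (by rw [_root_.map_mul, _root_.map_mul, hc]))
  -- abelianization
  set A := Abelianization (FreeGroup S) with hA
  let ab : FreeGroup S →* A := Abelianization.of
  have habsurj : Function.Surjective ab := fun z =>
    Quotient.inductionOn' z fun g => ⟨g, rfl⟩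
  have hgen3 : Subgroup.closure ({ab (e x), ab (e y)} : Set A) = ⊤ := by
    have h1 : Subgroup.map ab (Subgroup.closure {e x, e y}) = ⊤ := by
      rw [hgen2, Subgroup.map_top_of_surjective _ habsurj]
    rw [MonoidHom.map_closure] at h1
    rw [← h1]
    congr 1
    rw [Set.image_insert_eq, Set.image_singleton]
  -- to the free abelian group = Additive A
  have hgen4 : AddSubgroup.closure
      ({Additive.ofMul (ab (e x)), Additive.ofMul (ab (e y))} : Set (FreeAbelianGroup S)) = ⊤ := by
    have := closure_additive hgen3
    rw [Set.image_insert_eq, Set.image_singleton] at this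
    exact this
  set u : FreeAbelianGroup S := Additive.ofMul (ab (e x))
  set v : FreeAbelianGroup S := Additive.ofMul (ab (e y))
  have hspan : Submodule.span ℤ ({u, v} : Set (FreeAbelianGroup S)) = ⊤ := by
    rw [Submodule.eq_top_iff']
    intro m
    have h' : m ∈ (Submodule.span ℤ ({u, v} : Set (FreeAbelianGroup S))).toAddSubgroup := by
      rw [Submodule.span_int_eq_addSubgroupClosure]; erw [hgen4]
      trivial
    exact (Submodule.mem_toAddSubgroup _).mp h'
  -- rank bound
  have hrank : Module.rank ℤ (FreeAbelianGroup S) ≤ 2 := by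
    rw [← rank_top ℤ, ← hspan]
    refine (rank_span_le _).trans ?_
    calc (Cardinal.mk ({u, v} : Set (FreeAbelianGroup S)))
        ≤ 1 + 1 := (Cardinal.mk_insert_le).trans (by rw [Cardinal.mk_singleton])
      _ = 2 := one_add_one_eq_two
  have hrankS : (Cardinal.mk S) ≤ 2 := by
    have : Module.rank ℤ (FreeAbelianGroup S) = Cardinal.mk S := by
      have lin : FreeAbelianGroup S ≃ₗ[ℤ] (S →₀ ℤ) :=
        (FreeAbelianGroup.equivFinsupp S).toIntLinearEquiv
      rw [lin.rank_eq, rank_finsupp_self']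
    rwa [this] at hrank
  have : Cardinal.mk S < Cardinal.aleph0 :=
    lt_of_le_of_lt hrankS (by exact_mod_cast Cardinal.nat_lt_aleph0 2)
  have hfin : Finite S := Cardinal.lt_aleph0_iff_finite.mp this
  have : Fintype S := Fintype.ofFinite S
  have hcardle : Fintype.card S ≤ 2 := by
    have := hrankS
    rwa [Cardinal.mk_fintype, show (2 : Cardinal) = ((2:ℕ):Cardinal) by norm_num,
      Nat.cast_le] at this
  have hcardge : 2 ≤ Fintype.card S := by
    by_contra hc
    push_neg at hc
    have : Fintype.card S ≤ 1 := by omega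
    have : Subsingleton S := Fintype.card_le_one_iff_subsingleton.mp this
    exact hna2 (small_comm _ _)
  have hcard : Fintype.card S = 2 := le_antisymm hcardle hcardge
  exact ⟨e.trans (freeGroupCongr (Fintype.equivFinOfCardEq hcard))⟩


end RFProof

open RFProof

lemma range_pair {β : Type*} (u v : β) : Set.range ![u, v] = {u, v} := by
  ext z
  constructor
  · rintro ⟨i, rfl⟩
    fin_cases i
    · exact Set.mem_insert _ _
    · exact Set.mem_insert_of_mem _ rfl
  · rintro (rfl | rfl)
    exacts [⟨0, rfl⟩, ⟨1, rfl⟩]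

/-- In a residually free group, two elements generating a non-abelian subgroup
generate a free group of rank 2. -/
theorem two_elements_nonabelian_free (G : Type*) [Group G]
    (hRF : ∀ g : G, g ≠ 1 → ∃ f : G →* FreeGroup (Fin 2), f g ≠ 1)
    (a b : G)
    (hna : ¬ ∀ x y : Subgroup.closure ({a, b} : Set G), x * y = y * x) :
    Nonempty ((Subgroup.closure ({a, b} : Set G)) ≃* FreeGroup (Fin 2)) := by
  classical
  -- Step 1: a and b do not commute
  have hab : a * b ≠ b * a := by
    intro h
    apply hna
    have hcomm : ∀ x ∈ ({a, b} : Set G), ∀ y ∈ ({a, b} : Set G), x * y = y * x := by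
      rintro x (rfl | rfl) y (rfl | rfl)
      · rfl
      · exact h
      · exact h.symm
      · rfl
    letI := Subgroup.closureCommGroupOfComm hcomm
    intro x y
    exact mul_comm x y
  -- Step 2: separating homomorphism
  have hc : (a * b) * (b * a)⁻¹ ≠ 1 := fun h => hab (mul_inv_eq_one.mp h)
  obtain ⟨f, hf⟩ := hRF _ hc
  have hfab : f a * f b ≠ f b * f a := by
    intro h
    apply hf
    rw [_root_.map_mul, _root_.map_inv, _root_.map_mul, _root_.map_mul, h, mul_inv_cancel]
  set x := f a with hx
  set y := f b with hy
  set H := Subgroup.closure ({x, y} : Set (FreeGroup (Fin 2))) with hH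
  have hxmem : x ∈ H := Subgroup.subset_closure (Set.mem_insert _ _)
  have hymem : y ∈ H := Subgroup.subset_closure (Set.mem_insert_of_mem _ rfl)
  set x' : H := ⟨x, hxmem⟩
  set y' : H := ⟨y, hymem⟩
  -- H is generated by x', y'
  have hgenH : Subgroup.closure ({x', y'} : Set H) = ⊤ := by
    have h1 := Subgroup.closure_closure_coe_preimage (k := ({x, y} : Set (FreeGroup (Fin 2))))
    have h2 : (((↑) : H → FreeGroup (Fin 2)) ⁻¹' {x, y}) = {x', y'} := by
      ext ⟨g, hg⟩
      simp [Set.mem_preimage, Subtype.ext_iff, x', y']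
    rwa [h2] at h1
  have hnaH : x' * y' ≠ y' * x' := fun hcon => hfab (congrArg Subtype.val hcon)
  obtain ⟨ε⟩ := rank_two x' y' hgenH hnaH
  -- the surjection F₂ → H
  set π : FreeGroup (Fin 2) →* G := FreeGroup.lift ![a, b] with hπ
  set χ : FreeGroup (Fin 2) →* FreeGroup (Fin 2) := f.comp π with hχdef
  have hχ : χ = FreeGroup.lift ![x, y] := by
    apply FreeGroup.ext_hom
    intro i
    fin_cases i <;> simp [hχdef, hπ, hx, hy]
  have hχrange : χ.range = H := by
    rw [hχ, FreeGroup.range_lift_eq_closure, range_pair, hH]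
  have hmemH : ∀ w, χ w ∈ H := fun w => hχrange ▸ ⟨w, rfl⟩
  set θ' : FreeGroup (Fin 2) →* H := χ.codRestrict H hmemH with hθ'
  have hθ'surj : Function.Surjective θ' := by
    rintro ⟨h, hh⟩
    have hh' : h ∈ χ.range := hχrange.symm ▸ hh
    obtain ⟨w, hw⟩ := hh'
    exact ⟨w, Subtype.ext hw⟩
  set θ : FreeGroup (Fin 2) →* FreeGroup (Fin 2) := ε.toMonoidHom.comp θ' with hθ
  have hθsurj : Function.Surjective θ := ε.surjective.comp hθ'surj
  have hθinj : Function.Injective θ := hopfian θ hθsurj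
  have hπinj : Function.Injective π := by
    intro u v huv
    apply hθinj
    simp only [hθ, MonoidHom.comp_apply]
    congr 1
    apply Subtype.ext
    show χ u = χ v
    simp only [hχdef, MonoidHom.comp_apply, huv]
  have hrangeπ : π.range = Subgroup.closure ({a, b} : Set G) := by
    rw [hπ, FreeGroup.range_lift_eq_closure, range_pair]
  exact ⟨(MulEquiv.subgroupCongr hrangeπ.symm).trans (MonoidHom.ofInjective hπinj).symm⟩
end

section
/- If G is a residually free group, then the centralizer in G of the commutator subgroup [G,G] equals the centre of G. -/
open FreeGroup List
open scoped commutatorElement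

namespace RFaux

variable {α : Type*}


variable {α : Type*}

lemma list_append_eq_cons {l : List α} {a : α} (h : l ++ [a] = a :: l) :
    l = List.replicate l.length a := by
  induction l with
  | nil => rfl
  | cons b t ih =>
    simp only [List.cons_append, List.cons.injEq] at h
    obtain ⟨rfl, h2⟩ := h
    have := ih h2
    simp [List.replicate_succ, ← this]

lemma list_dropLast_eq_tail {l : List α} {a : α} (hh : l.head? = some a)
    (h : l.dropLast = l.tail) : l = List.replicate l.length a := by
  induction l generalizing a with
  | nil => simp at hh
  | cons b t ih =>
    simp only [List.head?_cons, Option.some.injEq] at hh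
    subst hh
    cases t with
    | nil => rfl
    | cons c t' =>
      simp only [List.dropLast_cons₂, List.tail_cons, List.cons.injEq] at h
      obtain ⟨rfl, h2⟩ := h
      have := ih rfl (by simpa using h2)
      simp only [List.length_cons, List.replicate_succ] at this ⊢
      rw [← this]

lemma invRev_replicate (n : ℕ) (i : α) (b : Bool) :
    invRev (List.replicate n (i, b)) = List.replicate n (i, !b) := by
  simp [invRev, List.map_replicate, List.reverse_replicate]

lemma mk_replicate_true [DecidableEq α] (n : ℕ) (i : α) :
    FreeGroup.mk (List.replicate n (i, true)) = FreeGroup.of i ^ n := by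
  have := FreeGroup.toWord_of_pow (α := α) i n
  rw [← this, FreeGroup.mk_toWord]

lemma mk_replicate_false [DecidableEq α] (n : ℕ) (i : α) :
    FreeGroup.mk (List.replicate n (i, false)) = (FreeGroup.of i)⁻¹ ^ n := by
  rw [inv_pow, ← mk_replicate_true n i, FreeGroup.inv_mk, invRev_replicate]
  norm_num


lemma commute_of_gen [DecidableEq α] {z : FreeGroup α} {i : α}
    (h : Commute z (FreeGroup.of i)) : ∃ m : ℤ, z = FreeGroup.of i ^ m := by
  rcases eq_or_ne z 1 with rfl | hz
  · exact ⟨0, by simp⟩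
  have hw : FreeGroup.reduce z.toWord = z.toWord := z.reduce_toWord
  have hne : z.toWord ≠ [] := fun h' => hz (FreeGroup.toWord_eq_nil_iff.mp h')
  have heq : FreeGroup.reduce (z.toWord ++ [(i, true)]) =
      FreeGroup.reduce ((i, true) :: z.toWord) := by
    have h1 : (z * FreeGroup.of i).toWord = FreeGroup.reduce (z.toWord ++ [(i, true)]) := by
      conv_lhs => rw [← FreeGroup.mk_toWord (x := z)]
      rw [show (FreeGroup.of i) = FreeGroup.mk [(i, true)] from rfl, FreeGroup.mul_mk,
        FreeGroup.toWord_mk]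
    have h2 : (FreeGroup.of i * z).toWord = FreeGroup.reduce ((i, true) :: z.toWord) := by
      conv_lhs => rw [← FreeGroup.mk_toWord (x := z)]
      rw [show (FreeGroup.of i) = FreeGroup.mk [(i, true)] from rfl, FreeGroup.mul_mk,
        FreeGroup.toWord_mk, List.singleton_append]
    rw [← h1, ← h2, h.eq]
  obtain ⟨hd, tl, hwcons⟩ := List.exists_cons_of_ne_nil hne
  have hinvne : invRev z.toWord ≠ [] := by
    intro h'
    apply hne
    have := congrArg invRev h'
    rwa [FreeGroup.invRev_invRev, FreeGroup.invRev_empty] at this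
  obtain ⟨hd', tl', hwinv⟩ := List.exists_cons_of_ne_nil hinvne
  have hback : z.toWord = invRev tl' ++ [(hd'.1, !hd'.2)] := by
    have h3 := congrArg invRev hwinv
    rw [FreeGroup.invRev_invRev] at h3
    rw [h3]
    simp [invRev]
  have hL : FreeGroup.reduce (z.toWord ++ [(i, true)]) =
      invRev (FreeGroup.reduce ((i, false) :: invRev z.toWord)) := by
    conv_lhs => rw [← FreeGroup.invRev_invRev (L₁ := FreeGroup.reduce (z.toWord ++ [(i, true)]))]
    rw [← FreeGroup.reduce_invRev]
    congr 2
    simp [invRev]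
  have hred_inv : FreeGroup.reduce (invRev z.toWord) = invRev z.toWord := by
    rw [FreeGroup.reduce_invRev, hw]
  rw [hL] at heq
  rw [FreeGroup.reduce.cons (L := invRev z.toWord), hred_inv, hwinv] at heq
  rw [FreeGroup.reduce.cons (L := z.toWord), hw, hwcons] at heq
  dsimp only at heq
  by_cases hc1 : (i, true).1 = hd.1 ∧ (i, true).2 = !hd.2
  · rw [if_pos hc1] at heq
    have hhd : hd = (i, false) := by
      obtain ⟨e1, e2⟩ := hc1
      cases hd with
      | mk a b => cases b <;> simp_all
    by_cases hc2 : (i, false).1 = hd'.1 ∧ (i, false).2 = !hd'.2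
    · rw [if_pos hc2] at heq
      have hhd' : hd' = (i, true) := by
        obtain ⟨e1, e2⟩ := hc2
        cases hd' with
        | mk a b => cases b <;> simp_all
      -- dropLast = tail : all letters equal (i,false)
      have hdrop : z.toWord.dropLast = z.toWord.tail := by
        conv_lhs => rw [hback]
        conv_rhs => rw [hwcons]
        rw [List.dropLast_concat, List.tail_cons, heq]
      have hhead : z.toWord.head? = some (i, false) := by
        rw [hwcons, hhd]
        rfl
      have hrep := list_dropLast_eq_tail hhead hdrop
      refine ⟨-(z.toWord.length : ℤ), ?_⟩
      rw [zpow_neg, zpow_natCast, ← inv_pow, ← mk_replicate_false, ← hrep,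
        FreeGroup.mk_toWord]
    · rw [if_neg hc2] at heq
      exfalso
      have hlen := congrArg List.length heq
      have l1 : (FreeGroup.invRev z.toWord).length = z.toWord.length :=
        FreeGroup.invRev_length
      have l2 : z.toWord.length = tl.length + 1 := by rw [hwcons]; rfl
      have l3 : z.toWord.length = tl'.length + 1 := by rw [← l1, hwinv]; rfl
      simp [FreeGroup.invRev] at hlen
      omega
  · rw [if_neg hc1] at heq
    by_cases hc2 : (i, false).1 = hd'.1 ∧ (i, false).2 = !hd'.2
    · rw [if_pos hc2] at heq
      exfalso
      have hlen := congrArg List.length heq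
      have l1 : (FreeGroup.invRev z.toWord).length = z.toWord.length :=
        FreeGroup.invRev_length
      have l2 : z.toWord.length = tl.length + 1 := by rw [hwcons]; rfl
      have l3 : z.toWord.length = tl'.length + 1 := by rw [← l1, hwinv]; rfl
      simp [FreeGroup.invRev] at hlen
      omega
    · rw [if_neg hc2] at heq
      -- w ++ [(i,true)] = (i,true) :: w
      have hiv : FreeGroup.invRev ((i, false) :: hd' :: tl') = z.toWord ++ [(i, true)] := by
        have h5 : FreeGroup.invRev (hd' :: tl') = z.toWord := by
          have h3 := congrArg FreeGroup.invRev hwinv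
          rw [FreeGroup.invRev_invRev] at h3
          exact h3.symm
        simp only [FreeGroup.invRev, List.map_cons, List.reverse_cons] at h5 ⊢
        rw [← h5]
        simp
      rw [hiv, ← hwcons] at heq
      have hrep := list_append_eq_cons heq
      refine ⟨(z.toWord.length : ℤ), ?_⟩
      rw [zpow_natCast, ← mk_replicate_true, ← hrep, FreeGroup.mk_toWord]


lemma of_zpow_toWord [DecidableEq α] (i : α) (m : ℤ) (hm : m ≠ 0) :
    ∃ k b, k ≠ 0 ∧ (FreeGroup.of i ^ m).toWord = List.replicate k ((i, b) : α × Bool) := by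
  rcases m with n | n
  · refine ⟨n, true, by simpa using hm, ?_⟩
    rw [Int.ofNat_eq_coe, zpow_natCast, FreeGroup.toWord_of_pow]
  · refine ⟨n + 1, false, Nat.succ_ne_zero n, ?_⟩
    rw [zpow_negSucc, FreeGroup.toWord_inv, FreeGroup.toWord_of_pow]
    simp [FreeGroup.invRev, List.map_replicate, List.reverse_replicate]

lemma of_zpow_eq_one [DecidableEq α] {i : α} {m : ℤ} (h : FreeGroup.of i ^ m = 1) : m = 0 := by
  by_contra hm
  obtain ⟨k, b, hk, htw⟩ := of_zpow_toWord i m hm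
  rw [h, FreeGroup.toWord_one] at htw
  exact hk (by simpa using htw.symm)

lemma of_zpow_inj [DecidableEq α] {i j : α} (hij : i ≠ j) {m n : ℤ}
    (h : FreeGroup.of i ^ m = FreeGroup.of j ^ n) : m = 0 ∧ n = 0 := by
  have hm : m = 0 := by
    by_contra hm
    obtain ⟨k, b, hk, htw⟩ := of_zpow_toWord i m hm
    by_cases hn : n = 0
    · rw [hn, zpow_zero] at h
      exact hm (of_zpow_eq_one h)
    · obtain ⟨k', b', hk', htw'⟩ := of_zpow_toWord j n hn
      rw [h, htw'] at htw
      have h1 : (List.replicate k' ((j, b') : α × Bool)).head? =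
          (List.replicate k ((i, b) : α × Bool)).head? := by rw [htw]
      rw [List.head?_replicate, List.head?_replicate] at h1
      rw [if_neg hk', if_neg hk] at h1
      have h2 : ((j, b') : α × Bool) = (i, b) := Option.some_injective _ h1
      exact hij (congrArg Prod.fst h2).symm
  refine ⟨hm, ?_⟩
  rw [hm, zpow_zero] at h
  exact of_zpow_eq_one (α := α) h.symm


lemma commute_of_gen' {β : Type*} {z : FreeGroup β} {i : β}
    (h : Commute z (FreeGroup.of i)) : ∃ m : ℤ, z = FreeGroup.of i ^ m := by
  haveI := Classical.decEq β
  exact commute_of_gen h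

lemma of_zpow_inj' {β : Type*} {i j : β} (hij : i ≠ j) {m n : ℤ}
    (h : FreeGroup.of i ^ m = FreeGroup.of j ^ n) : m = 0 ∧ n = 0 := by
  haveI := Classical.decEq β
  exact of_zpow_inj hij h

lemma of_zpow_eq_one' {β : Type*} {i : β} {m : ℤ} (h : FreeGroup.of i ^ m = 1) : m = 0 := by
  haveI := Classical.decEq β
  exact of_zpow_eq_one h
lemma subsing (h : ∀ u v : FreeGroup α, u * v = v * u) : Subsingleton α := by
  constructor
  intro i j
  by_contra hij
  obtain ⟨m, hm⟩ := commute_of_gen' (z := FreeGroup.of j) (i := i) (h _ _)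
  have := of_zpow_inj' hij (hm ▸ (zpow_one (FreeGroup.of j)).symm : FreeGroup.of i ^ m = FreeGroup.of j ^ (1 : ℤ))
  exact one_ne_zero this.2

lemma exists_gen [Subsingleton α] :
    ∃ w : FreeGroup α, (∀ z : FreeGroup α, ∃ m : ℤ, z = w ^ m) ∧
      (w = 1 ∨ ∀ n : ℤ, w ^ n = 1 → n = 0) := by
  rcases isEmpty_or_nonempty α with hα | hα
  · refine ⟨1, fun z => ⟨0, ?_⟩, Or.inl rfl⟩
    have h0 : z.toWord = [] := by
      cases h : z.toWord with
      | nil => rfl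
      | cons hd tl => exact (hα.false hd.1).elim
    rw [zpow_zero]
    exact FreeGroup.toWord_eq_nil_iff.mp h0
  · obtain ⟨i⟩ := hα
    refine ⟨FreeGroup.of i, fun z => ?_, Or.inr fun n hn => of_zpow_eq_one' hn⟩
    induction z using FreeGroup.induction_on with
    | C1 => exact ⟨0, (zpow_zero _).symm⟩
    | of x => exact ⟨1, by rw [zpow_one, Subsingleton.elim i x]⟩
    | inv_of x ih =>
      obtain ⟨m, hm⟩ := ih
      exact ⟨-m, by rw [hm, ← zpow_neg]⟩
    | mul x y ihx ihy =>
      obtain ⟨m, hm⟩ := ihx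
      obtain ⟨m', hm'⟩ := ihy
      exact ⟨m + m', by rw [hm, hm', ← zpow_add]⟩

lemma cyc (H : Subgroup (FreeGroup α)) (hab : ∀ x ∈ H, ∀ y ∈ H, x * y = y * x) :
    ∃ h : FreeGroup α, (∀ x ∈ H, ∃ m : ℤ, x = h ^ m) ∧
      (h = 1 ∨ ∀ n : ℤ, h ^ n = 1 → n = 0) := by
  obtain ⟨ι, ⟨b⟩⟩ := (inferInstance : IsFreeGroup H).nonempty_basis
  set e := b.repr with he
  have habι : ∀ u v : FreeGroup ι, u * v = v * u := by
    intro u v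
    have h1 := hab _ (e.symm u).2 _ (e.symm v).2
    have h2 : e.symm u * e.symm v = e.symm v * e.symm u := Subtype.ext h1
    apply e.symm.injective
    rw [_root_.map_mul, _root_.map_mul, h2]
  haveI : Subsingleton ι := subsing habι
  obtain ⟨w, hw, htf⟩ := exists_gen (α := ι)
  refine ⟨(e.symm w : FreeGroup α), fun x hx => ?_, ?_⟩
  · obtain ⟨m, hm⟩ := hw (e ⟨x, hx⟩)
    refine ⟨m, ?_⟩
    have h3 : (⟨x, hx⟩ : H) = e.symm w ^ m := by
      apply e.injective
      rw [_root_.map_zpow, hm]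
      simp
    rw [show x = ((⟨x, hx⟩ : H) : FreeGroup α) from rfl, h3]
    simp
  · rcases htf with rfl | htf
    · left; simp
    · right
      intro n hn
      apply htf n
      have h4 : e.symm w ^ n = (1 : H) := by
        apply Subtype.ext
        simpa using hn
      have := congrArg e h4
      rwa [_root_.map_zpow, _root_.map_one, MulEquiv.apply_symm_apply] at this

lemma tf {x : FreeGroup α} {n : ℤ} (h : x ^ n = 1) : x = 1 ∨ n = 0 := by
  have hab : ∀ u ∈ Subgroup.zpowers x, ∀ v ∈ Subgroup.zpowers x, u * v = v * u := by
    intro u hu v hv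
    obtain ⟨k, hk⟩ := Subgroup.mem_zpowers_iff.mp hu
    obtain ⟨l, hl⟩ := Subgroup.mem_zpowers_iff.mp hv
    rw [← hk, ← hl, ← zpow_add, ← zpow_add, add_comm]
  obtain ⟨h₀, hpow, htf⟩ := cyc (Subgroup.zpowers x) hab
  obtain ⟨m, hm⟩ := hpow x (Subgroup.mem_zpowers x)
  rcases htf with rfl | htf
  · left; rw [hm, one_zpow]
  · rw [hm, ← zpow_mul] at h
    rcases mul_eq_zero.mp (htf _ h) with hm0 | hn0
    · left; rw [hm, hm0, zpow_zero]
    · right; exact hn0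

lemma ct {a x y : FreeGroup α} (ha : a ≠ 1) (hx : Commute a x) (hy : Commute a y) :
    Commute x y := by
  set C := Subgroup.centralizer ({a} : Set (FreeGroup α)) with hC
  have hmemC : ∀ g : FreeGroup α, Commute a g → g ∈ C := fun g hg =>
    Subgroup.mem_centralizer_iff.mpr (by rintro s rfl; exact hg.eq)
  have haC : a ∈ C := hmemC a (Commute.refl a)
  obtain ⟨ι, ⟨b⟩⟩ := (inferInstance : IsFreeGroup C).nonempty_basis
  set e := b.repr with he
  have hcent : ∀ u : FreeGroup ι, Commute (e ⟨a, haC⟩) u := by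
    intro u
    have h1 : a * ((e.symm u : C) : FreeGroup α) = ((e.symm u : C) : FreeGroup α) * a :=
      Subgroup.mem_centralizer_iff.mp (e.symm u).2 a rfl
    have h2 : (⟨a, haC⟩ : C) * e.symm u = e.symm u * ⟨a, haC⟩ := Subtype.ext h1
    have := congrArg e h2
    rwa [_root_.map_mul, _root_.map_mul, MulEquiv.apply_symm_apply] at this
  haveI : Subsingleton ι := by
    by_contra hss
    rw [not_subsingleton_iff_nontrivial] at hss
    obtain ⟨i, j, hij⟩ := exists_pair_ne ι
    obtain ⟨m, hm⟩ := commute_of_gen' ((hcent (FreeGroup.of i)).symm).symm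
    obtain ⟨m', hm'⟩ := commute_of_gen' ((hcent (FreeGroup.of j)).symm).symm
    have h5 : FreeGroup.of i ^ m = FreeGroup.of j ^ m' := by rw [← hm, ← hm']
    have h6 := (of_zpow_inj' hij h5).1
    have h7 : e ⟨a, haC⟩ = 1 := by rw [hm, h6, zpow_zero]
    have : (⟨a, haC⟩ : C) = 1 := e.injective (by rw [h7, _root_.map_one])
    exact ha (by simpa using congrArg Subtype.val this)
  obtain ⟨w, hw, _⟩ := exists_gen (α := ι)
  have habC : ∀ u v : C, u * v = v * u := by
    intro u v
    obtain ⟨m, hm⟩ := hw (e u)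
    obtain ⟨m', hm'⟩ := hw (e v)
    apply e.injective
    rw [_root_.map_mul, _root_.map_mul, hm, hm', ← zpow_add, ← zpow_add, add_comm]
  have := habC ⟨x, hmemC x hx⟩ ⟨y, hmemC y hy⟩
  exact congrArg Subtype.val this


lemma key (a b : FreeGroup α) (h : Commute a ⁅a, b⁆) : ⁅a, b⁆ = 1 := by
  by_contra hc
  have ha : a ≠ 1 := by
    rintro rfl
    exact hc (by simp [commutatorElement_def])
  have hb1 : b ≠ 1 := by
    rintro rfl
    exact hc (by simp [commutatorElement_def])
  -- a commutes with its conjugates by b and b⁻¹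
  have hcomm_e : Commute a (b * a * b⁻¹) := by
    have h1 : Commute a (a⁻¹ * ⁅a, b⁆) := (Commute.refl a).inv_right.mul_right h
    have h2 : a⁻¹ * ⁅a, b⁆ = (b * a * b⁻¹)⁻¹ := by
      rw [commutatorElement_def]; group
    rw [h2] at h1
    have h4 := h1.inv_right
    rwa [inv_inv] at h4
  have hcomm_e' : Commute a (b⁻¹ * a * b) := by
    have h3 := hcomm_e.map (MulAut.conj b⁻¹).toMonoidHom
    simp only [MulAut.conj_apply, MulEquiv.coe_toMonoidHom] at h3
    have e1 : b⁻¹ * (b * a * b⁻¹) * b⁻¹⁻¹ = a := by group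
    have e2 : b⁻¹ * a * b⁻¹⁻¹ = b⁻¹ * a * b := by group
    rw [e1, e2] at h3
    exact h3.symm
  set C := Subgroup.centralizer ({a} : Set (FreeGroup α)) with hCdef
  have hmemC : ∀ g : FreeGroup α, Commute a g → g ∈ C := fun g hg =>
    Subgroup.mem_centralizer_iff.mpr (by rintro s rfl; exact hg.eq)
  have hCcomm : ∀ g ∈ C, Commute a g := by
    intro g hg
    exact (Subgroup.mem_centralizer_iff.mp hg a rfl : a * g = g * a)
  have habC : ∀ x ∈ C, ∀ y ∈ C, x * y = y * x := fun x hx y hy =>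
    (ct ha (hCcomm x hx) (hCcomm y hy)).eq
  obtain ⟨h₀, hpowC, htfC⟩ := cyc C habC
  obtain ⟨p, hp⟩ := hpowC a (hmemC a (Commute.refl a))
  obtain ⟨q, hq⟩ := hpowC _ (hmemC _ hcomm_e)
  obtain ⟨r, hr⟩ := hpowC _ (hmemC _ hcomm_e')
  have hh0 : h₀ ≠ 1 := by
    rintro rfl
    exact ha (by rw [hp, one_zpow])
  have htf0 : ∀ n : ℤ, h₀ ^ n = 1 → n = 0 := htfC.resolve_left hh0
  have hp0 : p ≠ 0 := by
    intro h0
    exact ha (by rw [hp, h0, zpow_zero])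
  have hq0 : q ≠ 0 := by
    intro h0
    rw [h0, zpow_zero] at hq
    exact ha (by
      have : b * a * b⁻¹ = 1 := hq
      have := congrArg (fun t => b⁻¹ * t * b) this
      simpa [mul_assoc] using this)
  -- u := b h₀ b⁻¹ lies in C
  have hu_pow : (b * h₀ * b⁻¹) ^ p = h₀ ^ q := by
    have : (b * h₀ * b⁻¹) ^ p = b * h₀ ^ p * b⁻¹ := by
      rw [← MulAut.conj_apply b h₀, ← _root_.map_zpow, MulAut.conj_apply]
    rw [this, ← hp, ← hq]
  have hq1 : h₀ ^ q ≠ 1 := fun hh => hq0 (htf0 q hh)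
  have hu_comm : Commute (b * h₀ * b⁻¹) h₀ := by
    refine ct hq1 ?_ ?_
    · rw [← hu_pow]
      exact (Commute.refl _).zpow_left p
    · exact (Commute.refl h₀).zpow_left q
  have huC : b * h₀ * b⁻¹ ∈ C := hmemC _ (by
    rw [hp]
    exact (hu_comm.zpow_right p).symm)
  obtain ⟨s, hs⟩ := hpowC _ huC
  -- u' := b⁻¹ h₀ b lies in C
  have hr0 : r ≠ 0 := by
    intro h0
    rw [h0, zpow_zero] at hr
    exact ha (by
      have : b⁻¹ * a * b = 1 := hr
      have := congrArg (fun t => b * t * b⁻¹) this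
      simpa [mul_assoc] using this)
  have hu'_pow : (b⁻¹ * h₀ * b) ^ p = h₀ ^ r := by
    have : (b⁻¹ * h₀ * b) ^ p = b⁻¹ * h₀ ^ p * b := by
      have := (MulAut.conj b⁻¹).toMonoidHom.map_zpow h₀ p
      simp only [MulEquiv.coe_toMonoidHom, MulAut.conj_apply, inv_inv] at this
      rw [← this]
    rw [this, ← hp, ← hr]
  have hr1 : h₀ ^ r ≠ 1 := fun hh => hr0 (htf0 r hh)
  have hu'_comm : Commute (b⁻¹ * h₀ * b) h₀ := by
    refine ct hr1 ?_ ?_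
    · rw [← hu'_pow]
      exact (Commute.refl _).zpow_left p
    · exact (Commute.refl h₀).zpow_left r
  have hu'C : b⁻¹ * h₀ * b ∈ C := hmemC _ (by
    rw [hp]
    exact (hu'_comm.zpow_right p).symm)
  obtain ⟨t, ht⟩ := hpowC _ hu'C
  -- h₀ = (b⁻¹ * (b*h₀*b⁻¹) * b) = (h₀^t)^s
  have hts : h₀ ^ (t * s) = h₀ := by
    have e3 : b⁻¹ * (b * h₀ * b⁻¹) * b = h₀ := by group
    calc h₀ ^ (t * s) = (h₀ ^ t) ^ s := by rw [zpow_mul]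
    _ = (b⁻¹ * h₀ * b) ^ s := by rw [← ht]
    _ = b⁻¹ * h₀ ^ s * b := by
        have := (MulAut.conj b⁻¹).toMonoidHom.map_zpow h₀ s
        simp only [MulEquiv.coe_toMonoidHom, MulAut.conj_apply, inv_inv] at this
        rw [← this]
    _ = b⁻¹ * (b * h₀ * b⁻¹) * b := by rw [← hs]
    _ = h₀ := e3
  have hts1 : t * s = 1 := by
    have h5 : h₀ ^ (t * s - 1) = 1 := by
      rw [zpow_sub, hts, zpow_one, mul_inv_cancel]
    have := htf0 _ h5
    omega
  have hs1 : s = 1 ∨ s = -1 := by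
    rcases Int.isUnit_iff.mp (IsUnit.of_mul_eq_one (a := s) t (by rw [mul_comm]; exact hts1)) with h | h
    · exact Or.inl h
    · exact Or.inr h
  rcases hs1 with rfl | rfl
  · -- b commutes with h₀, hence with a
    rw [zpow_one] at hs
    have hbh : Commute b h₀ := by
      have : b * h₀ = h₀ * b := by
        have := congrArg (fun t => t * b) hs
        simpa [mul_assoc] using this
      exact this
    have : Commute a b := by
      rw [hp]
      exact (hbh.zpow_right p).symm
    exact hc (commutatorElement_eq_one_iff_commute.mpr this)
  · -- b h₀ b⁻¹ = h₀⁻¹ ; then b² commutes with h₀, forcing b = 1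
    rw [zpow_neg, zpow_one] at hs
    have hb2 : Commute (b * b) h₀ := by
      have e4 : (b * b) * h₀ * (b * b)⁻¹ = b * (b * h₀ * b⁻¹) * b⁻¹ := by group
      have e5 : (b * b) * h₀ * (b * b)⁻¹ = h₀ := by
        rw [e4, hs]
        have : b * h₀⁻¹ * b⁻¹ = (b * h₀ * b⁻¹)⁻¹ := by group
        rw [this, hs, inv_inv]
      have h6 := congrArg (fun t => t * (b * b)) e5
      beta_reduce at h6
      rw [inv_mul_cancel_right] at h6
      exact h6
    have hb2C : b * b ∈ C := hmemC _ (by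
      rw [hp]
      exact (hb2.zpow_right p).symm)
    obtain ⟨g, hg⟩ := hpowC _ hb2C
    have hgg : h₀ ^ (-g) = h₀ ^ g := by
      have e6 : b * (b * b) * b⁻¹ = b * b := by group
      have e7 : b * h₀ ^ g * b⁻¹ = (b * h₀ * b⁻¹) ^ g := by
        have := (MulAut.conj b).toMonoidHom.map_zpow h₀ g
        simp only [MulEquiv.coe_toMonoidHom, MulAut.conj_apply] at this
        rw [this]
      calc h₀ ^ (-g) = (h₀⁻¹) ^ g := by rw [zpow_neg, inv_zpow]
      _ = (b * h₀ * b⁻¹) ^ g := by rw [hs]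
      _ = b * h₀ ^ g * b⁻¹ := e7.symm
      _ = b * (b * b) * b⁻¹ := by rw [← hg]
      _ = b * b := e6
      _ = h₀ ^ g := hg
    have hg0 : g = 0 := by
      have h8 : h₀ ^ (g + g) = 1 := by
        rw [zpow_add]
        nth_rewrite 2 [← hgg]
        rw [← zpow_add, add_neg_cancel, zpow_zero]
      have := htf0 _ h8
      omega
    have hbb1 : b * b = 1 := by rw [hg, hg0, zpow_zero]
    have : b = 1 := by
      have h9 : b ^ (2 : ℤ) = 1 := by
        rw [show (2 : ℤ) = 1 + 1 by norm_num, zpow_add, zpow_one]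
        exact hbb1
      rcases tf h9 with h | h
      · exact h
      · omega
    exact hb1 this

end RFaux

/-- In a residually free group, the centralizer of the commutator subgroup is the centre. -/
theorem centralizer_commutator_eq_center (G : Type*) [Group G]
    (hRF : ∀ g : G, g ≠ 1 → ∃ f : G →* FreeGroup (Fin 2), f g ≠ 1) :
    Subgroup.centralizer ((commutator G : Subgroup G) : Set G) = Subgroup.center G := by
  apply _root_.le_antisymm
  · intro z hz
    rw [Subgroup.mem_center_iff]
    intro g
    have hmem : ⁅z, g⁆ ∈ commutator G := by
      rw [commutator_def]
      exact Subgroup.commutator_mem_commutator (Subgroup.mem_top z) (Subgroup.mem_top g)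
    have hcom : Commute z ⁅z, g⁆ :=
      (Subgroup.mem_centralizer_iff.mp hz ⁅z, g⁆ hmem).symm
    have hone : ⁅z, g⁆ = 1 := by
      by_contra hne
      obtain ⟨f, hf⟩ := hRF _ hne
      apply hf
      have hmapc : f ⁅z, g⁆ = ⁅f z, f g⁆ := map_commutatorElement f z g
      rw [hmapc]
      exact RFaux.key (f z) (f g) (by rw [← hmapc]; exact hcom.map f)
    exact (commutatorElement_eq_one_iff_commute.mp hone).symm.eq
  · exact Subgroup.center_le_centralizer _
end

section
/- If A is a non-trivial group and B is a group containing non-trivial elements b1, b2 such that every homomorphism from B to a free group kills b1 or b2, then the free product A * B is not residually free. -/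
open Monoid
open scoped commutatorElement

section NeWordProd
variable {ι : Type*} {M : ι → Type*} [∀ i, Group (M i)]

theorem my_neword_prod_ne_one {i j : ι} (w : CoprodI.NeWord M i j) : w.prod ≠ 1 := by
  classical
  intro h
  have h1 : w.toWord.prod = CoprodI.Word.empty.prod := by
    rw [CoprodI.Word.prod_empty]; exact h
  have : w.toWord = CoprodI.Word.empty := by
    have hinj : Function.Injective (CoprodI.Word.prod (M := M)) :=
      (CoprodI.Word.equiv (M := M)).symm.injective
    exact hinj h1
  exact w.toList_ne_nil (congrArg CoprodI.Word.toList this)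

end NeWordProd

section Comm
variable {M : Bool → Type*} [∀ i, Group (M i)]

theorem my_comm_ne_one (x : M true) (y z : M false) (hx : x ≠ 1) (hy : y ≠ 1) (hz : z ≠ 1) :
    ⁅(CoprodI.of y : CoprodI M), ⁅(CoprodI.of z : CoprodI M), CoprodI.of x⁆⁆ ≠ 1 := by
  -- ⁅p,q⁆ = p q p⁻¹ q⁻¹ with p = of y, q = of z * of x * of z ⁻¹ * of x ⁻¹
  -- = y z x z⁻¹ x⁻¹ y⁻¹ x z x⁻¹ z⁻¹
  by_cases hyz : y * z = 1
  · -- y = z⁻¹, word = x z⁻¹ x⁻¹ y⁻¹ x z x⁻¹ z⁻¹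
    have hzinv : z⁻¹ ≠ 1 := inv_ne_one.mpr hz
    have hxinv : x⁻¹ ≠ 1 := inv_ne_one.mpr hx
    have hyinv : y⁻¹ ≠ 1 := inv_ne_one.mpr hy
    let s₁ : CoprodI.NeWord M true true := .singleton x hx
    let s₂ : CoprodI.NeWord M false false := .singleton z⁻¹ hzinv
    let s₃ : CoprodI.NeWord M true true := .singleton x⁻¹ hxinv
    let s₄ : CoprodI.NeWord M false false := .singleton y⁻¹ hyinv
    let s₅ : CoprodI.NeWord M true true := .singleton x hx
    let s₆ : CoprodI.NeWord M false false := .singleton z hz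
    let s₇ : CoprodI.NeWord M true true := .singleton x⁻¹ hxinv
    let s₈ : CoprodI.NeWord M false false := .singleton z⁻¹ hzinv
    let w : CoprodI.NeWord M true false :=
      .append s₁ (by decide) (.append s₂ (by decide) (.append s₃ (by decide)
        (.append s₄ (by decide) (.append s₅ (by decide) (.append s₆ (by decide)
          (.append s₇ (by decide) s₈))))))
    have hw : ⁅(CoprodI.of y : CoprodI M), ⁅(CoprodI.of z : CoprodI M), CoprodI.of x⁆⁆ = w.prod := by
      have hy' : y = z⁻¹ := eq_inv_of_mul_eq_one_left hyz
      simp only [w, s₁, s₂, s₃, s₄, s₅, s₆, s₇, s₈, CoprodI.NeWord.append_prod,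
        CoprodI.NeWord.prod_singleton, commutatorElement_def, map_inv, hy']
      group
    rw [hw]
    exact my_neword_prod_ne_one w
  · have hzinv : z⁻¹ ≠ 1 := inv_ne_one.mpr hz
    have hxinv : x⁻¹ ≠ 1 := inv_ne_one.mpr hx
    have hyinv : y⁻¹ ≠ 1 := inv_ne_one.mpr hy
    let s₀ : CoprodI.NeWord M false false := .singleton (y * z) hyz
    let s₁ : CoprodI.NeWord M true true := .singleton x hx
    let s₂ : CoprodI.NeWord M false false := .singleton z⁻¹ hzinv
    let s₃ : CoprodI.NeWord M true true := .singleton x⁻¹ hxinv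
    let s₄ : CoprodI.NeWord M false false := .singleton y⁻¹ hyinv
    let s₅ : CoprodI.NeWord M true true := .singleton x hx
    let s₆ : CoprodI.NeWord M false false := .singleton z hz
    let s₇ : CoprodI.NeWord M true true := .singleton x⁻¹ hxinv
    let s₈ : CoprodI.NeWord M false false := .singleton z⁻¹ hzinv
    let w : CoprodI.NeWord M false false :=
      .append s₀ (by decide) (.append s₁ (by decide) (.append s₂ (by decide) (.append s₃ (by decide)
        (.append s₄ (by decide) (.append s₅ (by decide) (.append s₆ (by decide)
          (.append s₇ (by decide) s₈)))))))
    have hw : ⁅(CoprodI.of y : CoprodI M), ⁅(CoprodI.of z : CoprodI M), CoprodI.of x⁆⁆ = w.prod := by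
      simp only [w, s₀, s₁, s₂, s₃, s₄, s₅, s₆, s₇, s₈, CoprodI.NeWord.append_prod,
        CoprodI.NeWord.prod_singleton, commutatorElement_def, map_inv, map_mul]
      group
    rw [hw]
    exact my_neword_prod_ne_one w

end Comm

section Aux
universe u v
variable (A : Type u) (B : Type v) [Group A] [Group B]

abbrev MyFam : Bool → Type (max u v) := fun b => cond b (ULift.{v} A) (ULift.{u} B)

instance : ∀ b, Group (MyFam A B b)
  | true => (inferInstance : Group (ULift A))
  | false => (inferInstance : Group (ULift B))

theorem my_xi_ne_one (a : A) (ha : a ≠ 1) (b₁ b₂ : B) (hb₁ : b₁ ≠ 1) (hb₂ : b₂ ≠ 1) :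
    ⁅(Coprod.inr b₁ : Coprod A B), ⁅(Coprod.inr b₂ : Coprod A B), (Coprod.inl a : Coprod A B)⁆⁆ ≠ 1 := by
  let ψ : Coprod A B →* CoprodI (MyFam A B) :=
    Coprod.lift
      ((CoprodI.of (i := true)).comp (MulEquiv.ulift.symm.toMonoidHom : A →* ULift A))
      ((CoprodI.of (i := false)).comp (MulEquiv.ulift.symm.toMonoidHom : B →* ULift B))
  intro h
  have hψ : ψ ⁅(Coprod.inr b₁ : Coprod A B), ⁅(Coprod.inr b₂ : Coprod A B), (Coprod.inl a : Coprod A B)⁆⁆ = 1 := by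
    rw [h, map_one]
  rw [map_commutatorElement, map_commutatorElement] at hψ
  simp only [ψ, Coprod.lift_apply_inl, Coprod.lift_apply_inr, MonoidHom.comp_apply] at hψ
  refine my_comm_ne_one (M := MyFam A B)
    (MulEquiv.ulift.symm a) (MulEquiv.ulift.symm b₁) (MulEquiv.ulift.symm b₂) ?_ ?_ ?_ hψ
  · simpa using ha
  · simpa using hb₁
  · simpa using hb₂

end Aux

/-- If `A` is non-trivial and `B` has two non-trivial elements `b₁, b₂` such that
every homomorphism from `B` to a free group kills `b₁` or `b₂`, then the free
product `A ∗ B` is not residually free. -/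
theorem free_product_not_residually_free (A B : Type*) [Group A] [Group B]
    (a : A) (ha : a ≠ 1) (b₁ b₂ : B) (hb₁ : b₁ ≠ 1) (hb₂ : b₂ ≠ 1)
    (hkill : ∀ (α : Type) (f : B →* FreeGroup α), f b₁ = 1 ∨ f b₂ = 1) :
    ¬ ∀ g : Monoid.Coprod A B, g ≠ 1 →
        ∃ (α : Type) (f : Monoid.Coprod A B →* FreeGroup α), f g ≠ 1 := by
  intro h
  obtain ⟨α, f, hf⟩ := h ⁅(Coprod.inr b₁ : Coprod A B), ⁅(Coprod.inr b₂ : Coprod A B), (Coprod.inl a : Coprod A B)⁆⁆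
    (my_xi_ne_one A B a ha b₁ b₂ hb₁ hb₂)
  apply hf
  rw [map_commutatorElement, map_commutatorElement]
  rcases hkill α (f.comp Coprod.inr) with hk | hk
  · rw [show f (Coprod.inr b₁) = 1 from hk, commutatorElement_one_left]
  · rw [show f (Coprod.inr b₂) = 1 from hk, commutatorElement_one_left,
      commutatorElement_one_right]
end

section
/- Let G = A *_C B be an amalgamated free product over an abelian subgroup C, and suppose G is residually free and A is non-abelian. Then the intersection of the centre of A with C is contained in the normal core of C in B (the intersection of all B-conjugates of C). -/
open Monoid PushoutI

open Subgroup

open scoped commutatorElement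

section FreeGroupFacts

variable {α : Type*}

/-- The exponent-sum homomorphism on a given generator. -/
noncomputable def expHom (s : α) : FreeGroup α →* Multiplicative ℤ := by
  classical
  exact FreeGroup.lift (fun x => Multiplicative.ofAdd (if x = s then (1 : ℤ) else 0))

theorem expHom_of_self (s : α) : expHom s (FreeGroup.of s) = Multiplicative.ofAdd (1 : ℤ) := by
  classical
  simp [expHom]

theorem expHom_of_ne {s t : α} (h : t ≠ s) :
    expHom s (FreeGroup.of t) = 1 := by
  classical
  simp [expHom, h]

private theorem swap_not_commute :
    ¬ Commute (Equiv.swap (0 : Fin 3) 1) (Equiv.swap (1 : Fin 3) 2) :=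
  fun hc => absurd hc.eq (by decide)

theorem not_commute_of {s t : α} (h : s ≠ t) :
    ¬ Commute (FreeGroup.of s) (FreeGroup.of t) := by
  classical
  intro hc
  have hmap := hc.map (FreeGroup.lift (fun x =>
    if x = s then (Equiv.swap (0 : Fin 3) 1) else if x = t then Equiv.swap (1 : Fin 3) 2 else 1))
  rw [FreeGroup.lift_apply_of, FreeGroup.lift_apply_of, if_pos rfl, if_neg (Ne.symm h), if_pos rfl] at hmap
  exact absurd hmap swap_not_commute

theorem freeGroup_eq_one_of_isEmpty_s13 [IsEmpty α] (x : FreeGroup α) : x = 1 := by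
  refine FreeGroup.induction_on x rfl (fun t => isEmptyElim t) (fun t _ => isEmptyElim t) ?_
  intro a b ha hb
  rw [ha, hb, one_mul]

theorem freeGroup_exists_zpow_of_subsingleton [Subsingleton α] (t : α) (x : FreeGroup α) :
    ∃ n : ℤ, x = FreeGroup.of t ^ n := by
  refine FreeGroup.induction_on x ⟨0, rfl⟩ (fun s => ⟨1, ?_⟩) (fun s hs => ?_) ?_
  · rw [Subsingleton.elim s t, zpow_one]
  · obtain ⟨n, hn⟩ := hs
    exact ⟨-n, by rw [hn, zpow_neg]⟩
  · rintro a b ⟨n, hn⟩ ⟨m, hm⟩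
    exact ⟨n + m, by rw [hn, hm, zpow_add]⟩

theorem freeGroup_commute_of_subsingleton [Subsingleton α] (x y : FreeGroup α) :
    Commute x y := by
  rcases isEmpty_or_nonempty α with h | ⟨⟨t⟩⟩
  · rw [freeGroup_eq_one_of_isEmpty_s13 x]; exact Commute.one_left y
  · obtain ⟨n, hn⟩ := freeGroup_exists_zpow_of_subsingleton t x
    obtain ⟨m, hm⟩ := freeGroup_exists_zpow_of_subsingleton t y
    rw [hn, hm]
    exact (Commute.refl _).zpow_zpow n m

end FreeGroupFacts

section IsFreeGroupFacts

variable {G : Type*} [Group G]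

theorem isFreeGroup_comm_of_subsingleton [IsFreeGroup G]
    (hs : Subsingleton (IsFreeGroup.Generators G)) (x y : G) : Commute x y := by
  let e := IsFreeGroup.toFreeGroup G
  have h := freeGroup_commute_of_subsingleton (e x) (e y)
  have := h.map e.symm.toMonoidHom
  simpa using this

theorem subsingleton_generators_of_comm [IsFreeGroup G]
    (h : ∀ x y : G, Commute x y) : Subsingleton (IsFreeGroup.Generators G) := by
  constructor
  intro s t
  by_contra hst
  refine not_commute_of hst ?_
  let e := IsFreeGroup.toFreeGroup G
  have := (h (e.symm (FreeGroup.of s)) (e.symm (FreeGroup.of t))).map e.toMonoidHom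
  simpa using this

/-- A free group in which all elements commute is cyclic. -/
theorem isFreeGroup_cyclic_of_comm [IsFreeGroup G]
    (h : ∀ x y : G, Commute x y) : ∃ u : G, ∀ g : G, ∃ n : ℤ, g = u ^ n := by
  have hs := subsingleton_generators_of_comm h
  let e := IsFreeGroup.toFreeGroup G
  rcases isEmpty_or_nonempty (IsFreeGroup.Generators G) with hemp | ⟨⟨t⟩⟩
  · refine ⟨1, fun g => ⟨0, ?_⟩⟩
    have : e g = 1 := freeGroup_eq_one_of_isEmpty_s13 _
    have := congrArg e.symm this
    simpa using this
  · refine ⟨e.symm (FreeGroup.of t), fun g => ?_⟩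
    obtain ⟨n, hn⟩ := freeGroup_exists_zpow_of_subsingleton t (e g)
    refine ⟨n, ?_⟩
    have := congrArg e.symm hn
    simpa using this

theorem commute_of_mem_closure_pair {a b : G} (hab : Commute a b)
    {x y : G} (hx : x ∈ closure ({a, b} : Set G)) (hy : y ∈ closure ({a, b} : Set G)) :
    Commute x y := by
  induction hx, hy using closure_induction₂ with
  | mem x y hx hy =>
    rcases hx with rfl | rfl <;> rcases hy with rfl | rfl
    · exact Commute.refl _
    · exact hab
    · exact hab.symm
    · exact Commute.refl _
  | one_left x hx => exact Commute.one_left x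
  | one_right x hx => exact Commute.one_right x
  | mul_left x y z _ _ _ h1 h2 => exact h1.mul_left h2
  | mul_right y z x _ _ _ h1 h2 => exact h1.mul_right h2
  | inv_left x y _ _ h1 => exact h1.inv_left
  | inv_right x y _ _ h1 => exact h1.inv_right

/-- Two commuting elements of a free group are powers of a common element
lying in the subgroup they generate. -/
theorem commute_exists_root [IsFreeGroup G] {a b : G} (hab : Commute a b) :
    ∃ w ∈ closure ({a, b} : Set G), ∃ m n : ℤ, a = w ^ m ∧ b = w ^ n := by
  set H := closure ({a, b} : Set G) with hH
  have haH : a ∈ H := subset_closure (by simp)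
  have hbH : b ∈ H := subset_closure (by simp)
  have hcomm : ∀ x y : H, Commute x y := by
    rintro ⟨x, hx⟩ ⟨y, hy⟩
    have := commute_of_mem_closure_pair hab hx hy
    exact Subtype.ext this
  obtain ⟨u, hu⟩ := isFreeGroup_cyclic_of_comm hcomm
  obtain ⟨m, hm⟩ := hu ⟨a, haH⟩
  obtain ⟨n, hn⟩ := hu ⟨b, hbH⟩
  refine ⟨(u : G), u.2, m, n, ?_, ?_⟩
  · simpa using congrArg (Subtype.val) hm
  · simpa using congrArg (Subtype.val) hn

end IsFreeGroupFacts

section CT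

variable {α : Type*}

/-- An element commuting with a generator of a free group is a power of that generator. -/
theorem eq_zpow_of_commute_of {z : FreeGroup α} {s : α}
    (h : Commute z (FreeGroup.of s)) : ∃ n : ℤ, z = FreeGroup.of s ^ n := by
  obtain ⟨w, hw, m, k, hz, hs⟩ := commute_exists_root h
  have hχ : expHom s (FreeGroup.of s) = Multiplicative.ofAdd (1 : ℤ) := expHom_of_self s
  rw [hs, map_zpow] at hχ
  have h1 : k * Multiplicative.toAdd (expHom s w) = 1 := by
    have := congrArg Multiplicative.toAdd hχ
    simpa [toAdd_zpow] using this
  rcases Int.eq_one_or_neg_one_of_mul_eq_one' h1 with ⟨hk, _⟩ | ⟨hk, _⟩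
  · subst hk
    rw [zpow_one] at hs
    exact ⟨m, by rw [hz, hs]⟩
  · subst hk
    have hw' : w = (FreeGroup.of s)⁻¹ := by
      rw [hs]; group
    exact ⟨-m, by rw [hz, hw', inv_zpow, ← zpow_neg]⟩

/-- A free group with a nontrivial central element is commutative. -/
theorem isFreeGroup_comm_of_center {G : Type*} [Group G] [IsFreeGroup G] {z : G}
    (hz : z ≠ 1) (hcen : ∀ g : G, Commute z g) (x y : G) : Commute x y := by
  refine isFreeGroup_comm_of_subsingleton ?_ x y
  constructor
  intro s t
  by_contra hst
  let e := IsFreeGroup.toFreeGroup G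
  have hz' : e z ≠ 1 := by
    intro h
    exact hz (by simpa using congrArg e.symm h)
  have hcs : Commute (e z) (FreeGroup.of s) := by
    have := (hcen (e.symm (FreeGroup.of s))).map e.toMonoidHom
    simpa using this
  have hct : Commute (e z) (FreeGroup.of t) := by
    have := (hcen (e.symm (FreeGroup.of t))).map e.toMonoidHom
    simpa using this
  obtain ⟨n, hn⟩ := eq_zpow_of_commute_of hcs
  obtain ⟨p, hp⟩ := eq_zpow_of_commute_of hct
  have h1 : expHom s (e z) = Multiplicative.ofAdd n := by
    rw [hn, map_zpow, expHom_of_self, ← ofAdd_zsmul]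
    simp
  have h2 : expHom s (e z) = 1 := by
    rw [hp, map_zpow, expHom_of_ne (Ne.symm hst), one_zpow]
  rw [h1] at h2
  have hn0 : n = 0 := by simpa using congrArg Multiplicative.toAdd h2
  rw [hn0, zpow_zero] at hn
  exact hz' hn

/-- Commutative transitivity of free groups. -/
theorem freeGroup_commute_trans {G : Type*} [Group G] [IsFreeGroup G] {a b c : G}
    (hc : c ≠ 1) (hac : Commute a c) (hbc : Commute b c) : Commute a b := by
  set M := closure ({a, b, c} : Set G) with hM
  have haM : a ∈ M := subset_closure (by simp)
  have hbM : b ∈ M := subset_closure (by simp)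
  have hcM : c ∈ M := subset_closure (by simp)
  have hcen : ∀ g ∈ M, Commute c g := by
    intro g hg
    induction hg using closure_induction with
    | mem g hg =>
      rcases hg with rfl | rfl | rfl
      · exact hac.symm
      · exact hbc.symm
      · exact Commute.refl _
    | one => exact Commute.one_right c
    | mul x y _ _ h1 h2 => exact h1.mul_right h2
    | inv x _ h1 => exact h1.inv_right
  have hzne : (⟨c, hcM⟩ : M) ≠ 1 := by
    intro h
    exact hc (by simpa using congrArg Subtype.val h)
  have hcenM : ∀ g : M, Commute (⟨c, hcM⟩ : M) g := by
    rintro ⟨g, hg⟩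
    exact Subtype.ext (hcen g hg)
  have := isFreeGroup_comm_of_center hzne hcenM ⟨a, haM⟩ ⟨b, hbM⟩
  exact congrArg Subtype.val this

end CT

section Malnormal

/-- In a free group, an element commuting with a conjugate of itself commutes with
the conjugating element. -/
theorem freeGroup_malnormal {G : Type*} [Group G] [IsFreeGroup G] {z g : G}
    (hz : z ≠ 1) (h : Commute z (g * z * g⁻¹)) : Commute g z := by
  obtain ⟨w, hwmem, m, n, hzw, hcw⟩ := commute_exists_root h
  by_cases hmn : m = n
  · subst hmn
    rw [← hzw] at hcw
    have : g * z = z * g := by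
      have := congrArg (· * g) hcw
      simpa [mul_assoc] using this
    exact this
  · set H := closure ({z, g} : Set G) with hH
    have hzH : z ∈ H := subset_closure (by simp)
    have hgH : g ∈ H := subset_closure (by simp)
    have hwH : w ∈ H := by
      refine (closure_le H).mpr ?_ hwmem
      rintro u (rfl | rfl)
      · exact hzH
      · exact mul_mem (mul_mem hgH hzH) (inv_mem hgH)
    set zH : H := ⟨z, hzH⟩ with hzHdef
    set gH : H := ⟨g, hgH⟩ with hgHdef
    set wH : H := ⟨w, hwH⟩ with hwHdef
    have e1 : zH = wH ^ m := Subtype.ext (by simpa using hzw)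
    have e2 : gH * zH * gH⁻¹ = wH ^ n := Subtype.ext (by simpa using hcw)
    have hkill : ∀ ψ : H →* Multiplicative ℤ, ψ zH = 1 := by
      intro ψ
      have hconj : ψ (gH * zH * gH⁻¹) = ψ zH := by
        rw [map_mul, map_mul, map_inv, mul_comm (ψ gH) (ψ zH), mul_inv_cancel_right]
      have heq : ψ wH ^ m = ψ wH ^ n := by
        rw [← map_zpow, ← map_zpow, ← e1, ← e2, hconj]
      have hv : Multiplicative.toAdd (ψ wH) = 0 := by
        have h' := congrArg Multiplicative.toAdd heq
        simp only [toAdd_zpow, zsmul_eq_mul, Int.cast_id] at h'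
        have : (m - n) * Multiplicative.toAdd (ψ wH) = 0 := by
          rw [sub_mul, h']
          ring
        rcases mul_eq_zero.mp this with h0 | h0
        · exact absurd (by omega : m = n) hmn
        · exact h0
      have hw1 : ψ wH = 1 := by
        have : Multiplicative.ofAdd (Multiplicative.toAdd (ψ wH)) = Multiplicative.ofAdd 0 :=
          congrArg _ hv
        simpa using this
      rw [e1, map_zpow, hw1, one_zpow]
    have hcommH : ∀ x y : H, Commute x y := by
      refine isFreeGroup_comm_of_subsingleton ?_
      constructor
      intro s t
      by_contra hst
      set e := IsFreeGroup.toFreeGroup ↥H with he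
      set Z := e zH with hZ
      set Γ := e gH with hΓ
      have hZs : expHom s Z = 1 := hkill ((expHom s).comp e.toMonoidHom)
      have hZt : expHom t Z = 1 := hkill ((expHom t).comp e.toMonoidHom)
      -- every element of the free group lies in the closure of {Z, Γ}
      have hpre : ((H.subtype) ⁻¹' ({z, g} : Set G)) = ({zH, gH} : Set H) := by
        ext u
        simp [Set.mem_preimage, Subtype.ext_iff, hzHdef, hgHdef]
      have htopH : closure ({zH, gH} : Set H) = ⊤ := by
        rw [← hpre]
        exact closure_preimage_eq_top ({z, g} : Set G)
      have htop : ∀ ξ : FreeGroup (IsFreeGroup.Generators ↥H),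
          ξ ∈ closure ({Z, Γ} : Set (FreeGroup (IsFreeGroup.Generators ↥H))) := by
        intro ξ
        have h1 : e.symm ξ ∈ closure ({zH, gH} : Set H) := by rw [htopH]; trivial
        have h2 : ξ ∈ Subgroup.map e.toMonoidHom (closure ({zH, gH} : Set H)) :=
          ⟨e.symm ξ, h1, by simp⟩
        rwa [MonoidHom.map_closure, Set.image_insert_eq, Set.image_singleton] at h2
      set Φ := (expHom s).prod (expHom t) with hΦ
      have hΦZ : Φ Z = 1 := by
        rw [hΦ, MonoidHom.prod_apply, hZs, hZt]
        rfl
      have himg : ∀ ξ : FreeGroup (IsFreeGroup.Generators ↥H),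
          Φ ξ ∈ Subgroup.closure ({Φ Γ} : Set (Multiplicative ℤ × Multiplicative ℤ)) := by
        intro ξ
        have h2 : Φ ξ ∈ Subgroup.map Φ (closure ({Z, Γ} : Set _)) :=
          ⟨ξ, htop ξ, rfl⟩
        rw [MonoidHom.map_closure, Set.image_insert_eq, Set.image_singleton, hΦZ] at h2
        have hle : Subgroup.closure ({(1 : Multiplicative ℤ × Multiplicative ℤ), Φ Γ} : Set _) ≤
            Subgroup.closure ({Φ Γ} : Set _) := by
          rw [closure_le]
          rintro u (rfl | rfl)
          · exact one_mem _
          · exact subset_closure rfl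
        exact hle h2
      obtain ⟨k, hk⟩ := mem_closure_singleton.mp (himg (FreeGroup.of s))
      obtain ⟨l, hl⟩ := mem_closure_singleton.mp (himg (FreeGroup.of t))
      have hks : Φ (FreeGroup.of s) = (Multiplicative.ofAdd (1 : ℤ), 1) := by
        rw [hΦ, MonoidHom.prod_apply, expHom_of_self, expHom_of_ne hst]
      have hkt : Φ (FreeGroup.of t) = (1, Multiplicative.ofAdd (1 : ℤ)) := by
        rw [hΦ, MonoidHom.prod_apply, expHom_of_self, expHom_of_ne (Ne.symm hst)]
      rw [hks] at hk
      rw [hkt] at hl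
      set a := Multiplicative.toAdd (Φ Γ).1 with ha
      set b := Multiplicative.toAdd (Φ Γ).2 with hb
      have hk1 : k * a = 1 := by
        have := congrArg (fun p => Multiplicative.toAdd p.1) hk
        simpa [toAdd_zpow, zsmul_eq_mul] using this
      have hk2 : k * b = 0 := by
        have := congrArg (fun p => Multiplicative.toAdd p.2) hk
        simpa [toAdd_zpow, zsmul_eq_mul, hb] using this
      have hl2 : l * b = 1 := by
        have := congrArg (fun p => Multiplicative.toAdd p.2) hl
        simpa [toAdd_zpow, zsmul_eq_mul] using this
      have hb0 : b = 0 := by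
        rcases Int.eq_one_or_neg_one_of_mul_eq_one' hk1 with ⟨hk', _⟩ | ⟨hk', _⟩ <;>
          · subst hk'; omega
      rw [hb0, mul_zero] at hl2
      exact absurd hl2 (by norm_num)
    have := hcommH gH zH
    simpa [Commute, SemiconjBy, Subtype.ext_iff, hzHdef, hgHdef] using this

end Malnormal

section Commutator

theorem freeGroup_commute_of_commutator_commute {G : Type*} [Group G] [IsFreeGroup G] {u v : G}
    (h : Commute ⁅u, v⁆ ⁅u * u, v⁆) : Commute u v := by
  by_contra hc
  have ht : ⁅u, v⁆ ≠ 1 := fun h1 => hc (commutatorElement_eq_one_iff_commute.mp h1)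
  have hid : ⁅u * u, v⁆ = u * ⁅u, v⁆ * u⁻¹ * ⁅u, v⁆ := by
    simp only [commutatorElement_def]
    group
  rw [hid] at h
  have h2 : Commute ⁅u, v⁆ (u * ⁅u, v⁆ * u⁻¹) := by
    have h3 := h.mul_right (Commute.refl ⁅u, v⁆).inv_right
    rwa [mul_inv_cancel_right] at h3
  have h4 := freeGroup_malnormal ht h2
  have hdec : ⁅u, v⁆ = u * (v * u⁻¹ * v⁻¹) := by
    simp only [commutatorElement_def]
    group
  rw [hdec] at h4
  have h6 := ((Commute.refl u).inv_right).mul_right h4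
  rw [inv_mul_cancel_left] at h6
  have h7 : Commute u (v * u * v⁻¹) := by
    have h8 := h6.inv_right
    have h9 : (v * u⁻¹ * v⁻¹)⁻¹ = v * u * v⁻¹ := by group
    rwa [h9] at h8
  have hu1 : u ≠ 1 := fun h1 => hc (h1 ▸ Commute.one_left v)
  exact hc (freeGroup_malnormal hu1 h7).symm

end Commutator

section Words

open Monoid PushoutI

theorem pushout_four_ne_one {C : Type*} [CommGroup C] {K : Bool → Type*} [∀ i, Group (K i)]
    (φ : ∀ i, C →* K i) (hinj : ∀ i, Function.Injective (φ i))
    {a1 a2 : K false} {b1 b2 : K true}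
    (ha1 : a1 ∉ (φ false).range) (hb1 : b1 ∉ (φ true).range)
    (ha2 : a2 ∉ (φ false).range) (hb2 : b2 ∉ (φ true).range) :
    of (φ := φ) false a1 * of (φ := φ) true b1 * of (φ := φ) false a2 *
      of (φ := φ) true b2 ≠ 1 := by
  intro heq
  have hne : ∀ (i : Bool) (x : K i), x ∉ (φ i).range → x ≠ 1 := fun i x hx h1 =>
    hx (h1 ▸ one_mem _)
  let w : CoprodI.Word K :=
    { toList := [⟨false, a1⟩, ⟨true, b1⟩, ⟨false, a2⟩, ⟨true, b2⟩]
      ne_one := by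
        intro l hl
        simp only [List.mem_cons, List.not_mem_nil, or_false] at hl
        rcases hl with rfl | rfl | rfl | rfl
        · exact hne false a1 ha1
        · exact hne true b1 hb1
        · exact hne false a2 ha2
        · exact hne true b2 hb2
      chain_ne := by
        refine List.IsChain.cons_cons (by simp) (List.IsChain.cons_cons (by simp)
          (List.IsChain.cons_cons (by simp) (List.isChain_singleton _))) }
  have hred : Reduced φ w := by
    intro g hg
    simp only [w, List.mem_cons, List.not_mem_nil, or_false] at hg
    rcases hg with rfl | rfl | rfl | rfl
    · exact ha1
    · exact hb1
    · exact ha2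
    · exact hb2
  have hprod : ofCoprodI (φ := φ) w.prod =
      of (φ := φ) false a1 * of (φ := φ) true b1 * of (φ := φ) false a2 *
        of (φ := φ) true b2 := by
    simp [w, CoprodI.Word.prod, map_mul, ofCoprodI_of, mul_assoc]
  have hmem : ofCoprodI (φ := φ) w.prod ∈ (base φ).range := by
    rw [hprod]
    rw [show of (φ := φ) false a1 * of (φ := φ) true b1 * of (φ := φ) false a2 *
        of (φ := φ) true b2 = 1 from heq]
    exact one_mem _
  have hempty := hred.eq_empty_of_mem_range hinj hmem
  have := congrArg (fun v => v.toList) hempty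
  simp [w, CoprodI.Word.empty] at this

end Words

open Monoid PushoutI

/-- Let `G = A *_C B` be an amalgamated product over an abelian subgroup `C`
(realized as the pushout of injections `φ : C → K i`, with `K false` playing the
role of `A` and `K true` the role of `B`).  If `G` is residually free and `A` is
non-abelian, then `Z(A) ∩ C` is contained in the normal core of `C` in `B`. -/
theorem amalgamated_product_center_in_core
    (C : Type*) [CommGroup C] (K : Bool → Type*) [∀ i, Group (K i)]
    (φ : ∀ i, C →* K i) (hinj : ∀ i, Function.Injective (φ i))
    (hRF : ∀ g : Monoid.PushoutI φ, g ≠ 1 →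
      ∃ (β : Type) (f : Monoid.PushoutI φ →* FreeGroup β), f g ≠ 1)
    (hA : ∃ x y : K false, ¬ Commute x y) :
    ∀ c : C, φ false c ∈ Subgroup.center (K false) →
      ∀ b : K true,
        Monoid.PushoutI.of (φ := φ) true b * Monoid.PushoutI.base φ c *
            (Monoid.PushoutI.of (φ := φ) true b)⁻¹ ∈
          (Monoid.PushoutI.base φ).range := by
  intro c hc b
  set dB : K true := b * φ true c * b⁻¹ with hdB
  have hexpr : Monoid.PushoutI.of (φ := φ) true b * Monoid.PushoutI.base φ c *
      (Monoid.PushoutI.of (φ := φ) true b)⁻¹ = of (φ := φ) true dB := by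
    rw [hdB, map_mul, map_mul, map_inv, of_apply_eq_base]
  by_cases hd : dB ∈ (φ true).range
  · obtain ⟨c', hc'⟩ := hd
    rw [hexpr, ← hc', of_apply_eq_base]
    exact ⟨c', rfl⟩
  · exfalso
    obtain ⟨x, y, hxy⟩ := hA
    -- any residually-free quotient not killing `c` makes the image of `A` abelian
    have hCT : ∀ (β : Type) (f : PushoutI φ →* FreeGroup β), f (base φ c) ≠ 1 →
        ∀ u v : K false, Commute (f (of (φ := φ) false u)) (f (of (φ := φ) false v)) := by
      intro β f hfc u v
      have h1 : ∀ a : K false, Commute (of (φ := φ) false a) (base φ c) := by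
        intro a
        rw [← of_apply_eq_base φ false c]
        have h0 : Commute a (φ false c) := Subgroup.mem_center_iff.mp hc a
        exact h0.map (of (φ := φ) false)
      exact freeGroup_commute_trans hfc ((h1 u).map f) ((h1 v).map f)
    have hkill : ∀ (β : Type) (f : PushoutI φ →* FreeGroup β), f (base φ c) ≠ 1 →
        ∀ u v : K false, f (of (φ := φ) false ⁅u, v⁆) = 1 := by
      intro β f hfc u v
      rw [map_commutatorElement, map_commutatorElement]
      exact commutatorElement_eq_one_iff_commute.mpr (hCT β f hfc u v)
    by_cases Hc : ∀ u v : K false, ⁅u, v⁆ ∈ (φ false).range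
    · -- all commutators of `A` land in the abelian subgroup `C`: contradiction with
      -- residual freeness via the free-group commutator lemma
      have hne : of (φ := φ) false ⁅x, y⁆ ≠ 1 := by
        intro h
        apply hxy
        have h' : of (φ := φ) false ⁅x, y⁆ = of (φ := φ) false 1 := by rw [map_one]; exact h
        exact commutatorElement_eq_one_iff_commute.mp (of_injective hinj false h')
      obtain ⟨β, f, hf⟩ := hRF _ hne
      obtain ⟨c1, hc1⟩ := Hc x y
      obtain ⟨c2, hc2⟩ := Hc (x * x) y
      have hcomm : Commute (⁅x, y⁆) (⁅x * x, y⁆) := by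
        rw [← hc1, ← hc2]
        exact (Commute.all c1 c2).map (φ false)
      have himg := hcomm.map (f.comp (of (φ := φ) false))
      rw [map_commutatorElement, map_commutatorElement, map_mul] at himg
      have hcomxy := freeGroup_commute_of_commutator_commute himg
      apply hf
      have h2 : (f.comp (of (φ := φ) false)) ⁅x, y⁆ = 1 := by
        rw [map_commutatorElement]
        exact commutatorElement_eq_one_iff_commute.mpr hcomxy
      simpa using h2
    · push_neg at Hc
      obtain ⟨u, v, huv⟩ := Hc
      have hinv : ⁅u, v⁆⁻¹ ∉ (φ false).range := fun h => huv (by simpa using inv_mem h)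
      have hdinv : dB⁻¹ ∉ (φ true).range := fun h => hd (by simpa using inv_mem h)
      have hw := pushout_four_ne_one φ hinj huv hd hinv hdinv
      obtain ⟨β, f, hf⟩ := hRF _ hw
      apply hf
      have hvu : of (φ := φ) false ⁅v, u⁆ = (of (φ := φ) false ⁅u, v⁆)⁻¹ := by
        rw [← map_inv, commutatorElement_inv]
      by_cases hfd : f (of (φ := φ) true dB) = 1
      · simp [map_mul, map_inv, hfd, hvu, -map_commutatorElement]
      · have hfc : f (base φ c) ≠ 1 := by
          intro h
          apply hfd
          rw [← hexpr, map_mul, map_mul, map_inv, h, mul_one, mul_inv_cancel]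
        have hγ := hkill β f hfc u v
        simp [map_mul, map_inv, hvu, hγ, -map_commutatorElement]
end

section
/- Let G = A *_C be an HNN extension of a group A over a subgroup C with stable letter t, and suppose G is residually free. Then t conjugates the intersection of the centre of A with C into the centre of A, i.e. (Z(A) ∩ C)^t ⊆ Z(A). -/
namespace FreeGroupCT

open FreeGroup

variable {α : Type*} [DecidableEq α]

lemma reduce_cons_of_ne {L : List (α × Bool)} (h : FreeGroup.reduce L = L)
    {c : α} {b : Bool} (hh : ∀ p ∈ L.head?, ¬(c = p.1 ∧ b = !p.2)) :
    FreeGroup.reduce ((c, b) :: L) = (c, b) :: L := by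
  rw [FreeGroup.reduce.cons, h]
  cases L with
  | nil => rfl
  | cons hd tl =>
    simp only [List.head?_cons, Option.mem_some_iff] at hh
    exact if_neg (hh hd rfl)

lemma reduce_cons_cancel {hd : α × Bool} {tl : List (α × Bool)}
    (h : FreeGroup.reduce (hd :: tl) = hd :: tl) {c : α} {b : Bool}
    (hc : c = hd.1) (hb : b = !hd.2) :
    FreeGroup.reduce ((c, b) :: hd :: tl) = tl := by
  rw [FreeGroup.reduce.cons, h]
  exact if_pos ⟨hc, hb⟩

omit [DecidableEq α] in
lemma invRev_cons (c : α) (b : Bool) (L : List (α × Bool)) :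
    invRev ((c, b) :: L) = invRev L ++ [(c, !b)] := by
  simp [invRev]

lemma head_base_eq {g : FreeGroup α} (hg : g ≠ 1) (c : α)
    (hcomm : FreeGroup.of c * g = g * FreeGroup.of c) :
    ∃ p ∈ g.toWord.head?, p.1 = c := by
  by_contra hcon
  push_neg at hcon
  set L := g.toWord with hLdef
  have hLred : FreeGroup.reduce L = L := g.reduce_toWord
  have hLne : L ≠ [] := fun h => hg (toWord_eq_nil_iff.mp h)
  -- compute toWord (of c * g)
  have h1 : FreeGroup.of c * g = FreeGroup.mk ((c, true) :: L) := by
    conv_lhs => rw [← g.mk_toWord]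
    rw [FreeGroup.of, FreeGroup.mul_mk]
    rfl
  have hhd : ∀ p ∈ L.head?, ¬(c = p.1 ∧ (true : Bool) = !p.2) := by
    intro p hp hconj
    exact hcon p hp hconj.1.symm
  have h2 : (FreeGroup.of c * g).toWord = (c, true) :: L := by
    rw [h1, toWord_mk, reduce_cons_of_ne hLred hhd]
  -- compute toWord (g * of c)
  have h3 : g * FreeGroup.of c = FreeGroup.mk (L ++ [(c, true)]) := by
    conv_lhs => rw [← g.mk_toWord]
    rw [FreeGroup.of, FreeGroup.mul_mk]
  have hM : FreeGroup.reduce (invRev L) = invRev L := by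
    rw [FreeGroup.reduce_invRev, hLred]
  have hMne : invRev L ≠ [] := by
    intro h
    exact hLne (invRev_injective (by rw [h, invRev_empty]))
  obtain ⟨hdM, tlM, hMeq⟩ := List.exists_cons_of_ne_nil hMne
  have hinv : invRev (L ++ [(c, true)]) = (c, false) :: invRev L := by
    simp [invRev]
  have h4 : FreeGroup.reduce (L ++ [(c, true)]) =
      invRev (FreeGroup.reduce ((c, false) :: invRev L)) := by
    rw [← hinv, FreeGroup.reduce_invRev, invRev_invRev]
  have hlen : ((c, true) :: L).length = (FreeGroup.reduce (L ++ [(c, true)])).length := by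
    rw [← h2, hcomm, h3, ← toWord_mk]
  by_cases hcase : c = hdM.1 ∧ (false : Bool) = !hdM.2
  · -- cancellation at the end : length drops
    rw [hMeq] at hM
    have := reduce_cons_cancel hM hcase.1 hcase.2
    rw [h4, hMeq, this] at hlen
    have hlenM : tlM.length + 1 = L.length := by
      have h := invRev_length (L₁ := L)
      rw [hMeq] at h
      simpa using h
    simp only [List.length_cons, invRev_length] at hlen
    omega
  · -- no cancellation : words equal, compare heads
    have : FreeGroup.reduce ((c, false) :: invRev L) = (c, false) :: invRev L := by
      apply reduce_cons_of_ne hM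
      intro p hp
      rw [hMeq] at hp
      simp only [List.head?_cons, Option.mem_some_iff] at hp
      rw [← hp]
      exact hcase
    have h5 : FreeGroup.reduce (L ++ [(c, true)]) = L ++ [(c, true)] := by
      rw [h4, this, invRev_cons, invRev_invRev]
      rfl
    have h6 : (c, true) :: L = L ++ [(c, true)] := by
      have := hlen
      rw [h5] at this
      -- use full word equality instead
      have heq : (FreeGroup.of c * g).toWord = (g * FreeGroup.of c).toWord := by rw [hcomm]
      rw [h2, h3, toWord_mk, h5] at heq
      exact heq
    obtain ⟨hd, tl, hL2⟩ := List.exists_cons_of_ne_nil hLne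
    have hd_eq : (c, true) = hd := by
      have h7 := congrArg List.head? h6
      rw [hL2] at h7
      simpa using h7
    exact hcon hd (by rw [hL2]; simp) (by rw [← hd_eq])


lemma eq_one_of_central {g : FreeGroup α}
    (hc : ∀ h : FreeGroup α, g * h = h * g) {a b : α} (hab : a ≠ b) : g = 1 := by
  by_contra hg
  obtain ⟨p, hp, hpa⟩ := head_base_eq hg a (hc (FreeGroup.of a)).symm
  obtain ⟨q, hq, hqb⟩ := head_base_eq hg b (hc (FreeGroup.of b)).symm
  have : p = q := Option.mem_unique hp hq
  exact hab (by rw [← hpa, this, hqb])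

omit [DecidableEq α] in
lemma comm_of_subsingleton [Subsingleton α] (u v : FreeGroup α) : Commute u v := by
  have key : ∀ (s : α) (w : FreeGroup α), Commute (FreeGroup.of s) w := by
    intro s w
    induction w using FreeGroup.induction_on with
    | C1 => exact Commute.one_right _
    | of t => show Commute (FreeGroup.of s) (FreeGroup.of t); rw [Subsingleton.elim t s]
    | inv_of t ht => exact ht.inv_right
    | mul p q hp hq => exact hp.mul_right hq
  induction u using FreeGroup.induction_on with
  | C1 => exact Commute.one_left _
  | of s => exact key s v
  | inv_of s hs => exact hs.inv_left
  | mul p q hp hq => exact hp.mul_left hq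

omit [DecidableEq α] in
lemma commute_of_commute {x y z : FreeGroup α} (hx : x ≠ 1)
    (hxy : Commute x y) (hxz : Commute x z) : Commute y z := by
  classical
  set H := Subgroup.centralizer ({x} : Set (FreeGroup α)) with hH
  have hxH : x ∈ H := Subgroup.mem_centralizer_singleton_iff.mpr rfl
  have hyH : y ∈ H := Subgroup.mem_centralizer_singleton_iff.mpr hxy.symm
  have hzH : z ∈ H := Subgroup.mem_centralizer_singleton_iff.mpr hxz.symm
  let e : H ≃* FreeGroup (IsFreeGroup.Generators H) := IsFreeGroup.toFreeGroup H
  set g : FreeGroup (IsFreeGroup.Generators H) := e ⟨x, hxH⟩ with hg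
  have hgc : ∀ w : FreeGroup (IsFreeGroup.Generators H), g * w = w * g := by
    intro w
    have hmem : (↑(e.symm w) : FreeGroup α) ∈ H := (e.symm w).2
    have : x * ↑(e.symm w) = ↑(e.symm w) * x :=
      (Subgroup.mem_centralizer_singleton_iff.mp hmem).symm
    have h2 : (⟨x, hxH⟩ : H) * e.symm w = e.symm w * ⟨x, hxH⟩ := Subtype.ext this
    calc g * w = e ((⟨x, hxH⟩ : H) * e.symm w) := by rw [_root_.map_mul, MulEquiv.apply_symm_apply]
    _ = e (e.symm w * ⟨x, hxH⟩) := by rw [h2]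
    _ = w * g := by rw [_root_.map_mul, MulEquiv.apply_symm_apply]
  have hgne : g ≠ 1 := by
    intro h
    apply hx
    have : (⟨x, hxH⟩ : H) = 1 := e.injective (by rw [← hg, h, _root_.map_one])
    exact congrArg Subtype.val this
  have hsub : Subsingleton (IsFreeGroup.Generators H) := by
    constructor
    intro a b
    by_contra hab
    exact hgne (eq_one_of_central hgc hab)
  have hcomm : Commute (e ⟨y, hyH⟩) (e ⟨z, hzH⟩) := comm_of_subsingleton _ _
  have : (⟨y, hyH⟩ : H) * ⟨z, hzH⟩ = ⟨z, hzH⟩ * ⟨y, hyH⟩ := by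
    apply e.injective
    rw [_root_.map_mul, _root_.map_mul]
    exact hcomm
  exact congrArg Subtype.val this




end FreeGroupCT

/-- Let `G = A*_C` be an HNN extension of `A` over a subgroup `C` (with associated
isomorphism `φ : C ≃* C'`) with stable letter `t`.  If the HNN extension is
residually free, then `t` conjugates `Z(A) ∩ C` into `Z(A)`. -/
theorem hnn_extension_center_conjugate (A : Type*) [Group A]
    (C C' : Subgroup A) (φ : C ≃* C')
    (hRF : ∀ g : HNNExtension A C C' φ, g ≠ 1 →
      ∃ (β : Type) (f : HNNExtension A C C' φ →* FreeGroup β), f g ≠ 1) :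
    ∀ c : A, c ∈ Subgroup.center A → c ∈ C →
      HNNExtension.t * HNNExtension.of c * HNNExtension.t⁻¹ ∈
        (Subgroup.center A).map (HNNExtension.of : A →* HNNExtension A C C' φ) := by
  intro c hc hcC
  set d : A := ((φ ⟨c, hcC⟩ : C') : A) with hd
  have hconj : (HNNExtension.of d : HNNExtension A C C' φ) =
      HNNExtension.t * HNNExtension.of c * HNNExtension.t⁻¹ :=
    HNNExtension.equiv_eq_conj (φ := φ) ⟨c, hcC⟩
  have hcd : c * d = d * c := ((Subgroup.mem_center_iff.mp hc) d).symm
  have hdcen : d ∈ Subgroup.center A := by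
    rw [Subgroup.mem_center_iff]
    intro a
    have hoc : (HNNExtension.of d : HNNExtension A C C' φ) * HNNExtension.of a =
        HNNExtension.of a * HNNExtension.of d := by
      by_contra hne
      have hne1 : (HNNExtension.of d * HNNExtension.of a) *
          (HNNExtension.of a * HNNExtension.of d)⁻¹ ≠ (1 : HNNExtension A C C' φ) := by
        intro h
        exact hne (mul_inv_eq_one.mp h)
      obtain ⟨β, f, hf⟩ := hRF _ hne1
      apply hf
      set x := f (HNNExtension.of c) with hx
      set yy := f (HNNExtension.of d) with hyy
      set z := f (HNNExtension.of a) with hz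
      have hxy : Commute x yy := by
        show x * yy = yy * x
        rw [hx, hyy, ← _root_.map_mul f, ← _root_.map_mul f,
          ← _root_.map_mul HNNExtension.of, ← _root_.map_mul HNNExtension.of, hcd]
      have hxz : Commute x z := by
        show x * z = z * x
        rw [hx, hz, ← _root_.map_mul f, ← _root_.map_mul f,
          ← _root_.map_mul HNNExtension.of, ← _root_.map_mul HNNExtension.of,
          (Subgroup.mem_center_iff.mp hc) a]
      have hy_eq : yy = f HNNExtension.t * x * (f HNNExtension.t)⁻¹ := by
        rw [hyy, hx, hconj, _root_.map_mul, _root_.map_mul, map_inv]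
      have hyz : Commute yy z := by
        by_cases hx1 : x = 1
        · rw [hy_eq, hx1, mul_one, mul_inv_cancel]
          exact Commute.one_left _
        · exact FreeGroupCT.commute_of_commute hx1 hxy hxz
      rw [_root_.map_mul, map_inv, _root_.map_mul, _root_.map_mul, ← hyy, ← hz, hyz]
      group
    have : (HNNExtension.of (d * a) : HNNExtension A C C' φ) = HNNExtension.of (a * d) := by
      rw [_root_.map_mul, _root_.map_mul]
      exact hoc
    exact (HNNExtension.of_injective (φ := φ) this).symm
  exact Subgroup.mem_map.mpr ⟨d, hdcen, hconj.symm ▸ rfl⟩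
end

section
/- Let G be a residually free group and Z a cyclic subgroup of G. Then there exists a finite-index subgroup G' of G containing Z and a homomorphism r : G' → Z restricting to the identity on Z (i.e. Z is a virtual retract of G). -/
namespace RFVR

/-- The action of permutations of `V` on `V → Multiplicative ℤ`. -/
def permAut (V : Type*) : Equiv.Perm V →* MulAut (V → Multiplicative ℤ) where
  toFun π :=
    { toFun := fun f => f ∘ π.symm
      invFun := fun f => f ∘ π
      left_inv := fun f => by ext v; simp
      right_inv := fun f => by ext v; simp
      map_mul' := fun f g => rfl }
  map_one' := by ext f v; rfl
  map_mul' := fun π ρ => by ext f v; rfl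

@[simp] lemma permAut_apply {V : Type*} (π : Equiv.Perm V) (f : V → Multiplicative ℤ) (v : V) :
    permAut V π f v = f (π.symm v) := rfl

section Core

variable {n : ℕ} [NeZero n] (ℓ : ZMod n → Fin 2 × Bool)

variable (hcyc : ∀ v : ZMod n, ¬((ℓ (v + 1)).1 = (ℓ v).1 ∧ (ℓ (v + 1)).2 = !(ℓ v).2))

/-- The partial bijection for generator `i` as an equiv of subtypes. -/
def sigmaEquiv (hcyc : ∀ v : ZMod n, ¬((ℓ (v + 1)).1 = (ℓ v).1 ∧ (ℓ (v + 1)).2 = !(ℓ v).2)) (i : Fin 2) :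
    {u : ZMod n // ℓ (u - 1) = (i, true) ∨ ℓ u = (i, false)} ≃
    {u : ZMod n // ℓ u = (i, true) ∨ ℓ (u - 1) = (i, false)} where
  toFun x := if h : ℓ (x.1 - 1) = (i, true) then ⟨x.1 - 1, Or.inl h⟩
    else ⟨x.1 + 1, Or.inr (by rw [add_sub_cancel_right]; exact x.2.resolve_left h)⟩
  invFun y := if h : ℓ y.1 = (i, true) then ⟨y.1 + 1, Or.inl (by rw [add_sub_cancel_right]; exact h)⟩
    else ⟨y.1 - 1, Or.inr (y.2.resolve_left h)⟩
  left_inv := by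
    rintro ⟨u, hu⟩
    dsimp only
    by_cases h : ℓ (u - 1) = (i, true)
    · rw [dif_pos h, dif_pos h]
      exact Subtype.ext (sub_add_cancel u 1)
    · have hu' : ℓ u = (i, false) := hu.resolve_left h
      have h2 : ¬ (ℓ (u + 1) = (i, true)) := fun hT => hcyc u (by simp [hT, hu'])
      rw [dif_neg h, dif_neg h2]
      exact Subtype.ext (add_sub_cancel_right u 1)
  right_inv := by
    rintro ⟨u, hu⟩
    dsimp only
    by_cases h : ℓ u = (i, true)
    · rw [dif_pos h, dif_pos (by rw [add_sub_cancel_right]; exact h)]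
      exact Subtype.ext (add_sub_cancel_right u 1)
    · have hu' : ℓ (u - 1) = (i, false) := hu.resolve_left h
      have h2 : ¬ (ℓ (u - 1 - 1) = (i, true)) := by
        intro hT
        exact hcyc (u - 1 - 1) (by rw [sub_add_cancel]; simp [hT, hu'])
      rw [dif_neg h, dif_neg h2]
      exact Subtype.ext (sub_add_cancel u 1)

noncomputable instance decP (i : Fin 2) : DecidablePred (fun u : ZMod n => ℓ (u - 1) = (i, true) ∨ ℓ u = (i, false)) :=
  fun _ => Classical.dec _

noncomputable instance decQ (i : Fin 2) : DecidablePred (fun u : ZMod n => ℓ u = (i, true) ∨ ℓ (u - 1) = (i, false)) :=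
  fun _ => Classical.dec _

/-- The permutation for generator `i`. -/
noncomputable def sigma (hcyc : ∀ v : ZMod n, ¬((ℓ (v + 1)).1 = (ℓ v).1 ∧ (ℓ (v + 1)).2 = !(ℓ v).2)) (i : Fin 2) : Equiv.Perm (ZMod n) :=
  (sigmaEquiv ℓ hcyc i).extendSubtype

lemma sigma_true (hcyc : ∀ v : ZMod n, ¬((ℓ (v + 1)).1 = (ℓ v).1 ∧ (ℓ (v + 1)).2 = !(ℓ v).2)) {i : Fin 2} {v : ZMod n} (h : ℓ v = (i, true)) :
    sigma ℓ hcyc i (v + 1) = v := by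
  have hp : (fun u : ZMod n => ℓ (u - 1) = (i, true) ∨ ℓ u = (i, false)) (v + 1) := by
    dsimp only; rw [add_sub_cancel_right]; exact Or.inl h
  rw [sigma, Equiv.extendSubtype_apply_of_mem (sigmaEquiv ℓ hcyc i) (v + 1) hp]
  show ((sigmaEquiv ℓ hcyc i) ⟨v + 1, hp⟩ : ZMod n) = v
  simp only [sigmaEquiv, Equiv.coe_fn_mk]
  rw [dif_pos (by rw [add_sub_cancel_right]; exact h)]
  exact add_sub_cancel_right v 1

lemma sigma_false (hcyc : ∀ v : ZMod n, ¬((ℓ (v + 1)).1 = (ℓ v).1 ∧ (ℓ (v + 1)).2 = !(ℓ v).2)) {i : Fin 2} {v : ZMod n} (h : ℓ v = (i, false)) :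
    sigma ℓ hcyc i v = v + 1 := by
  have hp : (fun u : ZMod n => ℓ (u - 1) = (i, true) ∨ ℓ u = (i, false)) v := Or.inr h
  rw [sigma, Equiv.extendSubtype_apply_of_mem (sigmaEquiv ℓ hcyc i) v hp]
  show ((sigmaEquiv ℓ hcyc i) ⟨v, hp⟩ : ZMod n) = v + 1
  simp only [sigmaEquiv, Equiv.coe_fn_mk]
  rw [dif_neg (fun hT => hcyc (v - 1) (by rw [sub_add_cancel]; simp [hT, h]))]

lemma sigma_symm_true (hcyc : ∀ v : ZMod n, ¬((ℓ (v + 1)).1 = (ℓ v).1 ∧ (ℓ (v + 1)).2 = !(ℓ v).2)) {i : Fin 2} {v : ZMod n} (h : ℓ v = (i, true)) :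
    (sigma ℓ hcyc i).symm v = v + 1 :=
  (Equiv.symm_apply_eq _).mpr (sigma_true ℓ hcyc h).symm ▸ rfl


/-- Weight functions: indicator of the marked transition. -/
def wt (i : Fin 2) : ZMod n → Multiplicative ℤ := fun v =>
  if i = (ℓ 0).1 ∧ v = (if (ℓ 0).2 then 0 else 1) then Multiplicative.ofAdd 1 else 1

/-- The image of a letter in the wreath product. -/
noncomputable def genW (x : Fin 2 × Bool) :
    (ZMod n → Multiplicative ℤ) ⋊[permAut (ZMod n)] Equiv.Perm (ZMod n) :=
  cond x.2 ⟨wt ℓ x.1, sigma ℓ hcyc x.1⟩ (⟨wt ℓ x.1, sigma ℓ hcyc x.1⟩)⁻¹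

/-- The homomorphism from the free group into the wreath product. -/
noncomputable def Phi :
    FreeGroup (Fin 2) →* (ZMod n → Multiplicative ℤ) ⋊[permAut (ZMod n)] Equiv.Perm (ZMod n) :=
  FreeGroup.lift (fun i => ⟨wt ℓ i, sigma ℓ hcyc i⟩)

lemma Phi_mk (L' : List (Fin 2 × Bool)) :
    Phi ℓ hcyc (FreeGroup.mk L') = (L'.map (genW ℓ hcyc)).prod := by
  rw [Phi, FreeGroup.lift_mk]
  rfl

/-- The contribution of the letter at position `v`. -/
def term (v : ZMod n) : Multiplicative ℤ :=
  cond (ℓ v).2 (wt ℓ (ℓ v).1 v) (wt ℓ (ℓ v).1 (v + 1))⁻¹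

lemma genW_right_symm {u : ZMod n} {a : Fin 2 × Bool} (ha : ℓ u = a) :
    ((genW ℓ hcyc a).right).symm u = u + 1 := by
  rcases a with ⟨i, b⟩
  cases b
  · -- false : right = (sigma i)⁻¹, symm = sigma i
    show ((⟨wt ℓ i, sigma ℓ hcyc i⟩ : _ ⋊[permAut (ZMod n)] _)⁻¹.right).symm u = u + 1
    have : (⟨wt ℓ i, sigma ℓ hcyc i⟩ : _ ⋊[permAut (ZMod n)] _)⁻¹.right = (sigma ℓ hcyc i)⁻¹ := rfl
    rw [this]
    show ((sigma ℓ hcyc i).symm).symm u = u + 1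
    rw [Equiv.symm_symm]
    exact sigma_false ℓ hcyc ha
  · show ((sigma ℓ hcyc i)).symm u = u + 1
    exact sigma_symm_true ℓ hcyc ha

lemma genW_right_apply {u : ZMod n} {a : Fin 2 × Bool} (ha : ℓ u = a) :
    (genW ℓ hcyc a).right (u + 1) = u := by
  have := genW_right_symm ℓ hcyc ha
  rw [← this, Equiv.apply_symm_apply]

lemma genW_left_apply {u : ZMod n} {a : Fin 2 × Bool} (ha : ℓ u = a) :
    (genW ℓ hcyc a).left u = term ℓ u := by
  rcases a with ⟨i, b⟩
  cases b
  · show ((⟨wt ℓ i, sigma ℓ hcyc i⟩ : _ ⋊[permAut (ZMod n)] _)⁻¹).left u = term ℓ u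
    rw [SemidirectProduct.inv_left]
    show permAut (ZMod n) ((sigma ℓ hcyc i))⁻¹ (wt ℓ i)⁻¹ u = term ℓ u
    rw [permAut_apply]
    have h1 : ((sigma ℓ hcyc i)⁻¹ : Equiv.Perm (ZMod n)).symm u = u + 1 := by
      show ((sigma ℓ hcyc i).symm).symm u = u + 1
      rw [Equiv.symm_symm]
      exact sigma_false ℓ hcyc ha
    rw [h1]
    show (wt ℓ i (u + 1))⁻¹ = term ℓ u
    rw [term, ha]
    rfl
  · show wt ℓ i u = term ℓ u
    rw [term, ha]
    rfl


/-- The main walk computation. -/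
lemma walk : ∀ (Ml : List (Fin 2 × Bool)) (u : ZMod n),
    (∀ (j : ℕ) (hj : j < Ml.length), Ml.get ⟨j, hj⟩ = ℓ (u + (j : ZMod n))) →
    ((Ml.map (genW ℓ hcyc)).prod.right (u + (Ml.length : ZMod n)) = u ∧
     (Ml.map (genW ℓ hcyc)).prod.left u
       = ((List.range Ml.length).map (fun (j : ℕ) => term ℓ (u + (j : ZMod n)))).prod) := by
  intro Ml
  induction Ml with
  | nil =>
    intro u _
    constructor
    · simp
    · simp
  | cons a T ih =>
    intro u hm
    have ha : ℓ u = a := by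
      have := hm 0 (by simp)
      simpa using this.symm
    have hT : ∀ (j : ℕ) (hj : j < T.length), T.get ⟨j, hj⟩ = ℓ ((u + 1) + (j : ZMod n)) := by
      intro j hj
      have := hm (j + 1) (by simpa using Nat.succ_lt_succ hj)
      simp only [List.get_cons_succ] at this
      rw [this]
      congr 1
      push_cast
      ring
    obtain ⟨ihr, ihl⟩ := ih (u + 1) hT
    have hcast : u + ((T.length + 1 : ℕ) : ZMod n) = (u + 1) + (T.length : ZMod n) := by
      push_cast; ring
    constructor
    · rw [List.map_cons, List.prod_cons, SemidirectProduct.mul_right]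
      show (genW ℓ hcyc a).right ((List.map (genW ℓ hcyc) T).prod.right
        (u + ((T.length + 1 : ℕ) : ZMod n))) = u
      rw [hcast, ihr]
      exact genW_right_apply ℓ hcyc ha
    · rw [List.map_cons, List.prod_cons, SemidirectProduct.mul_left]
      show (genW ℓ hcyc a).left u *
        (permAut (ZMod n) (genW ℓ hcyc a).right (List.map (genW ℓ hcyc) T).prod.left) u = _
      rw [permAut_apply, genW_right_symm ℓ hcyc ha, ihl, genW_left_apply ℓ hcyc ha]
      simp only [List.length_cons]
      rw [List.range_succ_eq_map, List.map_cons, List.prod_cons, List.map_map]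
      congr 1
      · rw [Nat.cast_zero, add_zero]
      · congr 1
        apply List.map_congr_left
        intro j _
        show term ℓ ((u + 1) + (j : ZMod n)) = term ℓ (u + ((j + 1 : ℕ) : ZMod n))
        congr 1
        push_cast
        ring


lemma term_eq_one (hcyc : ∀ v : ZMod n, ¬((ℓ (v + 1)).1 = (ℓ v).1 ∧ (ℓ (v + 1)).2 = !(ℓ v).2)) {v : ZMod n} (hv : v ≠ 0) : term ℓ v = 1 := by
  rcases h : ℓ v with ⟨i, b⟩
  cases b
  · -- letter (i, false)
    rw [term, h]
    show (wt ℓ i (v + 1))⁻¹ = 1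
    rw [wt]
    rw [if_neg, inv_one]
    rintro ⟨h1, h2⟩
    rcases hb0 : (ℓ 0).2 with _ | _
    · -- (ℓ 0).2 = false : marked vertex is 1, so v + 1 = 1, v = 0
      simp only [hb0] at h2
      simp only [if_neg (by simp : ¬ (false = true))] at h2
      exact hv (by rw [← add_sub_cancel_right v 1, h2, sub_self])
    · -- (ℓ 0).2 = true : marked vertex is 0, so v + 1 = 0 and wrap-around cancellation
      simp [hb0] at h2
      refine hcyc v ⟨?_, ?_⟩
      · rw [h2, h, ← h1]
      · rw [h2, h, hb0]
        rfl
  · -- letter (i, true)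
    rw [term, h]
    show wt ℓ i v = 1
    rw [wt]
    rw [if_neg]
    rintro ⟨h1, h2⟩
    rcases hb0 : (ℓ 0).2 with _ | _
    · -- (ℓ 0).2 = false : marked vertex is 1, v = 1, cancellation at 0
      simp only [hb0] at h2
      simp only [if_neg (by simp : ¬ (false = true))] at h2
      refine hcyc 0 ⟨?_, ?_⟩
      · rw [zero_add, ← h2, h, ← h1]
      · rw [zero_add, ← h2, h, hb0]
        rfl
    · simp [hb0] at h2
      exact hv h2

omit [NeZero n] in
lemma term_zero :
    term ℓ 0 = cond (ℓ 0).2 (Multiplicative.ofAdd 1) (Multiplicative.ofAdd 1)⁻¹ := by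
  rcases h : ℓ 0 with ⟨i, b⟩
  cases b
  · rw [term, h]
    show (wt ℓ i (0 + 1))⁻¹ = (Multiplicative.ofAdd 1)⁻¹
    rw [wt]
    rw [if_pos ⟨by rw [h], by rw [h]; simp⟩]
  · rw [term, h]
    show wt ℓ i 0 = Multiplicative.ofAdd 1
    rw [wt]
    rw [if_pos ⟨by rw [h], by rw [h]; simp⟩]

lemma prod_terms (hcyc : ∀ v : ZMod n, ¬((ℓ (v + 1)).1 = (ℓ v).1 ∧ (ℓ (v + 1)).2 = !(ℓ v).2)) :
    ((List.range n).map (fun (j : ℕ) => term ℓ ((j : ZMod n)))).prod = term ℓ 0 := by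
  obtain ⟨m, hm⟩ : ∃ m, n = m + 1 :=
    ⟨n - 1, (Nat.succ_pred_eq_of_pos (Nat.pos_of_ne_zero (NeZero.ne n))).symm⟩
  have hrange : List.range n = 0 :: (List.range m).map Nat.succ := by
    rw [hm, List.range_succ_eq_map]
  rw [hrange, List.map_cons, List.prod_cons, List.map_map, Nat.cast_zero]
  have hone : ((List.range m).map ((fun (j : ℕ) => term ℓ ((j : ZMod n))) ∘ Nat.succ)).prod = 1 := by
    apply List.prod_eq_one
    intro x hx
    obtain ⟨j, hj, rfl⟩ := List.mem_map.mp hx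
    have hjm : j < m := List.mem_range.mp hj
    apply term_eq_one ℓ hcyc
    intro h0
    have hdvd : n ∣ j + 1 := by
      rwa [ZMod.natCast_eq_zero_iff] at h0
    have := Nat.le_of_dvd (Nat.succ_pos j) hdvd
    omega
  rw [hone, mul_one]

/-- The core theorem: a finite-index subgroup containing the cyclically reduced word,
with a map to `ℤ` sending it to `±1`. -/
theorem core (hcyc : ∀ v : ZMod n, ¬((ℓ (v + 1)).1 = (ℓ v).1 ∧ (ℓ (v + 1)).2 = !(ℓ v).2)) (Lw : List (Fin 2 × Bool)) (hlen : Lw.length = n)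
    (hmatch : ∀ (j : ℕ) (hj : j < Lw.length), Lw.get ⟨j, hj⟩ = ℓ ((j : ZMod n))) :
    ∃ (H : Subgroup (FreeGroup (Fin 2))) (ψ : H →* Multiplicative ℤ), H.index ≠ 0 ∧
      ∃ hcH : FreeGroup.mk Lw ∈ H,
        ψ ⟨FreeGroup.mk Lw, hcH⟩ = Multiplicative.ofAdd 1 ∨
        ψ ⟨FreeGroup.mk Lw, hcH⟩ = Multiplicative.ofAdd (-1) := by
  classical
  set ρ : FreeGroup (Fin 2) →* Equiv.Perm (ZMod n) :=
    SemidirectProduct.rightHom.comp (Phi ℓ hcyc) with hρ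
  have hρ_apply : ∀ g : FreeGroup (Fin 2), ρ g = (Phi ℓ hcyc g).right := fun g => rfl
  set Hs := MulAction.stabilizer (Equiv.Perm (ZMod n)) (0 : ZMod n) with hHs
  set H : Subgroup (FreeGroup (Fin 2)) := Hs.comap ρ with hH
  have hfix : ∀ g : H, (Phi ℓ hcyc (g : FreeGroup (Fin 2))).right 0 = 0 := fun g => g.2
  have hfix' : ∀ g : H, ((Phi ℓ hcyc (g : FreeGroup (Fin 2))).right).symm 0 = 0 := by
    intro g
    rw [Equiv.symm_apply_eq]
    exact (hfix g).symm
  set ψ : H →* Multiplicative ℤ := MonoidHom.mk'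
    (fun g => (Phi ℓ hcyc (g : FreeGroup (Fin 2))).left 0)
    (by
      intro g h
      show (Phi ℓ hcyc ((g : FreeGroup (Fin 2)) * h)).left 0 = _
      rw [map_mul, SemidirectProduct.mul_left, Pi.mul_apply, permAut_apply, hfix' g]) with hψ
  -- walk facts
  have wk := walk ℓ hcyc Lw 0 (by
    intro j hj
    rw [hmatch j hj, zero_add])
  have hPhi : Phi ℓ hcyc (FreeGroup.mk Lw) = (Lw.map (genW ℓ hcyc)).prod := Phi_mk ℓ hcyc Lw
  have hcast0 : (0 : ZMod n) + (Lw.length : ZMod n) = 0 := by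
    rw [hlen, ZMod.natCast_self, add_zero]
  have hmem : FreeGroup.mk Lw ∈ H := by
    rw [hH, Subgroup.mem_comap, hHs, MulAction.mem_stabilizer_iff]
    show ρ (FreeGroup.mk Lw) 0 = 0
    rw [hρ_apply, hPhi]
    have := wk.1
    rwa [hcast0] at this
  refine ⟨H, ψ, ?_, hmem, ?_⟩
  · -- finite index
    intro h0
    rw [hH, Subgroup.index_comap] at h0
    have : Hs.index = 0 := Subgroup.index_eq_zero_of_relIndex_eq_zero h0
    exact Subgroup.index_ne_zero_of_finite this
  · -- value
    have hval : ψ ⟨FreeGroup.mk Lw, hmem⟩ = (Lw.map (genW ℓ hcyc)).prod.left 0 := by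
      rw [hψ]
      show (Phi ℓ hcyc (FreeGroup.mk Lw)).left 0 = _
      rw [hPhi]
    rw [hval, wk.2]
    have : ((List.range Lw.length).map (fun (j : ℕ) => term ℓ ((0 : ZMod n) + (j : ZMod n)))).prod
        = term ℓ 0 := by
      rw [← prod_terms ℓ hcyc, hlen]
      congr 1
      apply List.map_congr_left
      intro j _
      rw [zero_add]
    rw [this, term_zero ℓ]
    rcases hb : (ℓ 0).2
    · right
      rw [cond_false, ← ofAdd_neg]
    · left
      rw [cond_true]

end Core

lemma get_concat_last {α : Type*} (a z : α) (M : List α) (i : Fin (a :: (M ++ [z])).length)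
    (hi : (i : ℕ) = M.length + 1) : (a :: (M ++ [z])).get i = z := by
  rcases i with ⟨j, hj⟩
  subst hi
  simp [List.get_eq_getElem, List.getElem_append_right]

/-- Every nontrivial element of a free group is conjugate to a cyclically reduced one. -/
theorem cyclic_reduce : ∀ (N : ℕ) (w : FreeGroup (Fin 2)), w.toWord.length ≤ N → w ≠ 1 →
    ∃ (u c : FreeGroup (Fin 2)), w = u * c * u⁻¹ ∧ c ≠ 1 ∧
      ∀ (h0 : 0 < c.toWord.length) (h1 : c.toWord.length - 1 < c.toWord.length),
        ¬((c.toWord.get ⟨0, h0⟩).1 = (c.toWord.get ⟨c.toWord.length - 1, h1⟩).1 ∧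
          (c.toWord.get ⟨0, h0⟩).2 = !(c.toWord.get ⟨c.toWord.length - 1, h1⟩).2) := by
  intro N
  induction N with
  | zero =>
    intro w hlen hw
    exfalso
    apply hw
    rw [← FreeGroup.toWord_eq_nil_iff]
    exact List.length_eq_zero_iff.mp (Nat.le_zero.mp hlen)
  | succ N ih =>
    intro w hlen hw
    have hLne : w.toWord ≠ [] := fun h => hw (FreeGroup.toWord_eq_nil_iff.mp h)
    have h0 : 0 < w.toWord.length := List.length_pos_iff.mpr hLne
    have h1 : w.toWord.length - 1 < w.toWord.length := by omega
    by_cases hcan : (w.toWord.get ⟨0, h0⟩).1 = (w.toWord.get ⟨w.toWord.length - 1, h1⟩).1 ∧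
        (w.toWord.get ⟨0, h0⟩).2 = !(w.toWord.get ⟨w.toWord.length - 1, h1⟩).2
    · -- cancellation between first and last letter
      obtain ⟨a, T, hL⟩ : ∃ a T, w.toWord = a :: T := by
        cases hLc : w.toWord with
        | nil => exact absurd hLc hLne
        | cons a T => exact ⟨a, T, rfl⟩
      rcases T.eq_nil_or_concat with hT | ⟨M, z, hT⟩
      · -- length-1 word : impossible since a letter can't cancel itself
        exfalso
        rw [hT] at hL
        rcases hcan with ⟨_, h2⟩
        have e0 : w.toWord.get ⟨0, h0⟩ = a := by
          rw [List.get_of_eq hL]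
          simp
        have e1 : w.toWord.get ⟨w.toWord.length - 1, h1⟩ = a := by
          rw [List.get_of_eq hL]
          simp
        rw [e0, e1] at h2
        exact (Bool.not_ne_self _ h2.symm).elim
      · -- w.toWord = a :: M ++ [z] with z = (a.1, !a.2)
        rw [hT, List.concat_eq_append] at hL
        have hlenL : w.toWord.length = M.length + 2 := by rw [hL]; simp
        have hgz : w.toWord.get ⟨w.toWord.length - 1, h1⟩ = z := by
          rw [List.get_of_eq hL]
          apply get_concat_last
          simp only [Fin.coe_cast]
          omega
        have hga : w.toWord.get ⟨0, h0⟩ = a := by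
          rw [List.get_of_eq hL]
          rfl
        have hz : z = (a.1, !a.2) := by
          rcases hcan with ⟨hc1, hc2⟩
          rw [hga, hgz] at hc1 hc2
          refine Prod.ext hc1.symm ?_
          rcases hb : a.2 <;> rcases hb' : z.2 <;> rw [hb, hb'] at hc2 <;> simp_all
        -- the conjugating letter and the inner word
        set w' : FreeGroup (Fin 2) := FreeGroup.mk M with hw'
        have hainv : (FreeGroup.mk [a])⁻¹ = FreeGroup.mk [z] := by
          rw [FreeGroup.inv_mk]
          congr 1
          rw [hz]
          simp [FreeGroup.invRev]
        have hwfact : w = FreeGroup.mk [a] * w' * (FreeGroup.mk [a])⁻¹ := by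
          rw [hainv, hw', FreeGroup.mul_mk, FreeGroup.mul_mk, ← FreeGroup.mk_toWord (x := w), hL]
          exact congrArg FreeGroup.mk (by simp)
        have hw'ne : w' ≠ 1 := by
          intro h
          apply hw
          rw [hwfact, h, mul_one, mul_inv_cancel]
        have hlen' : w'.toWord.length ≤ N := by
          have hred : w'.toWord = FreeGroup.reduce M := FreeGroup.toWord_mk
          have := FreeGroup.Red.length_le (FreeGroup.reduce.red (L := M))
          rw [hred]
          omega
        obtain ⟨u', c', heq, hc', hlast⟩ := ih w' hlen' hw'ne
        refine ⟨FreeGroup.mk [a] * u', c', ?_, hc', hlast⟩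
        rw [hwfact, heq]
        group
    · exact ⟨1, w, by group, hw, fun _ _ => hcan⟩

theorem key (w : FreeGroup (Fin 2)) (hw : w ≠ 1) :
    ∃ (H : Subgroup (FreeGroup (Fin 2))) (ψ : H →* Multiplicative ℤ), H.index ≠ 0 ∧
      ∃ hwH : w ∈ H, ψ ⟨w, hwH⟩ = Multiplicative.ofAdd 1 := by
  classical
  obtain ⟨u, c, hweq, hc, hlast⟩ := cyclic_reduce w.toWord.length w le_rfl hw
  set L := c.toWord with hLdef
  have hLne : L ≠ [] := fun h => hc (FreeGroup.toWord_eq_nil_iff.mp h)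
  have hn0 : L.length ≠ 0 := fun h => hLne (List.length_eq_zero_iff.mp h)
  haveI : NeZero L.length := ⟨hn0⟩
  set n := L.length with hndef
  let ℓ : ZMod n → Fin 2 × Bool := fun v => L.get ⟨v.val, ZMod.val_lt v⟩
  have hred : FreeGroup.reduce L = L := FreeGroup.reduce_toWord c
  have hcyc : ∀ v : ZMod n, ¬((ℓ (v + 1)).1 = (ℓ v).1 ∧ (ℓ (v + 1)).2 = !(ℓ v).2) := by
    intro v hv
    have hj : v.val < n := ZMod.val_lt v
    by_cases hj1 : v.val + 1 < n
    · -- interior cancellation, contradicting reducedness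
      have hv1 : (v + 1).val = v.val + 1 := by
        have : v + 1 = ((v.val + 1 : ℕ) : ZMod n) := by
          push_cast [ZMod.natCast_zmod_val]
          ring
        rw [this, ZMod.val_cast_of_lt hj1]
      have hgetv : ℓ v = L.get ⟨v.val, hj⟩ := rfl
      have hgetv1 : ℓ (v + 1) = L.get ⟨v.val + 1, hj1⟩ := by
        show L.get ⟨(v + 1).val, _⟩ = L.get ⟨v.val + 1, hj1⟩
        congr 1
        exact Fin.ext hv1
      rw [hgetv, hgetv1] at hv
      have hx2 : L.get ⟨v.val + 1, hj1⟩ = ((L.get ⟨v.val, hj⟩).1, !(L.get ⟨v.val, hj⟩).2) :=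
        Prod.ext hv.1 hv.2
      have hd1 : L.drop v.val = L.get ⟨v.val, hj⟩ :: L.drop (v.val + 1) := by
        rw [List.drop_eq_getElem_cons hj]
        rfl
      have hd2 : L.drop (v.val + 1) = L.get ⟨v.val + 1, hj1⟩ :: L.drop (v.val + 2) := by
        rw [List.drop_eq_getElem_cons hj1]
        rfl
      have hdecomp : L = L.take v.val ++
          ((L.get ⟨v.val, hj⟩).1, (L.get ⟨v.val, hj⟩).2) ::
          ((L.get ⟨v.val, hj⟩).1, !(L.get ⟨v.val, hj⟩).2) :: L.drop (v.val + 2) := by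
        conv_lhs => rw [← List.take_append_drop v.val L]
        rw [hd1, hd2, hx2]
      exact FreeGroup.reduce.not (hred.trans hdecomp)
    · -- wrap-around cancellation, contradicting the cyclic reduction
      have hjn : v.val = n - 1 := by omega
      have hv1 : v + 1 = 0 := by
        have : v + 1 = ((v.val + 1 : ℕ) : ZMod n) := by
          push_cast [ZMod.natCast_zmod_val]
          ring
        rw [this, show v.val + 1 = n from by omega, ZMod.natCast_self]
      have hgetv : ℓ v = L.get ⟨n - 1, by omega⟩ := by
        show L.get _ = _
        congr 1
        exact Fin.ext (by simpa using hjn)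
      have hgetv1 : ℓ (v + 1) = L.get ⟨0, by omega⟩ := by
        rw [hv1]
        show L.get ⟨(0 : ZMod n).val, _⟩ = _
        congr 1
        exact Fin.ext (by simp [ZMod.val_zero])
      rw [hgetv, hgetv1] at hv
      exact hlast (by omega) (by omega) hv
  have hmatch : ∀ (j : ℕ) (hj : j < L.length), L.get ⟨j, hj⟩ = ℓ ((j : ZMod n)) := by
    intro j hj
    show _ = L.get ⟨((j : ZMod n)).val, _⟩
    congr 1
    exact Fin.ext (by simp [ZMod.val_cast_of_lt hj])
  obtain ⟨H₀, ψ₀, hind₀, hmem₀, hval₀⟩ := core ℓ hcyc L rfl hmatch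
  have hmkc : FreeGroup.mk L = c := FreeGroup.mk_toWord
  have hmemc : c ∈ H₀ := hmkc ▸ hmem₀
  have hvalc : ψ₀ ⟨c, hmemc⟩ = Multiplicative.ofAdd 1 ∨
      ψ₀ ⟨c, hmemc⟩ = Multiplicative.ofAdd (-1) := by
    have heqs : (⟨c, hmemc⟩ : H₀) = ⟨FreeGroup.mk L, hmem₀⟩ := Subtype.ext hmkc.symm
    rw [heqs]
    exact hval₀
  -- transfer along conjugation by u
  set φu : FreeGroup (Fin 2) →* FreeGroup (Fin 2) := (MulAut.conj u⁻¹).toMonoidHom with hφu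
  have hφu_apply : ∀ g, φu g = u⁻¹ * g * u := by
    intro g
    show (MulAut.conj u⁻¹) g = _
    rw [MulAut.conj_apply]
    group
  have hφuw : φu w = c := by
    rw [hφu_apply, hweq]
    group
  set H : Subgroup (FreeGroup (Fin 2)) := H₀.comap φu with hH
  have hsurj : Function.Surjective φu := (MulAut.conj u⁻¹).surjective
  have hindex : H.index ≠ 0 := by
    rw [hH, Subgroup.index_comap_of_surjective (H := H₀) (f := φu) hsurj]
    exact hind₀
  have hwH : w ∈ H := by
    rw [hH, Subgroup.mem_comap, hφuw]
    exact hmemc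
  have hmemmap : ∀ g : H, φu (g : FreeGroup (Fin 2)) ∈ H₀ := fun g => g.2
  set e : H →* H₀ := (φu.comp H.subtype).codRestrict H₀ hmemmap with he
  have heval : e ⟨w, hwH⟩ = ⟨c, hmemc⟩ := by
    apply Subtype.ext
    show φu w = c
    exact hφuw
  set ψ : H →* Multiplicative ℤ := ψ₀.comp e with hψ
  have hψval : ψ ⟨w, hwH⟩ = ψ₀ ⟨c, hmemc⟩ := by
    rw [hψ, MonoidHom.comp_apply, heval]
  rcases hvalc with hval | hval
  · exact ⟨H, ψ, hindex, hwH, by rw [hψval, hval]⟩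
  · refine ⟨H, ψ⁻¹, hindex, hwH, ?_⟩
    show (ψ ⟨w, hwH⟩)⁻¹ = Multiplicative.ofAdd 1
    rw [hψval, hval, ← ofAdd_neg, neg_neg]

end RFVR

/-- Cyclic subgroups of residually free groups are virtual retracts. -/
theorem residually_free_virtual_retract_cyclic (G : Type*) [Group G]
    (hRF : ∀ g : G, g ≠ 1 → ∃ f : G →* FreeGroup (Fin 2), f g ≠ 1)
    (x : G) :
    ∃ G' : Subgroup G, G'.index ≠ 0 ∧ Subgroup.zpowers x ≤ G' ∧
      ∃ r : G' →* G, (∀ g : G', r g ∈ Subgroup.zpowers x) ∧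
        ∀ g : G', (g : G) ∈ Subgroup.zpowers x → r g = (g : G) := by
  by_cases hx : x = 1
  · refine ⟨⊤, ?_, le_top, 1, ?_, ?_⟩
    · simp [Subgroup.index_top]
    · intro g; exact Subgroup.one_mem _
    · intro g hg
      subst hx
      rcases Subgroup.mem_zpowers_iff.mp hg with ⟨k, hk⟩
      simp only [one_zpow] at hk
      simp [← hk]
  · obtain ⟨f, hfx⟩ := hRF x hx
    obtain ⟨H, ψ, hind, hwH, hψ⟩ := RFVR.key (f x) hfx
    refine ⟨H.comap f, ?_, ?_, ?_⟩
    · intro h0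
      rw [Subgroup.index_comap] at h0
      exact hind (Subgroup.index_eq_zero_of_relIndex_eq_zero h0)
    · rw [Subgroup.zpowers_le]
      exact hwH
    · have hmem : ∀ g : H.comap f, f (g : G) ∈ H := fun g => g.2
      set χ : (H.comap f) →* Multiplicative ℤ :=
        ψ.comp ((f.comp (H.comap f).subtype).codRestrict H hmem) with hχ
      refine ⟨(zpowersHom G x).comp χ, ?_, ?_⟩
      · intro g
        exact ⟨Multiplicative.toAdd (χ g), rfl⟩
      · intro g hg
        rcases Subgroup.mem_zpowers_iff.mp hg with ⟨k, hk⟩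
        have hχg : χ g = (Multiplicative.ofAdd 1) ^ k := by
          rw [← hψ]
          have : ((f.comp (H.comap f).subtype).codRestrict H hmem) g
              = (⟨f x, hwH⟩ : H) ^ k := by
            ext
            show f (g : G) = ((⟨f x, hwH⟩ : H) ^ k : H)
            simp [← hk]
          rw [hχ, MonoidHom.comp_apply, this, map_zpow]
        show x ^ (Multiplicative.toAdd (χ g)) = (g : G)
        rw [hχg, ← hk]
        norm_num
end

section
/- Every cyclic subgroup of a free group is a retract of a finite-index subgroup (Marshall Hall's theorem for cyclic subgroups). -/
open Equiv FreeGroup Multiplicative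

set_option linter.unusedSectionVars false
set_option maxHeartbeats 1000000


namespace HallCyclic
variable {α : Type*} [DecidableEq α]

/-- no adjacent cancelling pair -/
def NoCancel (M : List (α × Bool)) : Prop :=
  ∀ i (h : i + 1 < M.length), M[i+1] ≠ (M[i].1, !M[i].2)

theorem noCancel_of_reduce (M : List (α × Bool)) (hM : reduce M = M) : NoCancel M := by
  intro i h hc
  have hi : i < M.length := Nat.lt_of_succ_lt h
  have hsplit : M = M.take i ++ M[i] :: M[i+1] :: M.drop (i+2) := by
    conv_lhs => rw [← List.take_append_drop i M]
    congr 1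
    rw [List.drop_eq_getElem_cons hi, List.drop_eq_getElem_cons h]
  rw [hc] at hsplit
  have : reduce M = M.take i ++ (M[i].1, M[i].2) :: (M[i].1, !M[i].2) :: M.drop (i+2) := by
    rw [hM]; exact hsplit
  exact FreeGroup.reduce.not this

theorem reduce_of_noCancel (M : List (α × Bool)) (hM : NoCancel M) : reduce M = M := by
  induction M with
  | nil => rfl
  | cons a M ih =>
    have hM' : NoCancel M := by
      intro i h hc
      exact hM (i+1) (by simpa using h) (by simpa using hc)
    rw [FreeGroup.reduce.cons, ih hM']
    cases M with
    | nil => rfl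
    | cons b M' =>
      simp only []
      have h0 : b ≠ (a.1, !a.2) := hM 0 (by simp) 
      have : ¬ (a.1 = b.1 ∧ a.2 = !b.2) := by
        rintro ⟨h1, h2⟩
        exact h0 (by simp [h1, h2])
      rw [if_neg this]

end HallCyclic

namespace HallCyclic
variable {α : Type*} [DecidableEq α]

theorem noCancel_mid {h l : α × Bool} {K L : List (α × Bool)}
    (hL : L = h :: (K ++ [l])) (hnc : NoCancel L) : NoCancel K := by
  intro i hi hc
  have h1 : i + 1 + 1 < L.length := by simp [hL]; omega
  have e1 : L[i+1]'(Nat.lt_of_succ_lt h1) = K[i] := by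
    subst hL
    rw [List.getElem_cons_succ, List.getElem_append_left (by omega)]
  have e2 : L[i+1+1] = K[i+1] := by
    subst hL
    rw [List.getElem_cons_succ, List.getElem_append_left (by omega)]
  exact hnc (i+1) h1 (by rw [e1, e2]; exact hc)

theorem cyc_decomp_aux : ∀ (N : ℕ) (x : FreeGroup α), x.toWord.length ≤ N → x ≠ 1 →
    ∃ u w : FreeGroup α, x = u * w * u⁻¹ ∧ w ≠ 1 ∧
      ∀ g c, w.toWord.getLast? = some (g, c) → w.toWord.head? ≠ some (g, !c) := by
  intro N
  induction N with
  | zero =>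
    intro x hlen hx
    exact absurd (toWord_eq_nil_iff.mp (List.length_eq_zero_iff.mp (Nat.le_zero.mp hlen))) hx
  | succ N ih =>
    intro x hlen hx
    by_cases hcyc : ∀ g c, x.toWord.getLast? = some (g, c) → x.toWord.head? ≠ some (g, !c)
    · exact ⟨1, x, by group, hx, hcyc⟩
    push_neg at hcyc
    obtain ⟨g, c, hlast, hhead⟩ := hcyc
    set L := x.toWord with hLdef
    have hLne : L ≠ [] := fun h => hx (toWord_eq_nil_iff.mp h)
    have hred : reduce L = L := reduce_toWord x
    have hnc : NoCancel L := noCancel_of_reduce L hred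
    -- L = (g,!c) :: tail, tail ≠ []
    obtain ⟨hd, tl, hcons⟩ := List.exists_cons_of_ne_nil hLne
    have hhd : hd = (g, !c) := by
      rw [hcons] at hhead; simpa using hhead
    have htlne : tl ≠ [] := by
      rintro rfl
      rw [hcons, hhd] at hlast
      simp at hlast
    have hgl : tl.getLast htlne = (g, c) := by
      rw [hcons, List.getLast?_eq_getLast_of_ne_nil (List.cons_ne_nil hd tl)] at hlast
      rw [List.getLast_cons htlne] at hlast
      simpa using hlast
    have htl : tl = tl.dropLast ++ [(g, c)] := by
      conv_lhs => rw [← List.dropLast_append_getLast htlne]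
      rw [hgl]
    set K := tl.dropLast with hKdef
    have hLsplit : L = (g, !c) :: (K ++ [(g, c)]) := by rw [hcons, hhd, ← htl]
    have hncK : NoCancel K := noCancel_mid hLsplit hnc
    have hKne : K ≠ [] := by
      intro hKnil
      rw [hKnil] at hLsplit
      have h1 : 0 + 1 < L.length := by rw [hLsplit]; simp
      apply hnc 0 h1
      simp [hLsplit]
    -- y = mk K
    set y := mk K with hy
    have hyw : y.toWord = K := by rw [hy, toWord_mk, reduce_of_noCancel K hncK]
    have hyne : y ≠ 1 := fun h => hKne (by rw [← hyw, h, toWord_one])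
    have hlenK : K.length ≤ N := by
      have : L.length = K.length + 2 := by rw [hLsplit]; simp
      omega
    obtain ⟨u', w, hw, hw1, hwcyc⟩ := ih y (by rw [hyw]; exact hlenK) hyne
    -- x = mk [(g,!c)] * y * (mk [(g,!c)])⁻¹
    have hinv : (mk [((g : α), !c)])⁻¹ = mk [(g, c)] := by
      rw [inv_mk]; simp [invRev]
    have hxeq : x = mk [(g, !c)] * y * (mk [(g, !c)])⁻¹ := by
      rw [hinv, hy, mul_mk, mul_mk]
      have hl2 : ([(g, !c)] ++ K ++ [(g, c)] : List (α × Bool)) = (g, !c) :: (K ++ [(g, c)]) := by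
        simp
      rw [hl2, ← hLsplit, hLdef, mk_toWord]
    refine ⟨mk [(g, !c)] * u', w, ?_, hw1, hwcyc⟩
    rw [hxeq, hw]
    group


end HallCyclic


section
variable {β : Type*} [Fintype β] [DecidableEq β] {p q : β → Prop} [DecidablePred p] [DecidablePred q]

noncomputable def extendPerm (e : {s // p s} ≃ {s // q s}) : Equiv.Perm β :=
  (Equiv.sumCompl p).symm.trans ((Equiv.sumCongr e (Fintype.equivOfCardEq (by
    have h1 : Fintype.card {s // p s} = Fintype.card {s // q s} := Fintype.card_congr e
    simp [Fintype.card_subtype_compl, h1]))).trans (Equiv.sumCompl q))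

lemma extendPerm_apply (e : {s // p s} ≃ {s // q s}) {s : β} (hs : p s) :
    extendPerm e s = (e ⟨s, hs⟩ : β) := by
  simp [extendPerm, Equiv.sumCompl_symm_apply_of_pos hs]
end

namespace HallCyclic

/-- The action of permutations on `β → Multiplicative ℤ`. -/
def permAut (β : Type*) : Equiv.Perm β →* MulAut (β → Multiplicative ℤ) where
  toFun σ := MulEquiv.arrowCongr σ (MulEquiv.refl _)
  map_one' := by ext f t; rfl
  map_mul' σ τ := by ext f t; rfl

lemma permAut_apply {β : Type*} (σ : Equiv.Perm β) (f : β → Multiplicative ℤ) (t : β) :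
    permAut β σ f t = f (σ.symm t) := rfl

/-- wreath-type product -/
abbrev WP (n : ℕ) := (ZMod n → Multiplicative ℤ) ⋊[permAut (ZMod n)] Equiv.Perm (ZMod n)

section Machine
variable {α : Type*} [DecidableEq α]
variable {n : ℕ} [NeZero n] {a : ZMod n → α × Bool}

/-- cyclic no-cancellation -/
def Smooth (a : ZMod n → α × Bool) : Prop := ∀ s : ZMod n, a (s + 1) ≠ ((a s).1, !(a s).2)

lemma Smooth.noCan (hN : Smooth a) {s : ZMod n} {g : α}
    (h1 : a s = (g, false)) (h2 : a (s + 1) = (g, true)) : False :=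
  hN s (by rw [h1, h2]; simp)

lemma Smooth.noCan' (hN : Smooth a) {s : ZMod n} {g : α}
    (h1 : a s = (g, true)) (h2 : a (s + 1) = (g, false)) : False :=
  hN s (by rw [h1, h2]; simp)

def pdom (a : ZMod n → α × Bool) (g : α) (s : ZMod n) : Prop :=
  a (s - 1) = (g, true) ∨ a s = (g, false)

def qdom (a : ZMod n → α × Bool) (g : α) (t : ZMod n) : Prop :=
  a t = (g, true) ∨ a (t - 1) = (g, false)

instance (g : α) : DecidablePred (pdom a g) := fun _ => by unfold pdom; infer_instance
instance (g : α) : DecidablePred (qdom a g) := fun _ => by unfold qdom; infer_instance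

def domEquiv (hN : Smooth a) (g : α) : {s // pdom a g s} ≃ {t // qdom a g t} where
  toFun s := if h : a (s.1 - 1) = (g, true) then ⟨s.1 - 1, Or.inl h⟩
    else ⟨s.1 + 1, Or.inr (by simpa using s.2.resolve_left h)⟩
  invFun t := if h : a t.1 = (g, true) then ⟨t.1 + 1, Or.inl (by simpa using h)⟩
    else ⟨t.1 - 1, Or.inr (t.2.resolve_left h)⟩
  left_inv := by
    rintro ⟨s, hs⟩
    by_cases h : a (s - 1) = (g, true)
    · simp only [dif_pos h]
      exact Subtype.ext (by simp)
    · have hf : a s = (g, false) := hs.resolve_left h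
      have h2 : ¬ a (s + 1) = (g, true) := fun hc => (hN.noCan hf hc).elim
      simp only [dif_neg h, dif_neg h2]
      exact Subtype.ext (by simp)
  right_inv := by
    rintro ⟨t, ht⟩
    by_cases h : a t = (g, true)
    · simp only [dif_pos h]
      have : a (t + 1 - 1) = (g, true) := by rwa [add_sub_cancel_right]
      simp only [dif_pos this]
      exact Subtype.ext (by simp)
    · have hf : a (t - 1) = (g, false) := ht.resolve_left h
      have h2 : ¬ a (t - 1 - 1) = (g, true) := by
        intro hc
        exact hN.noCan' hc (by rwa [sub_add_cancel])
      simp only [dif_neg h, dif_neg h2]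
      exact Subtype.ext (by simp)

noncomputable def σg (hN : Smooth a) (g : α) : Equiv.Perm (ZMod n) :=
  extendPerm (domEquiv hN g)

lemma σg_pos (hN : Smooth a) {s : ZMod n} {g : α} (h : a s = (g, true)) :
    σg hN g (s + 1) = s := by
  have hp : pdom a g (s + 1) := Or.inl (by simpa using h)
  rw [σg, extendPerm_apply _ hp]
  have hc : a (s + 1 - 1) = (g, true) := by simpa using h
  simp only [domEquiv, Equiv.coe_fn_mk, dif_pos hc]
  simp

lemma σg_neg (hN : Smooth a) {s : ZMod n} {g : α} (h : a s = (g, false)) :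
    σg hN g s = s + 1 := by
  have hp : pdom a g s := Or.inr h
  rw [σg, extendPerm_apply _ hp]
  have hc : ¬ a (s - 1) = (g, true) := fun hc =>
    (hN.noCan' hc (by rwa [sub_add_cancel])).elim
  simp only [domEquiv, Equiv.coe_fn_mk, dif_neg hc]

/-- the marking cocycle function -/
def fmark (n : ℕ) (b : α) (eb : Bool) (g : α) : ZMod n → Multiplicative ℤ := fun s =>
  ofAdd (if eb then (if g = b ∧ s = 0 then 1 else 0) else (if g = b ∧ s = 1 then -1 else 0))

noncomputable def Φmap (hN : Smooth a) (b : α) (eb : Bool) : FreeGroup α →* WP n :=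
  FreeGroup.lift (fun g => ⟨fmark n b eb g, σg hN g⟩)

lemma Φmap_of (hN : Smooth a) (b : α) (eb : Bool) (g : α) :
    Φmap hN b eb (of g) = ⟨fmark n b eb g, σg hN g⟩ :=
  FreeGroup.lift_apply_of

def letterOf {α : Type*} : α × Bool → FreeGroup α :=
  fun x => if x.2 then of x.1 else (of x.1)⁻¹

def wordUpTo (a : ZMod n → α × Bool) : ℕ → FreeGroup α
  | 0 => 1
  | (j+1) => wordUpTo a j * letterOf (a (j : ZMod n))

lemma right_letter (hN : Smooth a) (b : α) (eb : Bool) (s : ZMod n) :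
    (Φmap hN b eb (letterOf (a s))).right (s + 1) = s := by
  rcases ha : a s with ⟨g, c⟩
  cases c with
  | true =>
    rw [show letterOf ((g, true) : α × Bool) = of g from rfl, Φmap_of]
    exact σg_pos hN ha
  | false =>
    rw [show letterOf ((g, false) : α × Bool) = (of g)⁻¹ from rfl,
      map_inv (Φmap hN b eb) (of g), Φmap_of, SemidirectProduct.inv_right]
    show (σg hN g)⁻¹ (s + 1) = s
    rw [← σg_neg hN ha]
    exact Equiv.symm_apply_apply _ _

lemma right_word (hN : Smooth a) (b : α) (eb : Bool) (j : ℕ) :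
    (Φmap hN b eb (wordUpTo a j)).right ((j : ZMod n)) = 0 := by
  induction j with
  | zero => simp [wordUpTo]
  | succ j ih =>
    rw [wordUpTo, map_mul (Φmap hN b eb) _ _, SemidirectProduct.mul_right,
      show ((j + 1 : ℕ) : ZMod n) = (j : ZMod n) + 1 by push_cast; ring,
      Equiv.Perm.mul_apply, right_letter hN b eb ((j : ZMod n))]
    exact ih

lemma left_letter (hN : Smooth a) (b : α) (eb : Bool) (s : ZMod n) :
    (Φmap hN b eb (letterOf (a s))).left s =
      (if (a s).2 then fmark n b eb (a s).1 s else (fmark n b eb (a s).1 (s+1))⁻¹) := by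
  rcases ha : a s with ⟨g, c⟩
  cases c with
  | true =>
    rw [show letterOf ((g, true) : α × Bool) = of g from rfl, Φmap_of]
    simp
  | false =>
    rw [show letterOf ((g, false) : α × Bool) = (of g)⁻¹ from rfl,
      map_inv (Φmap hN b eb) (of g), Φmap_of, SemidirectProduct.inv_left]
    simp only [if_neg Bool.false_ne_true]
    show (permAut (ZMod n) (σg hN g)⁻¹ (fmark n b eb g)⁻¹) s = (fmark n b eb g (s + 1))⁻¹
    rw [permAut_apply]
    have hsymm : ((σg hN g)⁻¹ : Equiv.Perm (ZMod n)).symm s = σg hN g s := rfl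
    rw [hsymm, σg_neg hN ha]
    rfl

lemma left_letter_zero (hN : Smooth a) {b : α} {eb : Bool} (hab0 : a 0 = (b, eb)) :
    (Φmap hN b eb (letterOf (a 0))).left 0 = ofAdd 1 := by
  rw [left_letter hN b eb 0, hab0]
  cases eb with
  | true => simp [fmark]
  | false =>
    simp only [if_neg Bool.false_ne_true]
    rw [zero_add]
    simp [fmark]
  
lemma left_letter_ne (hN : Smooth a) {b : α} {eb : Bool} (hab0 : a 0 = (b, eb))
    (s : ZMod n) (hs : s ≠ 0) :
    (Φmap hN b eb (letterOf (a s))).left s = 1 := by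
  rw [left_letter hN b eb s]
  rcases ha : a s with ⟨g, c⟩
  cases c with
  | true =>
    simp only [if_pos rfl]
    cases eb with
    | true => simp [fmark, hs]
    | false =>
      have : ¬ (g = b ∧ s = (1 : ZMod n)) := by
        rintro ⟨rfl, rfl⟩
        exact hN.noCan (s := 0) hab0 (by rwa [zero_add])
      simp [fmark, this, hs]
  | false =>
    simp only [if_neg Bool.false_ne_true]
    cases eb with
    | true =>
      have : ¬ (g = b ∧ s + 1 = (0 : ZMod n)) := by
        rintro ⟨rfl, h1⟩
        exact hN.noCan ha (by rw [h1, hab0])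
      simp [fmark, this, hs]
    | false =>
      have : ¬ (g = b ∧ s + 1 = (1 : ZMod n)) := by
        rintro ⟨rfl, h1⟩
        exact hs (by rwa [add_eq_right] at h1)
      simp [fmark, this, hs]

lemma left_word (hN : Smooth a) {b : α} {eb : Bool} (hab0 : a 0 = (b, eb)) :
    ∀ j : ℕ, j ≤ n → (Φmap hN b eb (wordUpTo a j)).left 0
      = ofAdd (if j = 0 then 0 else 1) := by
  intro j
  induction j with
  | zero => intro _; simp [wordUpTo]
  | succ j ih =>
    intro hj
    have hjn : j < n := by omega
    rw [wordUpTo, map_mul (Φmap hN b eb) _ _, SemidirectProduct.mul_left]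
    rw [show ∀ f g : ZMod n → Multiplicative ℤ, (f * g) 0 = f 0 * g 0 from fun _ _ => rfl]
    have hsymm : ((Φmap hN b eb (wordUpTo a j)).right).symm 0 = (j : ZMod n) := by
      rw [Equiv.symm_apply_eq]
      exact (right_word hN b eb j).symm
    rw [permAut_apply, hsymm]
    rw [ih (le_of_lt hjn)]
    by_cases hj0 : j = 0
    · subst hj0
      rw [show ((0:ℕ) : ZMod n) = 0 from Nat.cast_zero]
      rw [left_letter_zero hN hab0]
      simp
    · have hne : ((j : ℕ) : ZMod n) ≠ 0 := by
        rw [Ne, ZMod.natCast_eq_zero_iff]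
        intro hdvd
        exact hj0 (Nat.eq_zero_of_dvd_of_lt hdvd hjn)
      rw [left_letter_ne hN hab0 _ hne]
      simp [hj0]

end Machine
end HallCyclic

namespace HallCyclic

section Bridge
variable {α : Type*} [DecidableEq α]

variable (M : List (α × Bool))

/-- the letter function on `ZMod M.length` -/
def aOf [NeZero M.length] : ZMod M.length → α × Bool :=
  fun s => M[s.val]'(ZMod.val_lt s)

lemma aOf_eval [NeZero M.length] (j : ℕ) (hj : j < M.length) :
    aOf M ((j : ℕ) : ZMod M.length) = M[j] := by
  unfold aOf
  congr 1
  exact ZMod.val_cast_of_lt hj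

lemma smooth_aOf [NeZero M.length] (hred : reduce M = M) (hne : M ≠ [])
    (hcyc : ∀ g c, M.getLast? = some (g, c) → M.head? ≠ some (g, !c)) :
    Smooth (aOf M) := by
  have hnc : NoCancel M := noCancel_of_reduce M hred
  intro s
  have hi : s.val < M.length := ZMod.val_lt s
  have hs : ((s.val : ℕ) : ZMod M.length) = s := ZMod.natCast_zmod_val s
  by_cases hlt : s.val + 1 < M.length
  · have h1 : s + 1 = ((s.val + 1 : ℕ) : ZMod M.length) := by push_cast [hs]; ring
    rw [h1, aOf_eval M _ hlt, show aOf M s = M[s.val]'hi from rfl]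
    exact hnc s.val hlt
  · have hend : s.val + 1 = M.length := by omega
    have h1 : s + 1 = ((0 : ℕ) : ZMod M.length) := by
      rw [← hs]
      rw [show ((s.val : ZMod M.length) + 1) = ((s.val + 1 : ℕ) : ZMod M.length) by
        push_cast; ring, hend]
      simp
    rw [h1, aOf_eval M 0 (by omega), show aOf M s = M[s.val]'hi from rfl]
    intro hcon
    have hlast : M.getLast? = some (M[s.val]'hi) := by
      rw [List.getLast?_eq_getElem?, show M.length - 1 = s.val from by omega,
        List.getElem?_eq_getElem hi]
    have hhead : M.head? = some (M[0]'(by omega)) := by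
      rw [List.head?_eq_getElem?, List.getElem?_eq_getElem (by omega)]
    exact hcyc (M[s.val]'hi).1 (M[s.val]'hi).2 (by rw [hlast]) (by rw [hhead, hcon])

lemma letterOf_eq_mk (x : α × Bool) : letterOf x = mk [x] := by
  rcases x with ⟨g, c⟩
  cases c with
  | true => rfl
  | false =>
    show (of g)⁻¹ = mk [(g, false)]
    rw [show of g = mk [(g, true)] from rfl, inv_mk]
    simp [invRev]

lemma wordUpTo_eq_mk [NeZero M.length] :
    ∀ j, j ≤ M.length → wordUpTo (aOf M) j = mk (M.take j) := by
  intro j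
  induction j with
  | zero =>
    intro _
    show (1 : FreeGroup α) = mk []
    rw [← toWord_one (α := α), mk_toWord]
  | succ j ih =>
    intro hj
    have hjn : j < M.length := by omega
    rw [wordUpTo, ih (le_of_lt hjn), aOf_eval M j hjn, letterOf_eq_mk, mul_mk]
    congr 1
    rw [List.take_succ]
    simp [List.getElem?_eq_getElem hjn]

end Bridge
end HallCyclic

/-- Marshall Hall's theorem for cyclic subgroups: every cyclic subgroup of a free
group is a retract of a finite-index subgroup. -/
theorem free_group_virtual_retract_cyclic (α : Type*) (x : FreeGroup α) :
    ∃ F' : Subgroup (FreeGroup α), F'.index ≠ 0 ∧ Subgroup.zpowers x ≤ F' ∧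
      ∃ r : F' →* FreeGroup α, (∀ g : F', r g ∈ Subgroup.zpowers x) ∧
        ∀ g : F', (g : FreeGroup α) ∈ Subgroup.zpowers x → r g = (g : FreeGroup α) := by
  classical
  by_cases hx1 : x = 1
  · refine ⟨⊤, by simp [Subgroup.index_top], le_top, 1, fun g => one_mem _, fun g hg => ?_⟩
    subst hx1
    rw [Subgroup.zpowers_one_eq_bot, Subgroup.mem_bot] at hg
    simp [hg]
  -- cyclically reduced decomposition
  obtain ⟨u, w, hxw, hw1, hwcyc⟩ := HallCyclic.cyc_decomp_aux x.toWord.length x le_rfl hx1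
  set M := w.toWord with hM
  have hMne : M ≠ [] := fun h => hw1 (FreeGroup.toWord_eq_nil_iff.mp h)
  have hred : FreeGroup.reduce M = M := FreeGroup.reduce_toWord w
  haveI : NeZero M.length := ⟨fun h => hMne (List.length_eq_zero_iff.mp h)⟩
  set n := M.length with hn
  set a : ZMod n → α × Bool := HallCyclic.aOf M with ha
  have hN : HallCyclic.Smooth a := HallCyclic.smooth_aOf M hred hMne hwcyc
  set b : α := (a 0).1 with hb
  set eb : Bool := (a 0).2 with heb
  have hab0 : a 0 = (b, eb) := rfl
  set Φ := HallCyclic.Φmap hN b eb with hΦ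
  set Θ : FreeGroup α →* HallCyclic.WP n := Φ.comp (MulAut.conj u⁻¹).toMonoidHom with hΘ
  have hΘapp : ∀ z : FreeGroup α, Θ z = Φ (u⁻¹ * z * u) := by
    intro z
    simp [hΘ, MulAut.conj]
  have hΘx : Θ x = Φ w := by
    rw [hΘapp, hxw]
    congr 1
    group
  have hword : HallCyclic.wordUpTo a n = w := by
    rw [ha, HallCyclic.wordUpTo_eq_mk M n le_rfl, List.take_length, hM, FreeGroup.mk_toWord]
  have hΦw_right : (Φ w).right 0 = 0 := by
    rw [← hword]
    have := HallCyclic.right_word hN b eb n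
    rwa [ZMod.natCast_self] at this
  have hΦw_left : (Φ w).left 0 = Multiplicative.ofAdd 1 := by
    rw [← hword]
    rw [HallCyclic.left_word hN hab0 n le_rfl]
    simp [NeZero.ne n]
  -- the finite-index subgroup
  set S := MulAction.stabilizer (Equiv.Perm (ZMod n)) (0 : ZMod n) with hS
  set ρ : FreeGroup α →* Equiv.Perm (ZMod n) := SemidirectProduct.rightHom.comp Θ with hρ
  have hxmem : x ∈ S.comap ρ := by
    rw [Subgroup.mem_comap, MulAction.mem_stabilizer_iff]
    show (ρ x) • (0 : ZMod n) = 0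
    rw [Equiv.Perm.smul_def, hρ]
    show (Θ x).right 0 = 0
    rw [hΘx]
    exact hΦw_right
  refine ⟨S.comap ρ, ?_, ?_, ?_⟩
  · rw [Subgroup.index_comap, Subgroup.relIndex]
    exact Subgroup.index_ne_zero_of_finite
  · exact Subgroup.zpowers_le.mpr hxmem
  · have hstab : ∀ g : ↥(S.comap ρ), (Θ (g : FreeGroup α)).right 0 = 0 := by
      intro g
      have h2 := g.2
      rw [Subgroup.mem_comap, MulAction.mem_stabilizer_iff] at h2
      rw [Equiv.Perm.smul_def] at h2
      exact h2
    set χ : ↥(S.comap ρ) →* Multiplicative ℤ := MonoidHom.mk'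
      (fun g => (Θ (g : FreeGroup α)).left 0)
      (by
        intro g h
        show (Θ ((g : FreeGroup α) * (h : FreeGroup α))).left 0 = _
        rw [map_mul Θ, SemidirectProduct.mul_left]
        rw [show ∀ f f' : ZMod n → Multiplicative ℤ, (f * f') 0 = f 0 * f' 0
          from fun _ _ => rfl]
        rw [HallCyclic.permAut_apply]
        have h0 : ((Θ (g : FreeGroup α)).right).symm 0 = 0 := by
          rw [Equiv.symm_apply_eq]
          exact (hstab g).symm
        rw [h0]) with hχ
    have hχx : χ ⟨x, hxmem⟩ = Multiplicative.ofAdd 1 := by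
      show (Θ x).left 0 = Multiplicative.ofAdd 1
      rw [hΘx]
      exact hΦw_left
    refine ⟨(zpowersHom (FreeGroup α) x).comp χ, fun g => ?_, fun g hg => ?_⟩
    · exact Subgroup.mem_zpowers_iff.mpr ⟨(χ g).toAdd, rfl⟩
    · obtain ⟨k, hk⟩ := Subgroup.mem_zpowers_iff.mp hg
      have hgeq : g = (⟨x, hxmem⟩ : ↥(S.comap ρ)) ^ k := by
        apply Subtype.ext
        rw [← hk]
        rfl
      rw [hgeq, map_zpow]
      show ((zpowersHom (FreeGroup α) x) (χ ⟨x, hxmem⟩)) ^ k = _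
      rw [hχx, zpowersHom_apply, toAdd_ofAdd, zpow_one]
      norm_cast
end

section
/- Let G be a residually free group fitting in a short exact sequence 1 → A → G → Z → 1 with A ≅ Z^2 free abelian of rank 2 (i.e. G = Z^2 ⋊ Z). Then G is abelian, hence isomorphic to Z^3. -/
open scoped commutatorElement

/-- In a free group `FreeGroup S`, if all commutators commute (metabelian), then the
group is abelian. -/
lemma freeGroup_metabelian_comm {S : Type*}
    (h : ∀ u v w z : FreeGroup S, ⁅⁅u, v⁆, ⁅w, z⁆⁆ = 1) :
    ∀ u v : FreeGroup S, u * v = v * u := by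
  classical
  have hS : ∀ s t : S, s = t := by
    intro s t
    by_contra hst
    let φ : FreeGroup S →* FreeGroup Bool :=
      FreeGroup.lift (fun x =>
        if x = s then FreeGroup.of false else if x = t then FreeGroup.of true else 1)
    have key := h (.of s) (.of t) (.of s) (.of t * .of t)
    apply_fun φ at key
    rw [map_commutatorElement, map_commutatorElement, map_commutatorElement, map_mul,
      map_one] at key
    have hφs : φ (FreeGroup.of s) = FreeGroup.of false := by simp [φ]
    have hφt : φ (FreeGroup.of t) = FreeGroup.of true := by
      simp [φ, if_neg (Ne.symm hst)]
    rw [hφs, hφt] at key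
    revert key
    decide
  -- all generators are equal, so the free group is abelian
  have base : ∀ (x : S) (g : FreeGroup S), Commute (FreeGroup.of x) g := by
    intro x g
    induction g using FreeGroup.induction_on with
    | C1 => exact Commute.one_right _
    | of y => rw [show y = x from (hS y x)]
    | inv_of y hy => exact hy.inv_right
    | mul y z hy hz => exact hy.mul_right hz
  intro u v
  induction u using FreeGroup.induction_on with
  | C1 => simp
  | of y => exact base y v
  | inv_of y hy => exact ((base y v).inv_left).eq
  | mul y z hy hz =>
      exact (Commute.mul_left (hy : Commute _ v) (hz : Commute _ v)).eq

/-- Any (abstract) free group in which all commutators commute is abelian. -/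
lemma isFreeGroup_metabelian_comm {H : Type*} [Group H] [IsFreeGroup H]
    (h : ∀ u v w z : H, ⁅⁅u, v⁆, ⁅w, z⁆⁆ = 1) :
    ∀ u v : H, u * v = v * u := by
  let e := IsFreeGroup.toFreeGroup H
  intro u v
  apply e.injective
  rw [map_mul, map_mul]
  refine freeGroup_metabelian_comm (fun p q r s => ?_) (e u) (e v)
  have key := h (e.symm p) (e.symm q) (e.symm r) (e.symm s)
  apply_fun e at key
  rwa [map_commutatorElement, map_commutatorElement, map_commutatorElement,
    e.apply_symm_apply, e.apply_symm_apply, e.apply_symm_apply, e.apply_symm_apply,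
    map_one] at key

/-- A residually free group which is an extension of `ℤ` by `ℤ²` is abelian, and
hence isomorphic to `ℤ³`. -/
theorem residually_free_torus_bundle_group (G : Type*) [Group G]
    (hRF : ∀ g : G, g ≠ 1 → ∃ f : G →* FreeGroup (Fin 2), f g ≠ 1)
    (A : Subgroup G) [A.Normal]
    (hA : Nonempty (A ≃* Multiplicative (ℤ × ℤ)))
    (hQ : Nonempty ((G ⧸ A) ≃* Multiplicative ℤ)) :
    (∀ x y : G, x * y = y * x) ∧ Nonempty (G ≃* Multiplicative (ℤ × ℤ × ℤ)) := by
  obtain ⟨eA⟩ := hA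
  obtain ⟨eQ⟩ := hQ
  -- elements of A commute
  have hAcomm : ∀ α β : G, α ∈ A → β ∈ A → α * β = β * α := by
    intro α β hα hβ
    have : (⟨α, hα⟩ : A) * ⟨β, hβ⟩ = ⟨β, hβ⟩ * ⟨α, hα⟩ := by
      apply eA.injective
      rw [map_mul, map_mul, mul_comm]
    simpa [Subtype.ext_iff] using this
  -- all commutators of G lie in A
  have hmemA : ∀ p q : G, ⁅p, q⁆ ∈ A := by
    intro p q
    rw [← QuotientGroup.eq_one_iff]
    have : ((⁅p, q⁆ : G) : G ⧸ A) = ⁅((p : G) : G ⧸ A), ((q : G) : G ⧸ A)⁆ :=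
      map_commutatorElement (QuotientGroup.mk' A) p q
    rw [this]
    apply commutatorElement_eq_one_iff_commute.mpr
    apply eQ.injective
    rw [map_mul, map_mul, mul_comm]
  -- G is metabelian
  have hmeta : ∀ p q r s : G, ⁅⁅p, q⁆, ⁅r, s⁆⁆ = 1 := fun p q r s =>
    commutatorElement_eq_one_iff_commute.mpr (hAcomm _ _ (hmemA p q) (hmemA r s))
  -- G is abelian
  have hcomm : ∀ x y : G, x * y = y * x := by
    intro x y
    by_contra hxy
    have h1 : (⁅x, y⁆ : G) ≠ 1 := fun h =>
      hxy (commutatorElement_eq_one_iff_commute.mp h)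
    obtain ⟨f, hf⟩ := hRF _ h1
    rw [map_commutatorElement] at hf
    have hab : f x * f y ≠ f y * f x := fun h =>
      hf (commutatorElement_eq_one_iff_commute.mpr h)
    set a := f x with ha
    set b := f y with hb
    let K : Subgroup (FreeGroup (Fin 2)) := Subgroup.closure {a, b}
    have hKrange : K ≤ f.range := by
      apply (Subgroup.closure_le _).mpr
      rintro z hz
      rcases hz with rfl | hz
      · exact ⟨x, rfl⟩
      · rw [Set.mem_singleton_iff] at hz; subst hz; exact ⟨y, rfl⟩
    have hKmeta : ∀ u v w z : K, ⁅⁅u, v⁆, ⁅w, z⁆⁆ = 1 := by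
      intro u v w z
      obtain ⟨p, hp⟩ := hKrange u.2
      obtain ⟨q, hq⟩ := hKrange v.2
      obtain ⟨r, hr⟩ := hKrange w.2
      obtain ⟨s, hs⟩ := hKrange z.2
      apply Subtype.ext
      show ((⁅⁅u, v⁆, ⁅w, z⁆⁆ : K) : FreeGroup (Fin 2)) = 1
      have : ((⁅⁅u, v⁆, ⁅w, z⁆⁆ : K) : FreeGroup (Fin 2)) =
          ⁅⁅(u : FreeGroup (Fin 2)), (v : FreeGroup (Fin 2))⁆,
            ⁅(w : FreeGroup (Fin 2)), (z : FreeGroup (Fin 2))⁆⁆ := by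
        simp [commutatorElement_def]
      rw [this, ← hp, ← hq, ← hr, ← hs, ← map_commutatorElement,
        ← map_commutatorElement, ← map_commutatorElement, hmeta, map_one]
    have haK : a ∈ K := Subgroup.subset_closure (by simp)
    have hbK : b ∈ K := Subgroup.subset_closure (by simp)
    have := isFreeGroup_metabelian_comm hKmeta ⟨a, haK⟩ ⟨b, hbK⟩
    rw [Subtype.ext_iff] at this
    exact hab this
  refine ⟨hcomm, ?_⟩
  -- construct the isomorphism with ℤ³
  obtain ⟨g, hg⟩ := QuotientGroup.mk_surjective (eQ.symm (Multiplicative.ofAdd 1))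
  have hgQ : eQ ((g : G) : G ⧸ A) = Multiplicative.ofAdd 1 := by
    rw [hg, eQ.apply_symm_apply]
  let θ : A × Multiplicative ℤ →* G :=
    { toFun := fun p => (p.1 : G) * g ^ (Multiplicative.toAdd p.2)
      map_one' := by simp
      map_mul' := by
        intro p q
        show ((p.1 * q.1 : A) : G) * g ^ (Multiplicative.toAdd (p.2 * q.2)) = _
        push_cast
        rw [show Multiplicative.toAdd (p.2 * q.2) =
          Multiplicative.toAdd p.2 + Multiplicative.toAdd q.2 from rfl, zpow_add]
        rw [mul_assoc, mul_assoc, ← mul_assoc (g ^ Multiplicative.toAdd p.2),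
          hcomm (g ^ Multiplicative.toAdd p.2) (q.1 : G), mul_assoc] }
  have hθinj : Function.Injective θ := by
    rw [injective_iff_map_eq_one]
    rintro ⟨α, n⟩ hone
    replace hone : (α : G) * g ^ (Multiplicative.toAdd n) = 1 := hone
    have hq1 : ((((α : G) * g ^ (Multiplicative.toAdd n) : G)) : G ⧸ A) = 1 := by
      rw [hone]; simp
    rw [QuotientGroup.mk_mul, (QuotientGroup.eq_one_iff (α : G)).mpr α.2,
      one_mul] at hq1
    apply_fun eQ at hq1
    rw [map_one, QuotientGroup.mk_zpow, map_zpow, hgQ] at hq1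
    have hn : Multiplicative.toAdd n = 0 := by
      have := congrArg Multiplicative.toAdd hq1
      simpa using this
    have hα : (α : G) = 1 := by
      rw [hn, zpow_zero, mul_one] at hone
      exact hone
    have : n = 1 := by
      have := congrArg Multiplicative.ofAdd hn
      simpa using this
    rw [Prod.ext_iff]
    exact ⟨Subtype.ext hα, this⟩
  have hθsurj : Function.Surjective θ := by
    intro x
    set n : ℤ := Multiplicative.toAdd (eQ ((x : G) : G ⧸ A)) with hn
    have hmem : x * g ^ (-n) ∈ A := by
      rw [← QuotientGroup.eq_one_iff]
      rw [QuotientGroup.mk_mul]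
      apply eQ.injective
      rw [map_mul, map_one, QuotientGroup.mk_zpow, map_zpow, hgQ]
      have : eQ ((x : G) : G ⧸ A) = Multiplicative.ofAdd n := by
        rw [hn]; simp
      rw [this]
      have : (Multiplicative.ofAdd (1 : ℤ)) ^ (-n) = Multiplicative.ofAdd (-n) := by
        simp [← ofAdd_zsmul]
      rw [this, ← ofAdd_add]
      simp
    refine ⟨(⟨x * g ^ (-n), hmem⟩, Multiplicative.ofAdd n), ?_⟩
    show (x * g ^ (-n)) * g ^ (Multiplicative.toAdd (Multiplicative.ofAdd n)) = x
    rw [toAdd_ofAdd, mul_assoc, ← zpow_add]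
    simp
  let e3 : A × Multiplicative ℤ ≃* G := MulEquiv.ofBijective θ ⟨hθinj, hθsurj⟩
  exact ⟨e3.symm.trans <| (eA.prodCongr (MulEquiv.refl (Multiplicative ℤ))).trans <|
    ((MulEquiv.prodMultiplicative (ℤ × ℤ) ℤ).symm).trans <|
    AddEquiv.toMultiplicative (AddEquiv.prodAssoc : (ℤ × ℤ) × ℤ ≃+ ℤ × ℤ × ℤ)⟩
end

section
/- Let G be a group with presentation ⟨a1, b1, ..., ag, bg, z | [a1,b1]···[ag,bg] = z^e, z central⟩ with e ≠ 0 (the fundamental group of a non-trivial circle bundle of Euler number e over a closed orientable surface of genus g). Then every homomorphism from G to a free group kills z, and hence if g ≥ 1 and G is non-abelian, G is not residually free. -/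
open FreeGroup

open scoped commutatorElement

private lemma aux_replicate_of_append {γ : Type*} :
    ∀ (L : List γ) (a : γ), L ++ [a] = a :: L → L = List.replicate L.length a
  | [], _, _ => rfl
  | b :: t, a, h => by
    rw [List.cons_append, List.cons.injEq] at h
    obtain ⟨rfl, h2⟩ := h
    have := aux_replicate_of_append t b h2
    simp only [List.length_cons, List.replicate_succ, List.cons.injEq, true_and]
    exact this

private lemma aux_word_replicate {β : Type*} [DecidableEq β] {q : β × Bool}
    {t : List (β × Bool)} (hred : FreeGroup.reduce (q :: t) = q :: t) (s : β × Bool)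
    (hmk : FreeGroup.mk (s :: (q :: t)) = FreeGroup.mk ((q :: t) ++ [s]))
    (hhead : ¬(s.1 = q.1 ∧ s.2 = !q.2)) :
    q :: t = List.replicate (q :: t).length s := by
  have hsl : FreeGroup.reduce (s :: (q :: t)) = s :: (q :: t) := by
    rw [FreeGroup.reduce.cons, hred]
    simp [hhead]
  have hr : FreeGroup.reduce (s :: (q :: t)) = FreeGroup.reduce ((q :: t) ++ [s]) :=
    FreeGroup.reduce.sound hmk
  have hsub : List.Sublist (s :: (q :: t)) ((q :: t) ++ [s]) := by
    have h1 := (FreeGroup.reduce.red (L := (q :: t) ++ [s])).sublist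
    rwa [← hr, hsl] at h1
  have heq : (q :: t) ++ [s] = s :: (q :: t) :=
    (hsub.eq_of_length (by simp)).symm
  exact aux_replicate_of_append _ _ heq

private lemma aux_central_eq_one {β : Type*} [DecidableEq β] {x y : β} (hxy : x ≠ y)
    {c : FreeGroup β} (hc : ∀ g : FreeGroup β, g * c = c * g) : c = 1 := by
  by_contra hc1
  have hred : FreeGroup.reduce c.toWord = c.toWord := FreeGroup.reduce_toWord c
  have hmkL : FreeGroup.mk c.toWord = c := FreeGroup.mk_toWord
  have hne : c.toWord ≠ [] := fun h => hc1 (FreeGroup.toWord_eq_nil_iff.1 h)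
  obtain ⟨q, t, hqt⟩ := List.exists_cons_of_ne_nil hne
  rw [hqt] at hred hmkL
  have key : ∀ s : β × Bool, ¬(s.1 = q.1 ∧ s.2 = !q.2) →
      q :: t = List.replicate (q :: t).length s := by
    intro s hs
    refine aux_word_replicate hred s ?_ hs
    have h1 : FreeGroup.mk (s :: (q :: t)) = FreeGroup.mk [s] * FreeGroup.mk (q :: t) := by
      rw [FreeGroup.mul_mk]; rfl
    rw [h1, hmkL, hc, ← hmkL, FreeGroup.mul_mk]
  have h1 : q :: t = List.replicate (q :: t).length q := key q (by simp)
  set w : β := if q.1 = x then y else x with hw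
  have hwq : w ≠ q.1 := by
    rcases eq_or_ne q.1 x with h | h
    · rw [hw, if_pos h, h]; exact Ne.symm hxy
    · rw [hw, if_neg h]; exact Ne.symm h
  have h2 : q :: t = List.replicate (q :: t).length (w, true) :=
    key (w, true) (fun h => hwq h.1)
  rw [List.length_cons, List.replicate_succ, List.cons.injEq] at h2
  exact hwq (congrArg Prod.fst h2.1).symm

private lemma aux_of_not_commute {β : Type*} {x y : β} (hxy : x ≠ y) :
    ¬ Commute (FreeGroup.of x) (FreeGroup.of y) := by
  classical
  intro h
  have h1 : FreeGroup.mk [(x, true), (y, true)] = FreeGroup.mk [(y, true), (x, true)] := by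
    have : FreeGroup.mk [(x, true)] * FreeGroup.mk [(y, true)]
        = FreeGroup.mk [(y, true)] * FreeGroup.mk [(x, true)] := h
    rwa [FreeGroup.mul_mk, FreeGroup.mul_mk] at this
  have h2 := FreeGroup.reduce.sound h1
  have hx : FreeGroup.reduce [(x, true), (y, true)] = [(x, true), (y, true)] := by
    rw [FreeGroup.reduce.cons, FreeGroup.reduce_singleton]
    simp [hxy]
  have hy : FreeGroup.reduce [(y, true), (x, true)] = [(y, true), (x, true)] := by
    rw [FreeGroup.reduce.cons, FreeGroup.reduce_singleton]
    simp [Ne.symm hxy]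
  rw [hx, hy] at h2
  rw [List.cons.injEq, Prod.mk.injEq] at h2
  exact hxy h2.1.1

private lemma aux_free_central {H : Type*} [Group H] [IsFreeGroup H]
    {c : H} (hc1 : c ≠ 1) (hcen : ∀ h : H, h * c = c * h) :
    (∀ u v : H, Commute u v) ∧ ∀ (w : H) (n : ℤ), n ≠ 0 → w ^ n = 1 → w = 1 := by
  classical
  set X := IsFreeGroup.Generators H with hX
  set e : H ≃* FreeGroup X := IsFreeGroup.toFreeGroup H with he
  have hXsub : ∀ x y : X, x = y := by
    by_contra h
    push_neg at h
    obtain ⟨x, y, hxy⟩ := h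
    have hcen' : ∀ g : FreeGroup X, g * e c = e c * g := by
      intro g
      have h1 := hcen (e.symm g)
      have := congrArg e h1
      simpa [_root_.map_mul] using this
    have : e c = 1 := aux_central_eq_one hxy hcen'
    exact hc1 (by simpa using congrArg e.symm this)
  rcases isEmpty_or_nonempty X with hE | hne
  · exfalso
    apply hc1
    have hnil : (e c).toWord = [] := by
      cases h : (e c).toWord with
      | nil => rfl
      | cons p _ => exact (hE.false p.1).elim
    have : e c = 1 := FreeGroup.toWord_eq_nil_iff.1 hnil
    simpa using congrArg e.symm this
  · obtain ⟨x₀⟩ := hne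
    set g : H := e.symm (FreeGroup.of x₀) with hg
    have hgen : ∀ u : H, ∃ n : ℤ, u = g ^ n := by
      intro u
      have h1 : e u ∈ Subgroup.closure (Set.range (FreeGroup.of : X → FreeGroup X)) := by
        rw [FreeGroup.closure_range_of]; trivial
      have hr : Set.range (FreeGroup.of : X → FreeGroup X) = {FreeGroup.of x₀} := by
        ext v
        constructor
        · rintro ⟨s, rfl⟩; rw [hXsub s x₀]; rfl
        · rintro rfl; exact ⟨x₀, rfl⟩
      rw [hr, ← Subgroup.zpowers_eq_closure, Subgroup.mem_zpowers_iff] at h1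
      obtain ⟨n, hn⟩ := h1
      refine ⟨n, ?_⟩
      have := congrArg e.symm hn
      simpa [_root_.map_zpow, hg] using this.symm
    have hord : ∀ k : ℤ, g ^ k = 1 → k = 0 := by
      intro k hk
      have h1 : (FreeGroup.of x₀ : FreeGroup X) ^ k = 1 := by
        have := congrArg e hk
        simpa [_root_.map_zpow, hg] using this
      have h2 := congrArg (FreeGroup.lift fun _ : X => Multiplicative.ofAdd (1 : ℤ)) h1
      simp only [_root_.map_zpow, FreeGroup.lift_apply_of, _root_.map_one] at h2
      have h3 := congrArg Multiplicative.toAdd h2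
      simpa using h3
    constructor
    · intro u v
      obtain ⟨m, rfl⟩ := hgen u
      obtain ⟨n, rfl⟩ := hgen v
      exact (Commute.refl g).zpow_zpow m n
    · intro w n hn hw
      obtain ⟨m, rfl⟩ := hgen w
      rw [← zpow_mul] at hw
      rcases mul_eq_zero.1 (hord _ hw) with h | h
      · simp [h]
      · exact absurd h hn

private lemma aux_freeGroup_ct {α : Type} {c : FreeGroup α} (hc : c ≠ 1) :
    (∀ u v : FreeGroup α, Commute u c → Commute v c → Commute u v) ∧
    (∀ n : ℤ, n ≠ 0 → c ^ n = 1 → False) := by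
  set H := Subgroup.centralizer ({c} : Set (FreeGroup α)) with hH
  have hmem : ∀ {u : FreeGroup α}, Commute u c → u ∈ H := by
    intro u hu
    rw [hH, Subgroup.mem_centralizer_iff]
    rintro v rfl
    exact hu.symm
  have hcH : c ∈ H := hmem (Commute.refl c)
  have hcen : ∀ h : H, h * (⟨c, hcH⟩ : H) = ⟨c, hcH⟩ * h := by
    rintro ⟨h, hh⟩
    have := Subgroup.mem_centralizer_iff.1 hh c rfl
    exact Subtype.ext this.symm
  have hc1 : (⟨c, hcH⟩ : H) ≠ 1 := fun h => hc (congrArg Subtype.val h)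
  obtain ⟨hcomm, htor⟩ := aux_free_central hc1 hcen
  constructor
  · intro u v hu hv
    have := hcomm ⟨u, hmem hu⟩ ⟨v, hmem hv⟩
    exact congrArg Subtype.val this
  · intro n hn h
    have h1 : (⟨c, hcH⟩ : H) ^ n = 1 := Subtype.ext (by simpa using h)
    exact hc1 (htor _ n hn h1)

/-- Let `G` be the fundamental group of a non-trivial circle bundle of Euler
number `e ≠ 0` over a closed orientable surface of genus `g`: it is generated by
`a₁, b₁, …, a_g, b_g, z` with `z` central, `z ≠ 1`, and
`[a₁,b₁]⋯[a_g,b_g] = z^e`.  Then every homomorphism from `G` to a free group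
kills `z`; hence if `g ≥ 1` and `G` is non-abelian, `G` is not residually free. -/
theorem nontrivial_circle_bundle_not_residually_free (G : Type*) [Group G]
    (g : ℕ) (a b : Fin g → G) (z : G) (e : ℤ) (he : e ≠ 0) (hz : z ≠ 1)
    (hcentral : z ∈ Subgroup.center G)
    (hgen : Subgroup.closure (Set.range a ∪ Set.range b ∪ {z}) = ⊤)
    (hrel : (List.ofFn fun i : Fin g => ⁅a i, b i⁆).prod = z ^ e) :
    (∀ (α : Type) (f : G →* FreeGroup α), f z = 1) ∧
      (1 ≤ g → (∃ x y : G, ¬ Commute x y) →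
        ¬ ∀ w : G, w ≠ 1 → ∃ (α : Type) (f : G →* FreeGroup α), f w ≠ 1) := by
  have part1 : ∀ (α : Type) (f : G →* FreeGroup α), f z = 1 := by
    intro α f
    by_contra hfz
    have hcomm : ∀ u : G, Commute (f u) (f z) := by
      intro u
      have h1 : u * z = z * u := (Subgroup.mem_center_iff.1 hcentral u)
      show f u * f z = f z * f u
      rw [← _root_.map_mul, ← _root_.map_mul, h1]
    obtain ⟨hct, htor⟩ := aux_freeGroup_ct hfz
    have hij : ∀ i, Commute (f (a i)) (f (b i)) := fun i =>
      hct _ _ (hcomm _) (hcomm _)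
    have h1 : f (z ^ e) = 1 := by
      rw [← hrel, map_list_prod, List.map_ofFn]
      apply List.prod_eq_one
      intro x hx
      rw [List.mem_ofFn] at hx
      obtain ⟨i, rfl⟩ := hx
      show f ⁅a i, b i⁆ = 1
      rw [map_commutatorElement]
      exact commutatorElement_eq_one_iff_commute.2 (hij i)
    rw [_root_.map_zpow] at h1
    exact htor e he h1
  refine ⟨part1, fun _ _ hres => ?_⟩
  obtain ⟨α, f, hf⟩ := hres z hz
  exact hf (part1 α f)
end
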